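/- arXiv:2002.12777 — 9 statements merged into one kernel-verified Lean document; each statement's English description precedes it below -/
import Mathlib

section
/- Let l₁, l₂, l₃, l₄ be four distinct lines in the Euclidean plane, pairwise non-parallel and such that no three of them pass through a common point; for i ≠ j let P_{ij} denote the intersection point of l_i and l_j (these hypotheses force the three pairwise intersection points of any three of the lines to be affinely independent). Then the circumcircles of the four triangles P_{23}P_{24}P_{34}, P_{13}P_{14}P_{34}, P_{12}P_{14}P_{24}, P_{12}P_{13}P_{23} (obtained by omitting each of the four lines in turn) have a common point, called the Miquel–Steiner point of the complete quadrilateral. -/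
open EuclideanGeometry

open Real

set_option maxHeartbeats 1000000

section MiquelAux

variable {V P : Type*} [NormedAddCommGroup V] [InnerProductSpace ℝ V] [MetricSpace P]
  [NormedAddTorsor V P]

/-- Three distinct collinear points cannot lie on one sphere. -/
lemma miquel_not_collinear_of_mem_sphere {s : EuclideanGeometry.Sphere P} {a b c : P}
    (ha : a ∈ s) (hb : b ∈ s) (hc : c ∈ s) (hab : a ≠ b) (hac : a ≠ c) (hbc : b ≠ c)
    (hcol : Collinear ℝ ({a, b, c} : Set P)) : False := by
  have hcos : Cospherical ({a, b, c} : Set P) := by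
    refine ⟨s.center, s.radius, ?_⟩
    rintro p (rfl | rfl | rfl)
    · exact EuclideanGeometry.mem_sphere.1 ha
    · exact EuclideanGeometry.mem_sphere.1 hb
    · exact EuclideanGeometry.mem_sphere.1 hc
  have h := hcos.affineIndependent_of_ne hab hac hbc
  rw [affineIndependent_iff_not_collinear_set] at h
  exact h hcol

lemma miquel_flip {a b c : Real.Angle} (h : a + b + -c = 0) : c = a + b := by
  have h' : c - (a + b) = -(a + b + -c) := by abel
  rw [h, neg_zero] at h'
  exact sub_eq_zero.1 h'

end MiquelAux

/-- **Miquel–Steiner point of a complete quadrilateral.**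
Given four distinct, pairwise non-parallel lines in the Euclidean plane, no three of
which pass through a common point, with `P i j` the intersection point of lines `i`
and `j`, the circumcircles of the four triangles obtained by omitting each line in
turn have a common point. -/
theorem miquel_steiner_complete_quadrilateral
    (l₁ l₂ l₃ l₄ : AffineSubspace ℝ (EuclideanSpace ℝ (Fin 2)))
    (hl₁ : ∃ p q : EuclideanSpace ℝ (Fin 2), p ≠ q ∧ l₁ = line[ℝ, p, q])
    (hl₂ : ∃ p q : EuclideanSpace ℝ (Fin 2), p ≠ q ∧ l₂ = line[ℝ, p, q])
    (hl₃ : ∃ p q : EuclideanSpace ℝ (Fin 2), p ≠ q ∧ l₃ = line[ℝ, p, q])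
    (hl₄ : ∃ p q : EuclideanSpace ℝ (Fin 2), p ≠ q ∧ l₄ = line[ℝ, p, q])
    (hd₁₂ : l₁ ≠ l₂) (hd₁₃ : l₁ ≠ l₃) (hd₁₄ : l₁ ≠ l₄)
    (hd₂₃ : l₂ ≠ l₃) (hd₂₄ : l₂ ≠ l₄) (hd₃₄ : l₃ ≠ l₄)
    (hp₁₂ : ¬ AffineSubspace.Parallel l₁ l₂) (hp₁₃ : ¬ AffineSubspace.Parallel l₁ l₃)
    (hp₁₄ : ¬ AffineSubspace.Parallel l₁ l₄) (hp₂₃ : ¬ AffineSubspace.Parallel l₂ l₃)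
    (hp₂₄ : ¬ AffineSubspace.Parallel l₂ l₄) (hp₃₄ : ¬ AffineSubspace.Parallel l₃ l₄)
    (hc₁₂₃ : ¬ ∃ x, x ∈ l₁ ∧ x ∈ l₂ ∧ x ∈ l₃)
    (hc₁₂₄ : ¬ ∃ x, x ∈ l₁ ∧ x ∈ l₂ ∧ x ∈ l₄)
    (hc₁₃₄ : ¬ ∃ x, x ∈ l₁ ∧ x ∈ l₃ ∧ x ∈ l₄)
    (hc₂₃₄ : ¬ ∃ x, x ∈ l₂ ∧ x ∈ l₃ ∧ x ∈ l₄)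
    (P₁₂ P₁₃ P₁₄ P₂₃ P₂₄ P₃₄ : EuclideanSpace ℝ (Fin 2))
    (hP₁₂ : P₁₂ ∈ l₁ ∧ P₁₂ ∈ l₂) (hP₁₃ : P₁₃ ∈ l₁ ∧ P₁₃ ∈ l₃)
    (hP₁₄ : P₁₄ ∈ l₁ ∧ P₁₄ ∈ l₄) (hP₂₃ : P₂₃ ∈ l₂ ∧ P₂₃ ∈ l₃)
    (hP₂₄ : P₂₄ ∈ l₂ ∧ P₂₄ ∈ l₄) (hP₃₄ : P₃₄ ∈ l₃ ∧ P₃₄ ∈ l₄) :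
    ∃ M : EuclideanSpace ℝ (Fin 2),
      Cospherical ({P₂₃, P₂₄, P₃₄, M} : Set (EuclideanSpace ℝ (Fin 2))) ∧
      Cospherical ({P₁₃, P₁₄, P₃₄, M} : Set (EuclideanSpace ℝ (Fin 2))) ∧
      Cospherical ({P₁₂, P₁₄, P₂₄, M} : Set (EuclideanSpace ℝ (Fin 2))) ∧
      Cospherical ({P₁₂, P₁₃, P₂₃, M} : Set (EuclideanSpace ℝ (Fin 2))) := by
  letI : Fact (Module.finrank ℝ (EuclideanSpace ℝ (Fin 2)) = 2) := ⟨finrank_euclideanSpace_fin⟩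
  letI : Module.Oriented ℝ (EuclideanSpace ℝ (Fin 2)) (Fin 2) :=
    ⟨(EuclideanSpace.basisFun (Fin 2) ℝ).toBasis.orientation⟩
  -- distinctness of the six points
  have n1213 : P₁₂ ≠ P₁₃ := fun h => hc₁₂₃ ⟨P₁₂, hP₁₂.1, hP₁₂.2, by rw [h]; exact hP₁₃.2⟩
  have n1214 : P₁₂ ≠ P₁₄ := fun h => hc₁₂₄ ⟨P₁₂, hP₁₂.1, hP₁₂.2, by rw [h]; exact hP₁₄.2⟩
  have n1314 : P₁₃ ≠ P₁₄ := fun h => hc₁₃₄ ⟨P₁₃, hP₁₃.1, hP₁₃.2, by rw [h]; exact hP₁₄.2⟩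
  have n1223 : P₁₂ ≠ P₂₃ := fun h => hc₁₂₃ ⟨P₁₂, hP₁₂.1, hP₁₂.2, by rw [h]; exact hP₂₃.2⟩
  have n1224 : P₁₂ ≠ P₂₄ := fun h => hc₁₂₄ ⟨P₁₂, hP₁₂.1, hP₁₂.2, by rw [h]; exact hP₂₄.2⟩
  have n2324 : P₂₃ ≠ P₂₄ := fun h => hc₂₃₄ ⟨P₂₃, hP₂₃.1, hP₂₃.2, by rw [h]; exact hP₂₄.2⟩
  have n1323 : P₁₃ ≠ P₂₃ := fun h => hc₁₂₃ ⟨P₁₃, hP₁₃.1, by rw [h]; exact hP₂₃.1, hP₁₃.2⟩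
  have n1334 : P₁₃ ≠ P₃₄ := fun h => hc₁₃₄ ⟨P₁₃, hP₁₃.1, hP₁₃.2, by rw [h]; exact hP₃₄.2⟩
  have n2334 : P₂₃ ≠ P₃₄ := fun h => hc₂₃₄ ⟨P₂₃, hP₂₃.1, hP₂₃.2, by rw [h]; exact hP₃₄.2⟩
  have n1424 : P₁₄ ≠ P₂₄ := fun h => hc₁₂₄ ⟨P₁₄, hP₁₄.1, by rw [h]; exact hP₂₄.1, hP₁₄.2⟩
  have n1434 : P₁₄ ≠ P₃₄ := fun h => hc₁₃₄ ⟨P₁₄, hP₁₄.1, by rw [h]; exact hP₃₄.1, hP₁₄.2⟩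
  have n2434 : P₂₄ ≠ P₃₄ := fun h => hc₂₃₄ ⟨P₂₄, hP₂₄.1, by rw [h]; exact hP₃₄.1, hP₂₄.2⟩
  -- collinearity of triples on each line
  have col1 : ∀ {a b c : EuclideanSpace ℝ (Fin 2)}, a ∈ l₁ → b ∈ l₁ → c ∈ l₁ →
      Collinear ℝ ({a, b, c} : Set (EuclideanSpace ℝ (Fin 2))) := by
    obtain ⟨p, q, -, he⟩ := hl₁
    intro a b c ha hb hc
    rw [he] at ha hb hc
    exact collinear_triple_of_mem_affineSpan_pair ha hb hc
  have col2 : ∀ {a b c : EuclideanSpace ℝ (Fin 2)}, a ∈ l₂ → b ∈ l₂ → c ∈ l₂ →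
      Collinear ℝ ({a, b, c} : Set (EuclideanSpace ℝ (Fin 2))) := by
    obtain ⟨p, q, -, he⟩ := hl₂
    intro a b c ha hb hc
    rw [he] at ha hb hc
    exact collinear_triple_of_mem_affineSpan_pair ha hb hc
  have col3 : ∀ {a b c : EuclideanSpace ℝ (Fin 2)}, a ∈ l₃ → b ∈ l₃ → c ∈ l₃ →
      Collinear ℝ ({a, b, c} : Set (EuclideanSpace ℝ (Fin 2))) := by
    obtain ⟨p, q, -, he⟩ := hl₃
    intro a b c ha hb hc
    rw [he] at ha hb hc
    exact collinear_triple_of_mem_affineSpan_pair ha hb hc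
  have col4 : ∀ {a b c : EuclideanSpace ℝ (Fin 2)}, a ∈ l₄ → b ∈ l₄ → c ∈ l₄ →
      Collinear ℝ ({a, b, c} : Set (EuclideanSpace ℝ (Fin 2))) := by
    obtain ⟨p, q, -, he⟩ := hl₄
    intro a b c ha hb hc
    rw [he] at ha hb hc
    exact collinear_triple_of_mem_affineSpan_pair ha hb hc
  -- noncollinearity of the four triangles
  have mem1 : ∀ {a b c : EuclideanSpace ℝ (Fin 2)}, a ∈ ({a, b, c} : Set _) :=
    fun {a b c} => Set.mem_insert _ _
  have mem2 : ∀ {a b c : EuclideanSpace ℝ (Fin 2)}, b ∈ ({a, b, c} : Set _) :=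
    fun {a b c} => Set.mem_insert_of_mem _ (Set.mem_insert _ _)
  have mem3 : ∀ {a b c : EuclideanSpace ℝ (Fin 2)}, c ∈ ({a, b, c} : Set _) :=
    fun {a b c} => Set.mem_insert_of_mem _ (Set.mem_insert_of_mem _ rfl)
  have hn₄ : ¬ Collinear ℝ ({P₁₂, P₁₃, P₂₃} : Set (EuclideanSpace ℝ (Fin 2))) := by
    intro h
    have h3 : P₂₃ ∈ line[ℝ, P₁₂, P₁₃] := h.mem_affineSpan_of_mem_of_ne mem1 mem2 mem3 n1213
    have hle : line[ℝ, P₁₂, P₁₃] ≤ l₁ :=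
      affineSpan_le.2 (Set.insert_subset_iff.2 ⟨hP₁₂.1, Set.singleton_subset_iff.2 hP₁₃.1⟩)
    exact hc₁₂₃ ⟨P₂₃, hle h3, hP₂₃.1, hP₂₃.2⟩
  have hn₃ : ¬ Collinear ℝ ({P₁₂, P₁₄, P₂₄} : Set (EuclideanSpace ℝ (Fin 2))) := by
    intro h
    have h3 : P₂₄ ∈ line[ℝ, P₁₂, P₁₄] := h.mem_affineSpan_of_mem_of_ne mem1 mem2 mem3 n1214
    have hle : line[ℝ, P₁₂, P₁₄] ≤ l₁ :=
      affineSpan_le.2 (Set.insert_subset_iff.2 ⟨hP₁₂.1, Set.singleton_subset_iff.2 hP₁₄.1⟩)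
    exact hc₁₂₄ ⟨P₂₄, hle h3, hP₂₄.1, hP₂₄.2⟩
  have hnA : ¬ Collinear ℝ ({P₂₃, P₃₄, P₂₄} : Set (EuclideanSpace ℝ (Fin 2))) := by
    intro h
    have h3 : P₂₄ ∈ line[ℝ, P₂₃, P₃₄] := h.mem_affineSpan_of_mem_of_ne mem1 mem2 mem3 n2334
    have hle : line[ℝ, P₂₃, P₃₄] ≤ l₃ :=
      affineSpan_le.2 (Set.insert_subset_iff.2 ⟨hP₂₃.2, Set.singleton_subset_iff.2 hP₃₄.1⟩)
    exact hc₂₃₄ ⟨P₂₄, hP₂₄.1, hle h3, hP₂₄.2⟩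
  have hnB : ¬ Collinear ℝ ({P₁₃, P₃₄, P₁₄} : Set (EuclideanSpace ℝ (Fin 2))) := by
    intro h
    have h3 : P₁₄ ∈ line[ℝ, P₁₃, P₃₄] := h.mem_affineSpan_of_mem_of_ne mem1 mem2 mem3 n1334
    have hle : line[ℝ, P₁₃, P₃₄] ≤ l₃ :=
      affineSpan_le.2 (Set.insert_subset_iff.2 ⟨hP₁₃.2, Set.singleton_subset_iff.2 hP₃₄.1⟩)
    exact hc₁₃₄ ⟨P₁₄, hP₁₄.1, hle h3, hP₁₄.2⟩
  -- the two circumscribed circles through P₁₂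
  have hai₄ : AffineIndependent ℝ ![P₁₂, P₁₃, P₂₃] := affineIndependent_iff_not_collinear_set.2 hn₄
  have hai₃ : AffineIndependent ℝ ![P₁₂, P₁₄, P₂₄] := affineIndependent_iff_not_collinear_set.2 hn₃
  set t₄ : Affine.Triangle ℝ (EuclideanSpace ℝ (Fin 2)) := ⟨![P₁₂, P₁₃, P₂₃], hai₄⟩ with ht₄
  set t₃ : Affine.Triangle ℝ (EuclideanSpace ℝ (Fin 2)) := ⟨![P₁₂, P₁₄, P₂₄], hai₃⟩ with ht₃
  set s₄ := t₄.circumsphere with hs₄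
  set s₃ := t₃.circumsphere with hs₃
  have m₄₁ : P₁₂ ∈ s₄ := t₄.mem_circumsphere 0
  have m₄₂ : P₁₃ ∈ s₄ := t₄.mem_circumsphere 1
  have m₄₃ : P₂₃ ∈ s₄ := t₄.mem_circumsphere 2
  have m₃₁ : P₁₂ ∈ s₃ := t₃.mem_circumsphere 0
  have m₃₂ : P₁₄ ∈ s₃ := t₃.mem_circumsphere 1
  have m₃₃ : P₂₄ ∈ s₃ := t₃.mem_circumsphere 2
  -- the centers are distinct
  have ho₄ne : s₄.center ≠ P₁₂ := by
    intro h
    have h1 := EuclideanGeometry.mem_sphere.1 m₄₁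
    have h2 := EuclideanGeometry.mem_sphere.1 m₄₂
    rw [h] at h1 h2
    have : dist P₁₃ P₁₂ = 0 := by rw [h2, ← h1, dist_self]
    exact n1213 (dist_eq_zero.1 this).symm
  have ho₃ne : s₃.center ≠ P₁₂ := by
    intro h
    have h1 := EuclideanGeometry.mem_sphere.1 m₃₁
    have h2 := EuclideanGeometry.mem_sphere.1 m₃₂
    rw [h] at h1 h2
    have : dist P₁₄ P₁₂ = 0 := by rw [h2, ← h1, dist_self]
    exact n1214 (dist_eq_zero.1 this).symm
  have hoo : s₃.center ≠ s₄.center := by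
    intro h
    have hr : s₃.radius = s₄.radius := by
      rw [← EuclideanGeometry.mem_sphere.1 m₃₁, ← EuclideanGeometry.mem_sphere.1 m₄₁, h]
    have hP₁₄s₄ : P₁₄ ∈ s₄ := by
      rw [EuclideanGeometry.mem_sphere, ← h, ← hr]
      exact EuclideanGeometry.mem_sphere.1 m₃₂
    exact miquel_not_collinear_of_mem_sphere m₄₁ m₄₂ hP₁₄s₄ n1213 n1214 n1314
      (col1 hP₁₂.1 hP₁₃.1 hP₁₄.1)
  -- the Miquel point
  haveI : Nonempty ↥(line[ℝ, s₃.center, s₄.center]) :=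
    ⟨⟨s₃.center, left_mem_affineSpan_pair ℝ _ _⟩⟩
  set M := EuclideanGeometry.reflection (line[ℝ, s₃.center, s₄.center]) P₁₂ with hMdef
  have hM₃ : M ∈ s₃ := by
    rw [EuclideanGeometry.mem_sphere, dist_comm, hMdef,
      EuclideanGeometry.dist_reflection_eq_of_mem _ (left_mem_affineSpan_pair ℝ _ _) P₁₂,
      dist_comm]
    exact EuclideanGeometry.mem_sphere.1 m₃₁
  have hM₄ : M ∈ s₄ := by
    rw [EuclideanGeometry.mem_sphere, dist_comm, hMdef,
      EuclideanGeometry.dist_reflection_eq_of_mem _ (right_mem_affineSpan_pair ℝ _ _) P₁₂,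
      dist_comm]
    exact EuclideanGeometry.mem_sphere.1 m₄₁
  -- M is distinct from the five points other than P₁₂
  have hMP₁₃ : M ≠ P₁₃ := by
    intro h
    exact miquel_not_collinear_of_mem_sphere m₃₁ m₃₂ (h ▸ hM₃) n1214 n1213 n1314.symm
      (col1 hP₁₂.1 hP₁₄.1 hP₁₃.1)
  have hMP₁₄ : M ≠ P₁₄ := by
    intro h
    exact miquel_not_collinear_of_mem_sphere m₄₁ m₄₂ (h ▸ hM₄) n1213 n1214 n1314
      (col1 hP₁₂.1 hP₁₃.1 hP₁₄.1)
  have hMP₂₃ : M ≠ P₂₃ := by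
    intro h
    exact miquel_not_collinear_of_mem_sphere m₃₁ m₃₃ (h ▸ hM₃) n1224 n1223 n2324.symm
      (col2 hP₁₂.2 hP₂₄.1 hP₂₃.1)
  have hMP₂₄ : M ≠ P₂₄ := by
    intro h
    exact miquel_not_collinear_of_mem_sphere m₄₁ m₄₃ (h ▸ hM₄) n1223 n1224 n2324
      (col2 hP₁₂.2 hP₂₃.1 hP₂₄.1)
  have hMP₃₄ : M ≠ P₃₄ := by
    intro h
    exact miquel_not_collinear_of_mem_sphere m₃₂ m₃₃ (h ▸ hM₃) n1424 n1434 n2434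
      (col4 hP₁₄.2 hP₂₄.2 hP₃₄.2)
  -- 2 • π = 0
  have hπ : ((2 : ℤ) • (π : Real.Angle)) = 0 := Real.Angle.two_zsmul_eq_zero_iff.2 (Or.inr rfl)
  -- M ≠ P₁₂ : the two circles are not tangent
  have hMP₁₂ : M ≠ P₁₂ := by
    intro h
    have hfix : P₁₂ ∈ line[ℝ, s₃.center, s₄.center] :=
      (EuclideanGeometry.reflection_eq_self_iff P₁₂).1 h
    have hcolo : Collinear ℝ ({s₄.center, P₁₂, s₃.center} : Set (EuclideanSpace ℝ (Fin 2))) :=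
      collinear_triple_of_mem_affineSpan_pair (right_mem_affineSpan_pair ℝ _ _) hfix
        (left_mem_affineSpan_pair ℝ _ _)
    have hz : (2 : ℤ) • ∡ s₄.center P₁₂ s₃.center = 0 :=
      Real.Angle.two_zsmul_eq_zero_iff.2 (oangle_eq_zero_or_eq_pi_iff_collinear.2 hcolo)
    have hiso₄ : (2 : ℤ) • ∡ P₂₃ P₁₂ s₄.center + (2 : ℤ) • ∡ P₁₂ P₁₃ P₂₃ = (π : Real.Angle) :=
      Sphere.two_zsmul_oangle_center_add_two_zsmul_oangle_eq_pi m₄₁ m₄₂ m₄₃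
        n1213.symm n1323 n1223
    have hiso₃ : (2 : ℤ) • ∡ P₂₄ P₁₂ s₃.center + (2 : ℤ) • ∡ P₁₂ P₁₄ P₂₄ = (π : Real.Angle) :=
      Sphere.two_zsmul_oangle_center_add_two_zsmul_oangle_eq_pi m₃₁ m₃₂ m₃₃
        n1214.symm n1424 n1224
    have hadd1 : ∡ s₄.center P₁₂ P₂₃ + ∡ P₂₃ P₁₂ P₂₄ = ∡ s₄.center P₁₂ P₂₄ :=
      oangle_add ho₄ne n1223.symm n1224.symm
    have hadd2 : ∡ s₄.center P₁₂ P₂₄ + ∡ P₂₄ P₁₂ s₃.center = ∡ s₄.center P₁₂ s₃.center :=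
      oangle_add ho₄ne n1224.symm ho₃ne
    have hrev : ∡ s₄.center P₁₂ P₂₃ = - ∡ P₂₃ P₁₂ s₄.center := oangle_rev P₂₃ P₁₂ s₄.center
    have hmid : (2 : ℤ) • ∡ P₂₃ P₁₂ P₂₄ = 0 :=
      Real.Angle.two_zsmul_eq_zero_iff.2
        (oangle_eq_zero_or_eq_pi_iff_collinear.2 (col2 hP₂₃.1 hP₁₂.2 hP₂₄.1))
    have e : (2 : ℤ) • ∡ s₄.center P₁₂ s₃.center =
        -((2 : ℤ) • ∡ P₂₃ P₁₂ s₄.center) + (2 : ℤ) • ∡ P₂₃ P₁₂ P₂₄ +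
          (2 : ℤ) • ∡ P₂₄ P₁₂ s₃.center := by
      rw [← hadd2, ← hadd1, hrev, smul_add, smul_add, smul_neg]
    rw [hz, hmid, add_zero] at e
    have eAB : (2 : ℤ) • ∡ P₂₃ P₁₂ s₄.center = (2 : ℤ) • ∡ P₂₄ P₁₂ s₃.center := by
      have e' : -((2 : ℤ) • ∡ P₂₃ P₁₂ s₄.center) + (2 : ℤ) • ∡ P₂₄ P₁₂ s₃.center = 0 := e.symm
      rwa [neg_add_eq_zero] at e'
    have hXY : (2 : ℤ) • ∡ P₁₂ P₁₃ P₂₃ = (2 : ℤ) • ∡ P₁₂ P₁₄ P₂₄ := by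
      rw [eAB] at hiso₄
      exact add_left_cancel (hiso₄.trans hiso₃.symm)
    -- transfer both sides along the lines
    have hXX : (2 : ℤ) • ∡ P₁₂ P₁₃ P₂₃ = (2 : ℤ) • ∡ P₁₄ P₁₃ P₃₄ := by
      rw [(col3 hP₂₃.2 hP₁₃.2 hP₃₄.1).two_zsmul_oangle_eq_right n1323.symm n1334.symm,
        (col1 hP₁₂.1 hP₁₃.1 hP₁₄.1).two_zsmul_oangle_eq_left n1213 n1314.symm]
    have hYY : (2 : ℤ) • ∡ P₁₂ P₁₄ P₂₄ = (2 : ℤ) • ∡ P₁₃ P₁₄ P₃₄ := by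
      rw [(col4 hP₂₄.2 hP₁₄.2 hP₃₄.2).two_zsmul_oangle_eq_right n1424.symm n1434.symm,
        (col1 hP₁₂.1 hP₁₄.1 hP₁₃.1).two_zsmul_oangle_eq_left n1214 n1314]
    have E : (2 : ℤ) • ∡ P₁₄ P₁₃ P₃₄ = (2 : ℤ) • ∡ P₁₃ P₁₄ P₃₄ :=
      hXX.symm.trans (hXY.trans hYY)
    have S : ∡ P₁₄ P₁₃ P₃₄ + ∡ P₁₃ P₃₄ P₁₄ + ∡ P₃₄ P₁₄ P₁₃ = (π : Real.Angle) :=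
      EuclideanGeometry.oangle_add_oangle_add_oangle_eq_pi n1314 n1334.symm n1434
    have h2S : (2 : ℤ) • ∡ P₁₄ P₁₃ P₃₄ + (2 : ℤ) • ∡ P₁₃ P₃₄ P₁₄ +
        -((2 : ℤ) • ∡ P₁₄ P₁₃ P₃₄) = 0 := by
      have := congrArg (fun θ : Real.Angle => (2 : ℤ) • θ) S
      simp only [smul_add] at this
      rw [hπ] at this
      have hc' : (2 : ℤ) • ∡ P₃₄ P₁₄ P₁₃ = -((2 : ℤ) • ∡ P₁₄ P₁₃ P₃₄) := by
        rw [oangle_rev P₁₃ P₁₄ P₃₄, smul_neg, ← E]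
      rwa [hc'] at this
    have hm : (2 : ℤ) • ∡ P₁₃ P₃₄ P₁₄ = 0 :=
      left_eq_add.1 (miquel_flip h2S)
    exact hnB (oangle_eq_zero_or_eq_pi_iff_collinear.1 (Real.Angle.two_zsmul_eq_zero_iff.1 hm))
    -- goals 3 and 4 are immediate
  have hcos₄ : Cospherical ({P₁₂, P₁₃, P₂₃, M} : Set (EuclideanSpace ℝ (Fin 2))) := by
    refine ⟨s₄.center, s₄.radius, ?_⟩
    rintro p (rfl | rfl | rfl | rfl)
    exacts [EuclideanGeometry.mem_sphere.1 m₄₁, EuclideanGeometry.mem_sphere.1 m₄₂,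
      EuclideanGeometry.mem_sphere.1 m₄₃, EuclideanGeometry.mem_sphere.1 hM₄]
  have hcos₃ : Cospherical ({P₁₂, P₁₄, P₂₄, M} : Set (EuclideanSpace ℝ (Fin 2))) := by
    refine ⟨s₃.center, s₃.radius, ?_⟩
    rintro p (rfl | rfl | rfl | rfl)
    exacts [EuclideanGeometry.mem_sphere.1 m₃₁, EuclideanGeometry.mem_sphere.1 m₃₂,
      EuclideanGeometry.mem_sphere.1 m₃₃, EuclideanGeometry.mem_sphere.1 hM₃]
  -- inscribed-angle transfers on the two known circles
  have c1 : (2 : ℤ) • ∡ P₁₃ M P₁₂ = (2 : ℤ) • ∡ P₁₃ P₂₃ P₁₂ :=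
    Sphere.two_zsmul_oangle_eq m₄₂ hM₄ m₄₃ m₄₁ hMP₁₃ hMP₁₂ n1323.symm n1223.symm
  have c2 : (2 : ℤ) • ∡ P₁₂ M P₁₄ = (2 : ℤ) • ∡ P₁₂ P₂₄ P₁₄ :=
    Sphere.two_zsmul_oangle_eq m₃₁ hM₃ m₃₃ m₃₂ hMP₁₂ hMP₁₄ n1224.symm n1424.symm
  have c1' : (2 : ℤ) • ∡ P₂₃ M P₁₂ = (2 : ℤ) • ∡ P₂₃ P₁₃ P₁₂ :=
    Sphere.two_zsmul_oangle_eq m₄₃ hM₄ m₄₂ m₄₁ hMP₂₃ hMP₁₂ n1323 n1213.symm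
  have c2' : (2 : ℤ) • ∡ P₁₂ M P₂₄ = (2 : ℤ) • ∡ P₁₂ P₁₄ P₂₄ :=
    Sphere.two_zsmul_oangle_eq m₃₁ hM₃ m₃₂ m₃₃ hMP₁₂ hMP₂₄ n1214.symm n1424
  have hadd : ∡ P₁₃ M P₁₂ + ∡ P₁₂ M P₁₄ = ∡ P₁₃ M P₁₄ :=
    oangle_add (Ne.symm hMP₁₃) (Ne.symm hMP₁₂) (Ne.symm hMP₁₄)
  have hadd' : ∡ P₂₃ M P₁₂ + ∡ P₁₂ M P₂₄ = ∡ P₂₃ M P₂₄ :=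
    oangle_add (Ne.symm hMP₂₃) (Ne.symm hMP₁₂) (Ne.symm hMP₂₄)
  -- directed angle sums in the two remaining triangles
  have S2 : ∡ P₃₄ P₂₃ P₂₄ + ∡ P₂₃ P₂₄ P₃₄ + ∡ P₂₄ P₃₄ P₂₃ = (π : Real.Angle) :=
    EuclideanGeometry.oangle_add_oangle_add_oangle_eq_pi n2334 n2324.symm n2434.symm
  have htri2 : (2 : ℤ) • ∡ P₂₃ P₃₄ P₂₄ =
      (2 : ℤ) • ∡ P₃₄ P₂₃ P₂₄ + (2 : ℤ) • ∡ P₂₃ P₂₄ P₃₄ := by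
    apply miquel_flip
    have h2 := congrArg (fun θ : Real.Angle => (2 : ℤ) • θ) S2
    simp only [smul_add] at h2
    rw [hπ] at h2
    have hc' : (2 : ℤ) • ∡ P₂₄ P₃₄ P₂₃ = -((2 : ℤ) • ∡ P₂₃ P₃₄ P₂₄) := by
      rw [oangle_rev P₂₃ P₃₄ P₂₄, smul_neg]
    rwa [hc'] at h2
  have S1 : ∡ P₃₄ P₁₃ P₁₄ + ∡ P₁₃ P₁₄ P₃₄ + ∡ P₁₄ P₃₄ P₁₃ = (π : Real.Angle) :=
    EuclideanGeometry.oangle_add_oangle_add_oangle_eq_pi n1334 n1314.symm n1434.symm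
  have htri1 : (2 : ℤ) • ∡ P₁₃ P₃₄ P₁₄ =
      (2 : ℤ) • ∡ P₃₄ P₁₃ P₁₄ + (2 : ℤ) • ∡ P₁₃ P₁₄ P₃₄ := by
    apply miquel_flip
    have h2 := congrArg (fun θ : Real.Angle => (2 : ℤ) • θ) S1
    simp only [smul_add] at h2
    rw [hπ] at h2
    have hc' : (2 : ℤ) • ∡ P₁₄ P₃₄ P₁₃ = -((2 : ℤ) • ∡ P₁₃ P₃₄ P₁₄) := by
      rw [oangle_rev P₁₃ P₃₄ P₁₄, smul_neg]
    rwa [hc'] at h2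
  -- the key angle identity for the circle through P₁₃, P₃₄, P₁₄
  have key2 : (2 : ℤ) • ∡ P₁₃ P₃₄ P₁₄ = (2 : ℤ) • ∡ P₁₃ M P₁₄ := by
    calc (2 : ℤ) • ∡ P₁₃ P₃₄ P₁₄
        = (2 : ℤ) • ∡ P₁₃ P₃₄ P₂₄ :=
          ((col4 hP₂₄.2 hP₃₄.2 hP₁₄.2).two_zsmul_oangle_eq_right n2434 n1434).symm
      _ = (2 : ℤ) • ∡ P₂₃ P₃₄ P₂₄ :=
          ((col3 hP₂₃.2 hP₃₄.1 hP₁₃.2).two_zsmul_oangle_eq_left n2334 n1334).symm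
      _ = (2 : ℤ) • ∡ P₃₄ P₂₃ P₂₄ + (2 : ℤ) • ∡ P₂₃ P₂₄ P₃₄ := htri2
      _ = (2 : ℤ) • ∡ P₁₃ P₂₃ P₁₂ + (2 : ℤ) • ∡ P₁₂ P₂₄ P₁₄ := by
          rw [(col3 hP₁₃.2 hP₂₃.2 hP₃₄.1).two_zsmul_oangle_eq_left n1323 n2334.symm,
            (col2 hP₁₂.2 hP₂₃.1 hP₂₄.1).two_zsmul_oangle_eq_right n1223 n2324.symm,
            (col2 hP₁₂.2 hP₂₄.1 hP₂₃.1).two_zsmul_oangle_eq_left n1224 n2324,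
            (col4 hP₁₄.2 hP₂₄.2 hP₃₄.2).two_zsmul_oangle_eq_right n1424 n2434.symm]
      _ = (2 : ℤ) • ∡ P₁₃ M P₁₂ + (2 : ℤ) • ∡ P₁₂ M P₁₄ := by rw [c1, c2]
      _ = (2 : ℤ) • ∡ P₁₃ M P₁₄ := by rw [← smul_add, hadd]
  -- the key angle identity for the circle through P₂₃, P₃₄, P₂₄
  have key1 : (2 : ℤ) • ∡ P₂₃ P₃₄ P₂₄ = (2 : ℤ) • ∡ P₂₃ M P₂₄ := by
    calc (2 : ℤ) • ∡ P₂₃ P₃₄ P₂₄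
        = (2 : ℤ) • ∡ P₁₃ P₃₄ P₂₄ :=
          (col3 hP₂₃.2 hP₃₄.1 hP₁₃.2).two_zsmul_oangle_eq_left n2334 n1334
      _ = (2 : ℤ) • ∡ P₁₃ P₃₄ P₁₄ :=
          (col4 hP₂₄.2 hP₃₄.2 hP₁₄.2).two_zsmul_oangle_eq_right n2434 n1434
      _ = (2 : ℤ) • ∡ P₃₄ P₁₃ P₁₄ + (2 : ℤ) • ∡ P₁₃ P₁₄ P₃₄ := htri1
      _ = (2 : ℤ) • ∡ P₂₃ P₁₃ P₁₂ + (2 : ℤ) • ∡ P₁₂ P₁₄ P₂₄ := by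
          rw [(col3 hP₂₃.2 hP₁₃.2 hP₃₄.1).two_zsmul_oangle_eq_left n1323.symm n1334.symm,
            (col1 hP₁₂.1 hP₁₃.1 hP₁₄.1).two_zsmul_oangle_eq_right n1213 n1314.symm,
            (col1 hP₁₂.1 hP₁₄.1 hP₁₃.1).two_zsmul_oangle_eq_left n1214 n1314,
            (col4 hP₂₄.2 hP₁₄.2 hP₃₄.2).two_zsmul_oangle_eq_right n1424.symm n1434.symm]
      _ = (2 : ℤ) • ∡ P₂₃ M P₁₂ + (2 : ℤ) • ∡ P₁₂ M P₂₄ := by rw [c1', c2']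
      _ = (2 : ℤ) • ∡ P₂₃ M P₂₄ := by rw [← smul_add, hadd']
  have hcos₂' : Cospherical ({P₁₃, P₃₄, M, P₁₄} : Set (EuclideanSpace ℝ (Fin 2))) :=
    cospherical_of_two_zsmul_oangle_eq_of_not_collinear key2 hnB
  have hcos₁' : Cospherical ({P₂₃, P₃₄, M, P₂₄} : Set (EuclideanSpace ℝ (Fin 2))) :=
    cospherical_of_two_zsmul_oangle_eq_of_not_collinear key1 hnA
  have hset₂ : ({P₁₃, P₁₄, P₃₄, M} : Set (EuclideanSpace ℝ (Fin 2))) = {P₁₃, P₃₄, M, P₁₄} := by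
    ext x
    simp only [Set.mem_insert_iff, Set.mem_singleton_iff]
    tauto
  have hset₁ : ({P₂₃, P₂₄, P₃₄, M} : Set (EuclideanSpace ℝ (Fin 2))) = {P₂₃, P₃₄, M, P₂₄} := by
    ext x
    simp only [Set.mem_insert_iff, Set.mem_singleton_iff]
    tauto
  exact ⟨M, hset₁ ▸ hcos₁', hset₂ ▸ hcos₂', hcos₃, hcos₄⟩
end

section
/- Given a triangle ABC and a cevian pair (B_A, C_A) from A with cevian intersection point N_A and Miquel–Steiner point M_A, the point M_A lies on line BC if and only if the four points A, B_A, C_A, N_A are concyclic. -/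
open EuclideanGeometry

private abbrev MiquelPt : Type := EuclideanSpace ℝ (Fin 2)

private lemma miquel_aux_group {G : Type*} [AddCommGroup G] {a b c : G}
    (h : a + -b + c = 0) : b = a + c :=
  eq_of_sub_eq_zero (by rw [show b - (a + c) = -(a + -b + c) by abel, h, neg_zero])

/-- `(B_A, C_A)` is a cevian pair from `A` in triangle `ABC`: `B_A` lies on line `AC`
with `B_A ∉ {A, C}`, `C_A` lies on line `AB` with `C_A ∉ {A, B}`, and the lines
`B B_A` and `C C_A` are not parallel. -/
def IsCevianPair (A B C B_A C_A : EuclideanSpace ℝ (Fin 2)) : Prop :=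
  B_A ∈ line[ℝ, A, C] ∧ B_A ≠ A ∧ B_A ≠ C ∧
  C_A ∈ line[ℝ, A, B] ∧ C_A ≠ A ∧ C_A ≠ B ∧
  ¬ AffineSubspace.Parallel (line[ℝ, B, B_A]) (line[ℝ, C, C_A])

/-- `M` is a Miquel–Steiner point of the cevian pair `(B_A, C_A)` from `A` with cevian
intersection point `N_A`: it lies on the circumcircles of the four triangles
`A B B_A`, `A C C_A`, `C B_A N_A`, `B C_A N_A`. -/
def IsMiquelPoint (A B C B_A C_A N_A M : EuclideanSpace ℝ (Fin 2)) : Prop :=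
  Cospherical ({A, B, B_A, M} : Set (EuclideanSpace ℝ (Fin 2))) ∧
  Cospherical ({A, C, C_A, M} : Set (EuclideanSpace ℝ (Fin 2))) ∧
  Cospherical ({C, B_A, N_A, M} : Set (EuclideanSpace ℝ (Fin 2))) ∧
  Cospherical ({B, C_A, N_A, M} : Set (EuclideanSpace ℝ (Fin 2)))

set_option maxHeartbeats 1000000

/-- The Miquel–Steiner point `M_A` lies on line `BC` if and only if the four points
`A`, `B_A`, `C_A`, `N_A` are concyclic. -/
theorem miquel_point_mem_line_BC_iff_concyclic
    (A B C B_A C_A N_A M_A : EuclideanSpace ℝ (Fin 2))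
    (hABC : AffineIndependent ℝ ![A, B, C])
    (hcev : IsCevianPair A B C B_A C_A)
    (hN₁ : N_A ∈ line[ℝ, B, B_A]) (hN₂ : N_A ∈ line[ℝ, C, C_A])
    (hCBN : AffineIndependent ℝ ![C, B_A, N_A])
    (hBCN : AffineIndependent ℝ ![B, C_A, N_A])
    (hM : IsMiquelPoint A B C B_A C_A N_A M_A) :
    M_A ∈ line[ℝ, B, C] ↔
      Cospherical ({A, B_A, C_A, N_A} : Set (EuclideanSpace ℝ (Fin 2))) := by
  classical
  haveI : Fact (Module.finrank ℝ (EuclideanSpace ℝ (Fin 2)) = 2) := ⟨finrank_euclideanSpace_fin⟩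
  haveI : Module.Oriented ℝ (EuclideanSpace ℝ (Fin 2)) (Fin 2) :=
    ⟨(EuclideanSpace.basisFun (Fin 2) ℝ).toBasis.orientation⟩
  obtain ⟨hBA_AC, hBAA, hBAC, hCA_AB, hCAA, hCAB, -⟩ := hcev
  obtain ⟨S1, S2, S3, S4⟩ := hM
  -- distinctness from affine independence
  have hAB : A ≠ B := by simpa using hABC.injective.ne (show (0 : Fin 3) ≠ 1 by decide)
  have hAC : A ≠ C := by simpa using hABC.injective.ne (show (0 : Fin 3) ≠ 2 by decide)
  have hBC : B ≠ C := by simpa using hABC.injective.ne (show (1 : Fin 3) ≠ 2 by decide)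
  have hnABC : ¬ Collinear ℝ ({A, B, C} : Set MiquelPt) :=
    affineIndependent_iff_not_collinear_set.mp hABC
  have hCN : C ≠ N_A := by simpa using hCBN.injective.ne (show (0 : Fin 3) ≠ 2 by decide)
  have hBAN : B_A ≠ N_A := by simpa using hCBN.injective.ne (show (1 : Fin 3) ≠ 2 by decide)
  have hBN : B ≠ N_A := by simpa using hBCN.injective.ne (show (0 : Fin 3) ≠ 2 by decide)
  have hCAN : C_A ≠ N_A := by simpa using hBCN.injective.ne (show (1 : Fin 3) ≠ 2 by decide)
  -- collinearity facts
  have cBAC : Collinear ℝ ({B_A, A, C} : Set MiquelPt) := collinear_insert_of_mem_affineSpan_pair hBA_AC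
  have cCAB : Collinear ℝ ({C_A, A, B} : Set MiquelPt) := collinear_insert_of_mem_affineSpan_pair hCA_AB
  have cNBB : Collinear ℝ ({N_A, B, B_A} : Set MiquelPt) := collinear_insert_of_mem_affineSpan_pair hN₁
  have cNCC : Collinear ℝ ({N_A, C, C_A} : Set MiquelPt) := collinear_insert_of_mem_affineSpan_pair hN₂
  -- permuted versions
  have cABAC : Collinear ℝ ({A, B_A, C} : Set MiquelPt) :=
    cBAC.subset (by intro p hp; simp only [Set.mem_insert_iff, Set.mem_singleton_iff] at hp ⊢; tauto)
  have cACAB : Collinear ℝ ({A, C_A, B} : Set MiquelPt) :=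
    cCAB.subset (by intro p hp; simp only [Set.mem_insert_iff, Set.mem_singleton_iff] at hp ⊢; tauto)
  have cBANB : Collinear ℝ ({B_A, N_A, B} : Set MiquelPt) :=
    cNBB.subset (by intro p hp; simp only [Set.mem_insert_iff, Set.mem_singleton_iff] at hp ⊢; tauto)
  have cBBAN : Collinear ℝ ({B, B_A, N_A} : Set MiquelPt) :=
    cNBB.subset (by intro p hp; simp only [Set.mem_insert_iff, Set.mem_singleton_iff] at hp ⊢; tauto)
  have cBABN : Collinear ℝ ({B_A, B, N_A} : Set MiquelPt) :=
    cNBB.subset (by intro p hp; simp only [Set.mem_insert_iff, Set.mem_singleton_iff] at hp ⊢; tauto)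
  have cCANC : Collinear ℝ ({C_A, N_A, C} : Set MiquelPt) :=
    cNCC.subset (by intro p hp; simp only [Set.mem_insert_iff, Set.mem_singleton_iff] at hp ⊢; tauto)
  have cBCAA : Collinear ℝ ({B, C_A, A} : Set MiquelPt) :=
    cCAB.subset (by intro p hp; simp only [Set.mem_insert_iff, Set.mem_singleton_iff] at hp ⊢; tauto)
  have cCABA : Collinear ℝ ({C_A, B, A} : Set MiquelPt) :=
    cCAB.subset (by intro p hp; simp only [Set.mem_insert_iff, Set.mem_singleton_iff] at hp ⊢; tauto)
  -- B_A ≠ B and C_A ≠ C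
  have hBAB : B_A ≠ B := by
    intro h
    apply hnABC
    have hB : B ∈ line[ℝ, A, C] := h ▸ hBA_AC
    have : Collinear ℝ ({B, A, C} : Set MiquelPt) := collinear_insert_of_mem_affineSpan_pair hB
    exact this.subset
      (by intro p hp; simp only [Set.mem_insert_iff, Set.mem_singleton_iff] at hp ⊢; tauto)
  have hCAC : C_A ≠ C := by
    intro h
    apply hnABC
    have hC : C ∈ line[ℝ, A, B] := h ▸ hCA_AB
    have : Collinear ℝ ({C, A, B} : Set MiquelPt) := collinear_insert_of_mem_affineSpan_pair hC
    exact this.subset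
      (by intro p hp; simp only [Set.mem_insert_iff, Set.mem_singleton_iff] at hp ⊢; tauto)
  -- a helper to derive contradictions from cospherical + collinear triples
  have noncol3 : ∀ {s : Set MiquelPt}, Cospherical s → ∀ {p q r : MiquelPt}, p ∈ s → q ∈ s → r ∈ s →
      p ≠ q → p ≠ r → q ≠ r → Collinear ℝ ({p, q, r} : Set MiquelPt) → False := by
    intro s hs p q r h1 h2 h3 n1 n2 n3 hcol
    exact (affineIndependent_iff_not_collinear_set.mp
      (hs.affineIndependent_of_mem_of_ne h1 h2 h3 n1 n2 n3)) hcol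
  -- M_A distinct from B, C, B_A, C_A
  have hMC : M_A ≠ C := by
    intro h; rw [h] at S1
    exact noncol3 S1 (by simp) (by simp) (by simp) hBAA.symm hAC hBAC cABAC
  have hMB : M_A ≠ B := by
    intro h; rw [h] at S2
    exact noncol3 S2 (by simp) (by simp) (by simp) hCAA.symm hAB hCAB cACAB
  have hMBA : M_A ≠ B_A := by
    intro h; rw [h] at S2
    exact noncol3 S2 (by simp) (by simp) (by simp) hBAA.symm hAC hBAC cABAC
  have hMCA : M_A ≠ C_A := by
    intro h; rw [h] at S1
    exact noncol3 S1 (by simp) (by simp) (by simp) hCAA.symm hAB hCAB cACAB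
  -- A, B_A, N_A are not collinear
  have hnABN : ¬ Collinear ℝ ({A, B_A, N_A} : Set MiquelPt) := by
    intro h
    have hNmem : N_A ∈ line[ℝ, A, B_A] :=
      h.mem_affineSpan_of_mem_of_ne (by simp) (by simp) (by simp) hBAA.symm
    have hle : line[ℝ, A, B_A] ≤ line[ℝ, A, C] := by
      apply affineSpan_le.mpr
      rw [Set.insert_subset_iff, Set.singleton_subset_iff]
      exact ⟨left_mem_affineSpan_pair ℝ A C, hBA_AC⟩
    have hNAC : N_A ∈ line[ℝ, A, C] := hle hNmem
    have hcol4 : Collinear ℝ ({B_A, N_A, A, C} : Set MiquelPt) :=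
      collinear_insert_insert_of_mem_affineSpan_pair hBA_AC hNAC
    have : Collinear ℝ ({C, B_A, N_A} : Set MiquelPt) := hcol4.subset
      (by intro p hp; simp only [Set.mem_insert_iff, Set.mem_singleton_iff] at hp ⊢; tauto)
    exact (affineIndependent_iff_not_collinear_set.mp hCBN) this
  -- cospherical angle equalities
  have K1 : (2 : ℤ) • ∡ B A B_A = (2 : ℤ) • ∡ B M_A B_A := by
    refine Cospherical.two_zsmul_oangle_eq (S1.subset ?_) hAB hBAA.symm hMB hMBA
    intro p hp; simp only [Set.mem_insert_iff, Set.mem_singleton_iff] at hp ⊢; tauto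
  have K3 : (2 : ℤ) • ∡ B_A N_A C = (2 : ℤ) • ∡ B_A M_A C := by
    refine Cospherical.two_zsmul_oangle_eq (S3.subset ?_) hBAN.symm hCN.symm hMBA hMC
    intro p hp; simp only [Set.mem_insert_iff, Set.mem_singleton_iff] at hp ⊢; tauto
  -- replacements along lines
  have rep1 : (2 : ℤ) • ∡ B A B_A = (2 : ℤ) • ∡ B A C :=
    cBAC.two_zsmul_oangle_eq_right hBAA (Ne.symm hAC)
  have rep2 : (2 : ℤ) • ∡ B_A N_A C = (2 : ℤ) • ∡ B N_A C :=
    cBANB.two_zsmul_oangle_eq_left hBAN hBN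
  -- step 1 : 2∡ B M_A C = 2∡ B A C + 2∡ B N_A C
  have hadd : ∡ B M_A B_A + ∡ B_A M_A C = ∡ B M_A C :=
    EuclideanGeometry.oangle_add hMB.symm hMBA.symm hMC.symm
  have step1 : (2 : ℤ) • ∡ B M_A C = (2 : ℤ) • ∡ B A C + (2 : ℤ) • ∡ B N_A C := by
    rw [← hadd, smul_add, ← K1, ← K3, rep1, rep2]
  -- triangle sum in triangle B A B_A : 2∡ B A C + 2∡ A B_A N_A + 2∡ N_A B A = 0
  have T2 : ∡ B A B_A + ∡ A B_A B + ∡ B_A B A = Real.pi :=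
    EuclideanGeometry.oangle_add_oangle_add_oangle_eq_pi hAB hBAA hBAB.symm
  have h3 : (2 : ℤ) • ∡ B A C + (2 : ℤ) • ∡ A B_A N_A + (2 : ℤ) • ∡ N_A B A = 0 := by
    have t2' : (2 : ℤ) • (∡ B A B_A + ∡ A B_A B + ∡ B_A B A) = 0 := by
      rw [T2]; exact Real.Angle.two_zsmul_coe_pi
    rw [smul_add, smul_add] at t2'
    rw [← rep1,
      ← cBBAN.two_zsmul_oangle_eq_right hBAB.symm hBAN.symm,
      ← cBABN.two_zsmul_oangle_eq_left hBAB hBN.symm]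
    exact t2'
  -- triangle sum in triangle B C_A N_A : 2∡ B N_A C = 2∡ A C_A N_A + 2∡ N_A B A
  have T1 : ∡ B C_A N_A + ∡ C_A N_A B + ∡ N_A B C_A = Real.pi :=
    EuclideanGeometry.oangle_add_oangle_add_oangle_eq_pi hCAB hCAN.symm hBN
  have h2 : (2 : ℤ) • ∡ B N_A C = (2 : ℤ) • ∡ A C_A N_A + (2 : ℤ) • ∡ N_A B A := by
    have t1' : (2 : ℤ) • (∡ B C_A N_A + ∡ C_A N_A B + ∡ N_A B C_A) = 0 := by
      rw [T1]; exact Real.Angle.two_zsmul_coe_pi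
    rw [smul_add, smul_add] at t1'
    rw [cBCAA.two_zsmul_oangle_eq_left (Ne.symm hCAB) (Ne.symm hCAA),
      cCANC.two_zsmul_oangle_eq_left hCAN hCN,
      cCABA.two_zsmul_oangle_eq_right hCAB hAB,
      show ∡ C N_A B = -∡ B N_A C from EuclideanGeometry.oangle_rev B N_A C,
      smul_neg] at t1'
    exact miquel_aux_group t1'
  -- the key identity : 2∡ B M_A C + 2∡ A B_A N_A = 2∡ A C_A N_A
  have KEY : (2 : ℤ) • ∡ B M_A C + (2 : ℤ) • ∡ A B_A N_A = (2 : ℤ) • ∡ A C_A N_A := by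
    have e : ((2 : ℤ) • ∡ B M_A C + (2 : ℤ) • ∡ A B_A N_A) - (2 : ℤ) • ∡ A C_A N_A =
        (2 : ℤ) • ∡ B A C + (2 : ℤ) • ∡ A B_A N_A + (2 : ℤ) • ∡ N_A B A := by
      rw [step1, h2]; abel
    rw [h3] at e
    exact sub_eq_zero.mp e
  have hEquiv : (2 : ℤ) • ∡ B M_A C = 0 ↔
      (2 : ℤ) • ∡ A B_A N_A = (2 : ℤ) • ∡ A C_A N_A := by
    constructor
    · intro h0
      rw [← KEY, h0, zero_add]
    · intro he
      have hk := KEY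
      rw [he] at hk
      exact add_eq_right.mp hk
  constructor
  · intro hmem
    have hcol : Collinear ℝ ({B, M_A, C} : Set MiquelPt) :=
      (collinear_insert_of_mem_affineSpan_pair hmem).subset
        (by intro p hp; simp only [Set.mem_insert_iff, Set.mem_singleton_iff] at hp ⊢; tauto)
    have h0 : (2 : ℤ) • ∡ B M_A C = 0 :=
      Real.Angle.two_zsmul_eq_zero_iff.mpr (oangle_eq_zero_or_eq_pi_iff_collinear.mpr hcol)
    exact cospherical_of_two_zsmul_oangle_eq_of_not_collinear (hEquiv.mp h0) hnABN
  · intro hc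
    have hang : (2 : ℤ) • ∡ A B_A N_A = (2 : ℤ) • ∡ A C_A N_A :=
      hc.two_zsmul_oangle_eq hBAA hBAN hCAA hCAN
    have hcol : Collinear ℝ ({B, M_A, C} : Set MiquelPt) :=
      oangle_eq_zero_or_eq_pi_iff_collinear.mp
        (Real.Angle.two_zsmul_eq_zero_iff.mp (hEquiv.mpr hang))
    exact hcol.mem_affineSpan_of_mem_of_ne (by simp) (by simp) (by simp) hBC
end

section
/- Given a triangle ABC and a cevian pair (B_A, C_A) from A with cevian intersection point N_A, the circumcircles of the four triangles A B B_A, A C C_A, C B_A N_A, B C_A N_A have a common point M_A (the Miquel–Steiner point of triangle ABC with cevians B B_A and C C_A). -/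
open EuclideanGeometry

namespace MiquelAux

noncomputable section

abbrev E := EuclideanSpace ℝ (Fin 2)

instance : Fact (Module.finrank ℝ E = 2) := ⟨finrank_euclideanSpace_fin⟩
instance : Module.Oriented ℝ E (Fin 2) := ⟨(EuclideanSpace.basisFun (Fin 2) ℝ).toBasis.orientation⟩

lemma collinear_line (a b : E) : Collinear ℝ (line[ℝ, a, b] : Set E) := by
  rw [collinear_iff_rank_le_one, ← direction_affineSpan, AffineSubspace.affineSpan_coe,
    direction_affineSpan, ← collinear_iff_rank_le_one]
  exact collinear_pair ℝ a b

lemma collinear_triple {x y z a b : E} (hx : x ∈ line[ℝ, a, b]) (hy : y ∈ line[ℝ, a, b])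
    (hz : z ∈ line[ℝ, a, b]) : Collinear ℝ ({x, y, z} : Set E) :=
  (collinear_line a b).subset (by
    simp only [Set.insert_subset_iff, Set.singleton_subset_iff]
    exact ⟨hx, hy, hz⟩)

lemma eq_of_mem_two_lines {A B C P : E} (h : AffineIndependent ℝ ![A, B, C])
    (h1 : P ∈ line[ℝ, A, B]) (h2 : P ∈ line[ℝ, A, C]) : P = A := by
  by_contra hPA
  have c1 : Collinear ℝ ({P, A, B} : Set E) := collinear_insert_of_mem_affineSpan_pair h1
  have c2 : Collinear ℝ ({P, A, C} : Set E) := collinear_insert_of_mem_affineSpan_pair h2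
  have hB : B ∈ line[ℝ, P, A] := c1.mem_affineSpan_of_mem_of_ne (Set.mem_insert _ _)
    (by simp) (by simp) hPA
  have hC : C ∈ line[ℝ, P, A] := c2.mem_affineSpan_of_mem_of_ne (Set.mem_insert _ _)
    (by simp) (by simp) hPA
  have hA : A ∈ line[ℝ, P, A] := right_mem_affineSpan_pair ℝ P A
  exact (affineIndependent_iff_not_collinear_set.mp h) (collinear_triple hA hB hC)

lemma not_col_sphere {x y z : E} {ω : Sphere E} (hx : x ∈ ω) (hy : y ∈ ω) (hz : z ∈ ω)
    (hxy : x ≠ y) (hxz : x ≠ z) (hyz : y ≠ z) (hcol : Collinear ℝ ({x, y, z} : Set E)) :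
    False := by
  have hc : Cospherical ({x, y, z} : Set E) := by
    refine ⟨ω.center, ω.radius, ?_⟩
    rintro p hp
    simp only [Set.mem_insert_iff, Set.mem_singleton_iff] at hp
    rcases hp with rfl | rfl | rfl
    exacts [mem_sphere.mp hx, mem_sphere.mp hy, mem_sphere.mp hz]
  exact (affineIndependent_iff_not_collinear_set.mp
    (hc.affineIndependent_of_ne hxy hxz hyz)) hcol

lemma ai_ne {p q r : E} (h : AffineIndependent ℝ ![p, q, r]) : p ≠ q ∧ p ≠ r ∧ q ≠ r := by
  have h01 := h.injective.ne (show (0 : Fin 3) ≠ 1 by decide)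
  have h02 := h.injective.ne (show (0 : Fin 3) ≠ 2 by decide)
  have h12 := h.injective.ne (show (1 : Fin 3) ≠ 2 by decide)
  simpa using ⟨h01, h02, h12⟩

end

end MiquelAux

open MiquelAux

set_option maxHeartbeats 1000000

/-- **Miquel–Steiner point for a triangle with two cevians.** The circumcircles of the
four triangles `A B B_A`, `A C C_A`, `C B_A N_A`, `B C_A N_A` have a common point. -/
theorem miquel_point_exists
    (A B C B_A C_A N_A : EuclideanSpace ℝ (Fin 2))
    (hABC : AffineIndependent ℝ ![A, B, C])
    (hcev : IsCevianPair A B C B_A C_A)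
    (hN₁ : N_A ∈ line[ℝ, B, B_A]) (hN₂ : N_A ∈ line[ℝ, C, C_A])
    (hCBN : AffineIndependent ℝ ![C, B_A, N_A])
    (hBCN : AffineIndependent ℝ ![B, C_A, N_A]) :
    ∃ M_A : EuclideanSpace ℝ (Fin 2), IsMiquelPoint A B C B_A C_A N_A M_A := by
  classical
  obtain ⟨hB_Al, hB_AA, hB_AC, hC_Al, hC_AA, hC_AB, hnpar⟩ := hcev
  obtain ⟨hAB, hAC, hBC⟩ := ai_ne hABC
  obtain ⟨hCB_A, hCN_A, hB_AN_A⟩ := ai_ne hCBN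
  obtain ⟨hBC_A, hBN_A, hC_AN_A⟩ := ai_ne hBCN
  -- line membership shorthands
  have lA1 : A ∈ line[ℝ, A, B] := left_mem_affineSpan_pair ℝ A B
  have lB1 : B ∈ line[ℝ, A, B] := right_mem_affineSpan_pair ℝ A B
  have lA2 : A ∈ line[ℝ, A, C] := left_mem_affineSpan_pair ℝ A C
  have lC2 : C ∈ line[ℝ, A, C] := right_mem_affineSpan_pair ℝ A C
  have lB3 : B ∈ line[ℝ, B, B_A] := left_mem_affineSpan_pair ℝ B B_A
  have lB_A3 : B_A ∈ line[ℝ, B, B_A] := right_mem_affineSpan_pair ℝ B B_A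
  have lC4 : C ∈ line[ℝ, C, C_A] := left_mem_affineSpan_pair ℝ C C_A
  have lC_A4 : C_A ∈ line[ℝ, C, C_A] := right_mem_affineSpan_pair ℝ C C_A
  -- derived distinctness
  have hB_AB : B_A ≠ B := fun h =>
    hB_AA (eq_of_mem_two_lines hABC (h ▸ lB1) hB_Al)
  have hC_AC : C_A ≠ C := fun h =>
    hC_AA (eq_of_mem_two_lines hABC hC_Al (h ▸ lC2))
  -- noncollinearity of the four triangles
  have nc1 : ¬ Collinear ℝ ({A, B, B_A} : Set (EuclideanSpace ℝ (Fin 2))) := fun h =>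
    hB_AA (eq_of_mem_two_lines hABC
      (h.mem_affineSpan_of_mem_of_ne (Set.mem_insert _ _) (by simp) (by simp) hAB) hB_Al)
  have nc2 : ¬ Collinear ℝ ({A, C, C_A} : Set (EuclideanSpace ℝ (Fin 2))) := fun h =>
    hC_AA (eq_of_mem_two_lines hABC hC_Al
      (h.mem_affineSpan_of_mem_of_ne (Set.mem_insert _ _) (by simp) (by simp) hAC))
  have nc3 : ¬ Collinear ℝ ({C, N_A, B_A} : Set (EuclideanSpace ℝ (Fin 2))) := fun h =>
    (affineIndependent_iff_not_collinear_set.mp hCBN)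
      (h.subset (by intro p hp; simp only [Set.mem_insert_iff, Set.mem_singleton_iff] at hp ⊢; tauto))
  -- the circumscribed circles of triangles `A B B_A` and `B C_A N_A`
  let t₁ : Affine.Triangle ℝ (EuclideanSpace ℝ (Fin 2)) :=
    ⟨![A, B, B_A], affineIndependent_iff_not_collinear_set.mpr nc1⟩
  let t₄ : Affine.Triangle ℝ (EuclideanSpace ℝ (Fin 2)) := ⟨![B, C_A, N_A], hBCN⟩
  set ω₁ := t₁.circumsphere with hω₁
  set ω₄ := t₄.circumsphere with hω₄
  have hA1 : A ∈ ω₁ := t₁.mem_circumsphere 0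
  have hB1 : B ∈ ω₁ := t₁.mem_circumsphere 1
  have hB_A1 : B_A ∈ ω₁ := t₁.mem_circumsphere 2
  have hB4 : B ∈ ω₄ := t₄.mem_circumsphere 0
  have hC_A4 : C_A ∈ ω₄ := t₄.mem_circumsphere 1
  have hN4 : N_A ∈ ω₄ := t₄.mem_circumsphere 2
  -- the centers are distinct
  have hcc : ω₁.center ≠ ω₄.center := by
    intro h
    have hr : ω₁.radius = ω₄.radius := by
      rw [← mem_sphere.mp hB1, ← mem_sphere.mp hB4, h]
    have hC_A1 : C_A ∈ ω₁ := by
      rw [mem_sphere, h, hr]; exact mem_sphere.mp hC_A4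
    exact not_col_sphere hA1 hB1 hC_A1 hAB hC_AA.symm hC_AB.symm
      (collinear_triple lA1 lB1 hC_Al)
  set ℓ := line[ℝ, ω₁.center, ω₄.center] with hℓ
  haveI : Nonempty ℓ := ⟨⟨ω₁.center, left_mem_affineSpan_pair ℝ _ _⟩⟩
  have hc₁ℓ : ω₁.center ∈ ℓ := left_mem_affineSpan_pair ℝ _ _
  have hc₄ℓ : ω₄.center ∈ ℓ := right_mem_affineSpan_pair ℝ _ _
  set M := reflection ℓ B with hMdef
  have hM1 : M ∈ ω₁ := by
    rw [mem_sphere, dist_comm, hMdef, dist_reflection_eq_of_mem ℓ hc₁ℓ B, dist_comm]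
    exact mem_sphere.mp hB1
  have hM4 : M ∈ ω₄ := by
    rw [mem_sphere, dist_comm, hMdef, dist_reflection_eq_of_mem ℓ hc₄ℓ B, dist_comm]
    exact mem_sphere.mp hB4
  have hMB : M ≠ B := by
    intro h
    have hBl : B ∈ ℓ := (EuclideanGeometry.reflection_eq_self_iff B).mp h
    -- tangency is impossible
    have hBc₁ : B ≠ ω₁.center := by
      intro hb
      have h0 : ω₁.radius = 0 := by rw [← mem_sphere.mp hB1, hb, dist_self]
      have hA0 : dist A ω₁.center = 0 := by rw [mem_sphere.mp hA1, h0]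
      rw [dist_eq_zero] at hA0
      exact hAB (hA0.trans hb.symm)
    have hBc₄ : B ≠ ω₄.center := by
      intro hb
      have h0 : ω₄.radius = 0 := by rw [← mem_sphere.mp hB4, hb, dist_self]
      have h1 : dist C_A ω₄.center = 0 := by rw [mem_sphere.mp hC_A4, h0]
      have h2 : dist N_A ω₄.center = 0 := by rw [mem_sphere.mp hN4, h0]
      rw [dist_eq_zero] at h1 h2
      exact hC_AN_A (h1.trans h2.symm)
    have e₁ := EuclideanGeometry.Sphere.two_zsmul_oangle_center_add_two_zsmul_oangle_eq_pi
      hB1 hB_A1 hA1 hB_AB hB_AA hAB.symm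
    have e₂ := EuclideanGeometry.Sphere.two_zsmul_oangle_center_add_two_zsmul_oangle_eq_pi
      hB4 hN4 hC_A4 hBN_A.symm hC_AN_A.symm hBC_A
    have r₁ : (2 : ℤ) • ∡ A B ω₁.center = (2 : ℤ) • ∡ A B ω₄.center :=
      (collinear_triple hc₁ℓ hBl hc₄ℓ).two_zsmul_oangle_eq_right hBc₁.symm hBc₄.symm
    have r₂ : (2 : ℤ) • ∡ A B ω₄.center = (2 : ℤ) • ∡ C_A B ω₄.center :=
      (collinear_triple lA1 lB1 hC_Al).two_zsmul_oangle_eq_left hAB hC_AB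
    have key0 : (2 : ℤ) • ∡ B B_A A = (2 : ℤ) • ∡ B N_A C_A := by
      have k₁ : (2 : ℤ) • ∡ B B_A A = ↑Real.pi - (2 : ℤ) • ∡ A B ω₁.center :=
        eq_sub_of_add_eq' e₁
      have k₂ : (2 : ℤ) • ∡ B N_A C_A = ↑Real.pi - (2 : ℤ) • ∡ C_A B ω₄.center :=
        eq_sub_of_add_eq' e₂
      rw [k₁, k₂, r₁, r₂]
    have keyL : (2 : ℤ) • ∡ B B_A A = (2 : ℤ) • ∡ N_A B_A A :=
      (collinear_triple lB3 lB_A3 hN₁).two_zsmul_oangle_eq_left hB_AB.symm hB_AN_A.symm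
    have keyR : (2 : ℤ) • ∡ B N_A C_A = (2 : ℤ) • ∡ B_A N_A C_A :=
      (collinear_triple lB3 hN₁ lB_A3).two_zsmul_oangle_eq_left hBN_A hB_AN_A
    have key : (2 : ℤ) • ∡ N_A B_A A = (2 : ℤ) • ∡ B_A N_A C_A := by
      rw [← keyL, key0, keyR]
    have hu : N_A -ᵥ B_A ≠ (0 : EuclideanSpace ℝ (Fin 2)) := vsub_ne_zero.mpr hB_AN_A.symm
    have hv : A -ᵥ B_A ≠ (0 : EuclideanSpace ℝ (Fin 2)) := vsub_ne_zero.mpr hB_AA.symm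
    have hw : C_A -ᵥ N_A ≠ (0 : EuclideanSpace ℝ (Fin 2)) := vsub_ne_zero.mpr hC_AN_A
    have key' : (2 : ℤ) • (Module.Oriented.positiveOrientation :
          Orientation ℝ (EuclideanSpace ℝ (Fin 2)) (Fin 2)).oangle (N_A -ᵥ B_A) (A -ᵥ B_A) =
        (2 : ℤ) • (Module.Oriented.positiveOrientation :
          Orientation ℝ (EuclideanSpace ℝ (Fin 2)) (Fin 2)).oangle (B_A -ᵥ N_A) (C_A -ᵥ N_A) :=
      key
    rw [show B_A -ᵥ N_A = -(N_A -ᵥ B_A) by rw [neg_vsub_eq_vsub_rev],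
      Orientation.two_zsmul_oangle_neg_left] at key'
    have hsub := Orientation.oangle_sub_left
      (o := (Module.Oriented.positiveOrientation :
        Orientation ℝ (EuclideanSpace ℝ (Fin 2)) (Fin 2))) hu hv hw
    have hz2 : (2 : ℤ) • (Module.Oriented.positiveOrientation :
        Orientation ℝ (EuclideanSpace ℝ (Fin 2)) (Fin 2)).oangle (A -ᵥ B_A) (C_A -ᵥ N_A) = 0 := by
      rw [← hsub, smul_sub, ← key', sub_self]
    have h0 := Real.Angle.two_zsmul_eq_zero_iff.mp hz2
    rcases (Orientation.oangle_eq_zero_or_eq_pi_iff_right_eq_smul _).mp h0 with h' | ⟨r, hr⟩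
    · exact hv h'
    have hvdir : A -ᵥ B_A ∈ (line[ℝ, A, C]).direction :=
      AffineSubspace.vsub_mem_direction lA2 hB_Al
    have hwdir : C_A -ᵥ N_A ∈ (line[ℝ, A, C]).direction := by
      rw [hr]; exact Submodule.smul_mem _ r hvdir
    have hw4 : C_A -ᵥ N_A ∈ (line[ℝ, C, C_A]).direction :=
      AffineSubspace.vsub_mem_direction lC_A4 hN₂
    rw [direction_affineSpan, vectorSpan_pair] at hw4
    obtain ⟨t, ht⟩ := Submodule.mem_span_singleton.mp hw4
    have ht0 : t ≠ 0 := by rintro rfl; rw [zero_smul] at ht; exact hw ht.symm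
    have hCC_A : C -ᵥ C_A ∈ (line[ℝ, A, C]).direction := by
      have hcc' : C -ᵥ C_A = t⁻¹ • (C_A -ᵥ N_A) := by
        rw [← ht, smul_smul, inv_mul_cancel₀ ht0, one_smul]
      rw [hcc']; exact Submodule.smul_mem _ _ hwdir
    have hC_Amem : C_A ∈ line[ℝ, A, C] := by
      have hmem := AffineSubspace.vadd_mem_of_mem_direction
        (Submodule.neg_mem _ hCC_A) lC2
      rwa [neg_vsub_eq_vsub_rev, vsub_vadd] at hmem
    exact hC_AA (eq_of_mem_two_lines hABC hC_Al hC_Amem)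
  -- `M` is distinct from the other relevant points
  have hMA : M ≠ A := fun h =>
    not_col_sphere (h ▸ hM4) hB4 hC_A4 hAB hC_AA.symm hC_AB.symm
      (collinear_triple lA1 lB1 hC_Al)
  have hMC_A : M ≠ C_A := fun h =>
    not_col_sphere hA1 hB1 (h ▸ hM1) hAB hC_AA.symm hC_AB.symm
      (collinear_triple lA1 lB1 hC_Al)
  have hMC : M ≠ C := fun h =>
    not_col_sphere (h ▸ hM4) hC_A4 hN4 hC_AC.symm hCN_A hC_AN_A
      (collinear_triple lC4 lC_A4 hN₂)
  have hMB_A : M ≠ B_A := fun h =>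
    not_col_sphere hB4 hN4 (h ▸ hM4) hBN_A hB_AB.symm hB_AN_A.symm
      (collinear_triple lB3 hN₁ lB_A3)
  -- Step 1: `A`, `C`, `C_A`, `M` are concyclic
  have s1a : ∡ A M B + ∡ B M C_A = ∡ A M C_A :=
    EuclideanGeometry.oangle_add hMA.symm hMB.symm hMC_A.symm
  have s1b : (2 : ℤ) • ∡ A M B = (2 : ℤ) • ∡ A B_A B :=
    EuclideanGeometry.Sphere.two_zsmul_oangle_eq hA1 hM1 hB_A1 hB1 hMA hMB hB_AA hB_AB
  have s1c : (2 : ℤ) • ∡ B M C_A = (2 : ℤ) • ∡ B N_A C_A :=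
    EuclideanGeometry.Sphere.two_zsmul_oangle_eq hB4 hM4 hN4 hC_A4 hMB hMC_A hBN_A.symm
      hC_AN_A.symm
  have s1d : (2 : ℤ) • ∡ A B_A B = (2 : ℤ) • ∡ C B_A B :=
    (collinear_triple lA2 hB_Al lC2).two_zsmul_oangle_eq_left hB_AA.symm hCB_A
  have s1e : (2 : ℤ) • ∡ C B_A B = (2 : ℤ) • ∡ C B_A N_A :=
    (collinear_triple lB3 lB_A3 hN₁).two_zsmul_oangle_eq_right hB_AB.symm hB_AN_A.symm
  have s1f : (2 : ℤ) • ∡ B N_A C_A = (2 : ℤ) • ∡ B_A N_A C_A :=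
    (collinear_triple lB3 hN₁ lB_A3).two_zsmul_oangle_eq_left hBN_A hB_AN_A
  have s1g : (2 : ℤ) • ∡ B_A N_A C_A = (2 : ℤ) • ∡ B_A N_A C :=
    (collinear_triple lC_A4 hN₂ lC4).two_zsmul_oangle_eq_right hC_AN_A hCN_A
  have tri1 : ∡ C B_A N_A + ∡ B_A N_A C + ∡ N_A C B_A = Real.pi :=
    EuclideanGeometry.oangle_add_oangle_add_oangle_eq_pi hCB_A.symm hB_AN_A.symm hCN_A
  have hxy1 : (2 : ℤ) • ∡ C B_A N_A + (2 : ℤ) • ∡ B_A N_A C = -((2 : ℤ) • ∡ N_A C B_A) := by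
    have h' : ∡ C B_A N_A + ∡ B_A N_A C = (Real.pi : Real.Angle) - ∡ N_A C B_A :=
      eq_sub_of_add_eq tri1
    rw [← smul_add, h', smul_sub, Real.Angle.two_zsmul_coe_pi, zero_sub]
  have hrev1 : -((2 : ℤ) • ∡ N_A C B_A) = (2 : ℤ) • ∡ B_A C N_A := by
    rw [EuclideanGeometry.oangle_rev B_A C N_A, smul_neg, neg_neg]
  have s1h : (2 : ℤ) • ∡ B_A C N_A = (2 : ℤ) • ∡ A C N_A :=
    (collinear_triple hB_Al lC2 lA2).two_zsmul_oangle_eq_left hCB_A.symm hAC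
  have s1i : (2 : ℤ) • ∡ A C N_A = (2 : ℤ) • ∡ A C C_A :=
    (collinear_triple hN₂ lC4 lC_A4).two_zsmul_oangle_eq_right hCN_A.symm hC_AC
  have main1 : (2 : ℤ) • ∡ A C C_A = (2 : ℤ) • ∡ A M C_A := by
    have c1 : (2 : ℤ) • ∡ A M C_A = (2 : ℤ) • ∡ A M B + (2 : ℤ) • ∡ B M C_A := by
      rw [← smul_add, s1a]
    rw [s1b, s1c, s1d, s1e, s1f, s1g, hxy1, hrev1, s1h, s1i] at c1
    exact c1.symm
  have cos2 := cospherical_of_two_zsmul_oangle_eq_of_not_collinear main1 nc2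
  obtain ⟨c₂, r₂, hsp₂⟩ := cos2
  have hA2 : A ∈ (⟨c₂, r₂⟩ : Sphere (EuclideanSpace ℝ (Fin 2))) :=
    mem_sphere.mpr (hsp₂ A (by simp))
  have hC2 : C ∈ (⟨c₂, r₂⟩ : Sphere (EuclideanSpace ℝ (Fin 2))) :=
    mem_sphere.mpr (hsp₂ C (by simp))
  have hM2 : M ∈ (⟨c₂, r₂⟩ : Sphere (EuclideanSpace ℝ (Fin 2))) :=
    mem_sphere.mpr (hsp₂ M (by simp))
  have hC_A2 : C_A ∈ (⟨c₂, r₂⟩ : Sphere (EuclideanSpace ℝ (Fin 2))) :=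
    mem_sphere.mpr (hsp₂ C_A (by simp))
  -- Step 2: `C`, `B_A`, `N_A`, `M` are concyclic
  have s2a : ∡ C M A + ∡ A M B_A = ∡ C M B_A :=
    EuclideanGeometry.oangle_add hMC.symm hMA.symm hMB_A.symm
  have s2b : (2 : ℤ) • ∡ C M A = (2 : ℤ) • ∡ C C_A A :=
    EuclideanGeometry.Sphere.two_zsmul_oangle_eq hC2 hM2 hC_A2 hA2 hMC hMA hC_AC hC_AA
  have s2c : (2 : ℤ) • ∡ A M B_A = (2 : ℤ) • ∡ A B B_A :=
    EuclideanGeometry.Sphere.two_zsmul_oangle_eq hA1 hM1 hB1 hB_A1 hMA hMB_A hAB.symm hB_AB.symm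
  have s2d : (2 : ℤ) • ∡ C C_A A = (2 : ℤ) • ∡ N_A C_A A :=
    (collinear_triple lC4 lC_A4 hN₂).two_zsmul_oangle_eq_left hC_AC.symm hC_AN_A.symm
  have s2e : (2 : ℤ) • ∡ N_A C_A A = (2 : ℤ) • ∡ N_A C_A B :=
    (collinear_triple lA1 hC_Al lB1).two_zsmul_oangle_eq_right hC_AA.symm hC_AB.symm
  have s2f : (2 : ℤ) • ∡ A B B_A = (2 : ℤ) • ∡ C_A B B_A :=
    (collinear_triple lA1 lB1 hC_Al).two_zsmul_oangle_eq_left hAB hC_AB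
  have s2g : (2 : ℤ) • ∡ C_A B B_A = (2 : ℤ) • ∡ C_A B N_A :=
    (collinear_triple lB_A3 lB3 hN₁).two_zsmul_oangle_eq_right hB_AB hBN_A.symm
  have tri2 : ∡ N_A C_A B + ∡ C_A B N_A + ∡ B N_A C_A = Real.pi :=
    EuclideanGeometry.oangle_add_oangle_add_oangle_eq_pi hC_AN_A hBC_A hBN_A.symm
  have hxy2 : (2 : ℤ) • ∡ N_A C_A B + (2 : ℤ) • ∡ C_A B N_A = -((2 : ℤ) • ∡ B N_A C_A) := by
    have h' : ∡ N_A C_A B + ∡ C_A B N_A = (Real.pi : Real.Angle) - ∡ B N_A C_A :=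
      eq_sub_of_add_eq tri2
    rw [← smul_add, h', smul_sub, Real.Angle.two_zsmul_coe_pi, zero_sub]
  have hrev2 : -((2 : ℤ) • ∡ B N_A C_A) = (2 : ℤ) • ∡ C_A N_A B := by
    rw [EuclideanGeometry.oangle_rev C_A N_A B, smul_neg, neg_neg]
  have s2h : (2 : ℤ) • ∡ C_A N_A B = (2 : ℤ) • ∡ C N_A B :=
    (collinear_triple lC_A4 hN₂ lC4).two_zsmul_oangle_eq_left hC_AN_A hCN_A
  have s2i : (2 : ℤ) • ∡ C N_A B = (2 : ℤ) • ∡ C N_A B_A :=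
    (collinear_triple lB3 hN₁ lB_A3).two_zsmul_oangle_eq_right hBN_A hB_AN_A
  have main2 : (2 : ℤ) • ∡ C N_A B_A = (2 : ℤ) • ∡ C M B_A := by
    have c2 : (2 : ℤ) • ∡ C M B_A = (2 : ℤ) • ∡ C M A + (2 : ℤ) • ∡ A M B_A := by
      rw [← smul_add, s2a]
    rw [s2b, s2c, s2d, s2e, s2f, s2g, hxy2, hrev2, s2h, s2i] at c2
    exact c2.symm
  have cos3 := cospherical_of_two_zsmul_oangle_eq_of_not_collinear main2 nc3
  obtain ⟨c₃, r₃, hsp₃⟩ := cos3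
  -- assemble the four circles
  refine ⟨M, ?_, ?_, ?_, ?_⟩
  · refine ⟨ω₁.center, ω₁.radius, ?_⟩
    rintro p hp
    simp only [Set.mem_insert_iff, Set.mem_singleton_iff] at hp
    rcases hp with rfl | rfl | rfl | rfl
    exacts [mem_sphere.mp hA1, mem_sphere.mp hB1, mem_sphere.mp hB_A1, mem_sphere.mp hM1]
  · refine ⟨c₂, r₂, ?_⟩
    intro p hp
    refine hsp₂ p ?_
    simp only [Set.mem_insert_iff, Set.mem_singleton_iff] at hp ⊢
    tauto
  · refine ⟨c₃, r₃, ?_⟩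
    intro p hp
    refine hsp₃ p ?_
    simp only [Set.mem_insert_iff, Set.mem_singleton_iff] at hp ⊢
    tauto
  · refine ⟨ω₄.center, ω₄.radius, ?_⟩
    rintro p hp
    simp only [Set.mem_insert_iff, Set.mem_singleton_iff] at hp
    rcases hp with rfl | rfl | rfl | rfl
    exacts [mem_sphere.mp hB4, mem_sphere.mp hC_A4, mem_sphere.mp hN4, mem_sphere.mp hM4]
end

section
/- Let ABC be a triangle, let B_A be a point on line AC with B_A ∉ {A, C}, and let C_A be a point on line AB with C_A ∉ {A, B}. If the lines B B_A and C C_A are parallel, then the circumcircles of triangles A B B_A and A C C_A are tangent to each other at A; that is, the intersection of these two circles is exactly the single point A. -/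
open EuclideanGeometry

lemma perp_of_dist_eq' {E : Type*} [NormedAddCommGroup E] [InnerProductSpace ℝ E]
    {p q x y : E} (hp : dist p x = dist p y) (hq : dist q x = dist q y) :
    inner ℝ (p - q) (x - y) = (0 : ℝ) := by
  have hp2 : ‖p - x‖ ^ 2 = ‖p - y‖ ^ 2 := by rw [← dist_eq_norm, ← dist_eq_norm, hp]
  have hq2 : ‖q - x‖ ^ 2 = ‖q - y‖ ^ 2 := by rw [← dist_eq_norm, ← dist_eq_norm, hq]
  simp only [norm_sub_sq_real] at hp2 hq2
  simp only [inner_sub_left, inner_sub_right]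
  linarith [real_inner_comm p x, real_inner_comm p y, real_inner_comm q x, real_inner_comm q y]

lemma linIndep_of_affineIndependent' {E : Type*} [NormedAddCommGroup E] [NormedSpace ℝ E]
    {A B C : E} (h : AffineIndependent ℝ ![A, B, C]) :
    LinearIndependent ℝ ![B - A, C - A] := by
  have h' := (affineIndependent_iff_linearIndependent_vsub ℝ ![A, B, C] 0).mp h
  have e : Function.Injective (![⟨1, by decide⟩, ⟨2, by decide⟩] :
      Fin 2 → {x : Fin 3 // x ≠ 0}) := by decide
  have h2 := h'.comp _ e
  have : ((fun i : {x : Fin 3 // x ≠ 0} => ![A, B, C] ↑i -ᵥ ![A, B, C] 0) ∘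
      (![⟨1, by decide⟩, ⟨2, by decide⟩] : Fin 2 → {x : Fin 3 // x ≠ 0})) = ![B - A, C - A] := by
    funext i
    fin_cases i <;> simp [vsub_eq_sub]
  rwa [this] at h2

/-- If the cevians `B B_A` and `C C_A` are parallel, then the circumcircles of
triangles `A B B_A` and `A C C_A` are tangent to each other at `A`: their
intersection is exactly the single point `A`. -/
theorem circumcircles_tangent_of_parallel_cevians
    (A B C B_A C_A : EuclideanSpace ℝ (Fin 2))
    (hABC : AffineIndependent ℝ ![A, B, C])
    (hB_A : B_A ∈ line[ℝ, A, C]) (hB_A1 : B_A ≠ A) (hB_A2 : B_A ≠ C)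
    (hC_A : C_A ∈ line[ℝ, A, B]) (hC_A1 : C_A ≠ A) (hC_A2 : C_A ≠ B)
    (hpar : AffineSubspace.Parallel (line[ℝ, B, B_A]) (line[ℝ, C, C_A]))
    (ω₁ ω₂ : Sphere (EuclideanSpace ℝ (Fin 2)))
    (hω₁ : A ∈ ω₁ ∧ B ∈ ω₁ ∧ B_A ∈ ω₁)
    (hω₂ : A ∈ ω₂ ∧ C ∈ ω₂ ∧ C_A ∈ ω₂) :
    {x : EuclideanSpace ℝ (Fin 2) | x ∈ ω₁ ∧ x ∈ ω₂} = {A} := by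
  obtain ⟨hA1, hB1, hBA1⟩ := hω₁
  obtain ⟨hA2, hC2, hCA2⟩ := hω₂
  rw [EuclideanGeometry.mem_sphere] at hA1 hB1 hBA1 hA2 hC2 hCA2
  -- extract the scalar parameters
  obtain ⟨s, hs⟩ : ∃ r : ℝ, r • (C -ᵥ A) = B_A -ᵥ A := by
    rw [← vadd_left_mem_affineSpan_pair (k := ℝ), vsub_vadd]; exact hB_A
  obtain ⟨t, ht⟩ : ∃ r : ℝ, r • (B -ᵥ A) = C_A -ᵥ A := by
    rw [← vadd_left_mem_affineSpan_pair (k := ℝ), vsub_vadd]; exact hC_A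
  have hs' : s • (C - A) = B_A - A := by simpa [vsub_eq_sub] using hs
  have ht' : t • (B - A) = C_A - A := by simpa [vsub_eq_sub] using ht
  -- linear independence
  have hli : LinearIndependent ℝ ![B - A, C - A] := linIndep_of_affineIndependent' hABC
  have hpair := LinearIndependent.pair_iff.mp hli
  -- parallel gives the key relation t * s = 1
  have hdir := hpar.direction_eq
  rw [direction_affineSpan, direction_affineSpan, vectorSpan_pair, vectorSpan_pair] at hdir
  have hmem : B -ᵥ B_A ∈ (ℝ ∙ (C -ᵥ C_A)) := hdir ▸ Submodule.mem_span_singleton_self _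
  obtain ⟨l, hl⟩ := Submodule.mem_span_singleton.mp hmem
  have hl' : l • (C - C_A) = B - B_A := by simpa [vsub_eq_sub] using hl
  have key : (1 + l * t) • (B - A) + (-s - l) • (C - A) = 0 := by
    have e1 : B - B_A = (B - A) - s • (C - A) := by rw [hs']; abel
    have e2 : C - C_A = (C - A) - t • (B - A) := by rw [ht']; abel
    rw [e1, e2] at hl'
    linear_combination (norm := module) -hl'
  obtain ⟨h1, h2⟩ := hpair _ _ key
  have hts : t * s = 1 := by linear_combination -h1 - t * h2
  have ht0 : t ≠ 0 := by
    rintro rfl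
    exact hC_A1 (sub_eq_zero.mp (by simpa using ht'.symm))
  have ht1 : t ≠ 1 := by
    rintro rfl
    have h3 : C_A - A = B - A := by simpa using ht'.symm
    exact hC_A2 (sub_left_inj.mp h3)
  -- C - A = t • (B_A - A)
  have hCA_eq : C - A = t • (B_A - A) := by
    rw [← hs', smul_smul, hts, one_smul]
  -- the homothety image of the first center
  set O₁ := ω₁.center with hO₁
  set O₂ := ω₂.center with hO₂
  set p : EuclideanSpace ℝ (Fin 2) := t • (O₁ - A) + A with hp
  have hdpA : dist p A = |t| * dist O₁ A := by
    rw [dist_eq_norm, dist_eq_norm]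
    have hpe : p - A = t • (O₁ - A) := by rw [hp]; abel
    rw [hpe, norm_smul, Real.norm_eq_abs]
  have hdpC : dist p C = |t| * dist O₁ B_A := by
    rw [dist_eq_norm, dist_eq_norm]
    have hpe : p - C = t • (O₁ - B_A) := by
      rw [hp]; linear_combination (norm := module) -hCA_eq
    rw [hpe, norm_smul, Real.norm_eq_abs]
  have hdpCA : dist p C_A = |t| * dist O₁ B := by
    rw [dist_eq_norm, dist_eq_norm]
    have hpe : p - C_A = t • (O₁ - B) := by
      rw [hp]; linear_combination (norm := module) ht'
    rw [hpe, norm_smul, Real.norm_eq_abs]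
  -- p is equidistant from A, C, C_A, hence equals O₂
  have hpAC : dist p A = dist p C := by
    rw [hdpA, hdpC, dist_comm O₁ A, dist_comm O₁ B_A, hA1, hBA1]
  have hpACA : dist p A = dist p C_A := by
    rw [hdpA, hdpCA, dist_comm O₁ A, dist_comm O₁ B, hA1, hB1]
  have hO2C : dist O₂ C = dist O₂ A := by rw [dist_comm O₂ C, dist_comm O₂ A, hC2, hA2]
  have hO2CA : dist O₂ C_A = dist O₂ A := by rw [dist_comm O₂ C_A, dist_comm O₂ A, hCA2, hA2]
  have hw1 : inner ℝ (p - O₂) (C - A) = (0 : ℝ) := perp_of_dist_eq' hpAC.symm hO2C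
  have hw2' : inner ℝ (p - O₂) (C_A - A) = (0 : ℝ) := perp_of_dist_eq' hpACA.symm hO2CA
  have hw2 : inner ℝ (p - O₂) (B - A) = (0 : ℝ) := by
    rw [← ht', real_inner_smul_right] at hw2'
    rcases mul_eq_zero.mp hw2' with h | h
    · exact absurd h ht0
    · exact h
  -- span argument: p = O₂
  have hspan : Submodule.span ℝ (Set.range ![B - A, C - A]) = ⊤ :=
    hli.span_eq_top_of_card_eq_finrank (by simp)
  have hwmem : p - O₂ ∈ Submodule.span ℝ ({B - A, C - A} : Set (EuclideanSpace ℝ (Fin 2))) := by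
    have : Set.range ![B - A, C - A] = ({B - A, C - A} : Set (EuclideanSpace ℝ (Fin 2))) := by
      simp [Matrix.range_cons, Matrix.range_empty]; exact Set.pair_comm _ _
    rw [← this, hspan]; trivial
  obtain ⟨α, β, hαβ⟩ := Submodule.mem_span_pair.mp hwmem
  have hw0 : p - O₂ = 0 := by
    have hin : (inner ℝ (p - O₂) (p - O₂) : ℝ) = 0 := by
      nth_rewrite 2 [← hαβ]
      rw [inner_add_right, real_inner_smul_right, real_inner_smul_right, hw1, hw2]
      ring
    exact inner_self_eq_zero.mp hin
  have hpO2 : p = O₂ := sub_eq_zero.mp hw0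
  -- final tangency argument
  ext x
  simp only [Set.mem_setOf_eq, Set.mem_singleton_iff]
  constructor
  · rintro ⟨hx1, hx2⟩
    rw [EuclideanGeometry.mem_sphere] at hx1 hx2
    have hd1 : dist O₁ x = dist O₁ A := by rw [dist_comm O₁ x, dist_comm O₁ A, hx1, hA1]
    have hd2 : dist O₂ x = dist O₂ A := by rw [dist_comm O₂ x, dist_comm O₂ A, hx2, hA2]
    have hperp : inner ℝ (O₁ - O₂) (x - A) = (0 : ℝ) := perp_of_dist_eq' hd1 hd2
    have hOO : O₁ - O₂ = (1 - t) • (O₁ - A) := by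
      rw [← hpO2, hp]; module
    rw [hOO, real_inner_smul_left] at hperp
    have hperp' : inner ℝ (O₁ - A) (x - A) = (0 : ℝ) := by
      rcases mul_eq_zero.mp hperp with h | h
      · exact absurd (by linarith : t = 1) ht1
      · exact h
    have hn : ‖x - O₁‖ ^ 2 = ‖A - O₁‖ ^ 2 := by
      rw [← dist_eq_norm, ← dist_eq_norm, hx1, hA1]
    have hx' : x - O₁ = (x - A) - (O₁ - A) := by abel
    have hA' : A - O₁ = -(O₁ - A) := by abel
    rw [hx', hA', norm_neg, norm_sub_sq_real] at hn
    have hc : (inner ℝ (x - A) (O₁ - A) : ℝ) = 0 := by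
      rw [real_inner_comm]; exact hperp'
    have hxA : ‖x - A‖ ^ 2 = 0 := by rw [hc] at hn; linarith
    have : x - A = 0 := by
      simpa [sub_eq_zero] using (norm_eq_zero.mp (pow_eq_zero_iff (by norm_num) |>.mp hxA))
    exact sub_eq_zero.mp this
  · rintro rfl
    exact ⟨EuclideanGeometry.mem_sphere.mpr hA1, EuclideanGeometry.mem_sphere.mpr hA2⟩
end

section
/- Given a triangle ABC and a cevian pair (B_A, C_A) from A with cevian intersection point N_A, there is exactly one point lying on all four circumcircles of the triangles A B B_A, A C C_A, C B_A N_A, B C_A N_A; that is, the Miquel–Steiner point of the pair exists and is unique. -/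
open EuclideanGeometry

noncomputable section

local notation "E2" => EuclideanSpace ℝ (Fin 2)

lemma range_triple (P Q R : E2) : Set.range ![P, Q, R] = {P, Q, R} := by
  ext x
  constructor
  · rintro ⟨i, rfl⟩; fin_cases i <;> simp
  · rintro (rfl | rfl | rfl)
    exacts [⟨0, rfl⟩, ⟨1, rfl⟩, ⟨2, rfl⟩]


lemma dist_eq_dist_of_inner {p q c : E2}
    (h : (inner ℝ (p - c) (p - c) : ℝ) = inner ℝ (q - c) (q - c)) : dist p c = dist q c := by
  rw [dist_eq_norm, dist_eq_norm, ← Real.sqrt_sq (norm_nonneg (p - c)),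
    ← Real.sqrt_sq (norm_nonneg (q - c)), ← real_inner_self_eq_norm_sq,
    ← real_inner_self_eq_norm_sq, h]

lemma inner_comb (u v : E2) (x1 y1 x2 y2 : ℝ) :
    (inner ℝ (x1 • u + y1 • v) (x2 • u + y2 • v) : ℝ) =
      x1 * x2 * inner ℝ u u + (x1 * y2 + y1 * x2) * (inner ℝ u v : ℝ) + y1 * y2 * inner ℝ v v := by
  simp [inner_add_left, inner_add_right, real_inner_smul_left, real_inner_smul_right,
    real_inner_comm u v]
  ring

lemma dist_comb_eq {A u v P Q z : E2} {x1 y1 x2 y2 p q a c d : ℝ}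
    (ha : (inner ℝ u u : ℝ) = a) (hc : (inner ℝ v v : ℝ) = c) (hd : (inner ℝ u v : ℝ) = d)
    (hP : P = A + x1 • u + y1 • v) (hQ : Q = A + x2 • u + y2 • v) (hz : z = A + p • u + q • v)
    (h : (x1-p)*(x1-p)*a + ((x1-p)*(y1-q)+(y1-q)*(x1-p))*d + (y1-q)*(y1-q)*c
        = (x2-p)*(x2-p)*a + ((x2-p)*(y2-q)+(y2-q)*(x2-p))*d + (y2-q)*(y2-q)*c) :
    dist P z = dist Q z := by
  subst hP hQ hz
  apply dist_eq_dist_of_inner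
  have e1 : (A + x1 • u + y1 • v) - (A + p • u + q • v) = (x1-p) • u + (y1-q) • v := by module
  have e2 : (A + x2 • u + y2 • v) - (A + p • u + q • v) = (x2-p) • u + (y2-q) • v := by module
  rw [e1, e2, inner_comb, inner_comb, ha, hc, hd]
  linear_combination h

/-- Four points, given in coordinates w.r.t. a basis `u`, `v` based at `A`, are cospherical
provided the circle equation with parameters `X = ⟪u,z⟫`, `Y = ⟪v,z⟫`, `κ` vanishes at all
four points. -/
lemma cospherical_of_conditions (A u v : E2) {a c d : ℝ}
    (ha : (inner ℝ u u : ℝ) = a) (hc : (inner ℝ v v : ℝ) = c) (hd : (inner ℝ u v : ℝ) = d)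
    (hDg : a * c - d * d ≠ 0)
    (X Y κ : ℝ) (x1 y1 x2 y2 x3 y3 x4 y4 : ℝ)
    (h1 : x1*x1*a + 2*x1*y1*d + y1*y1*c - 2*(x1*X + y1*Y) + κ = 0)
    (h2 : x2*x2*a + 2*x2*y2*d + y2*y2*c - 2*(x2*X + y2*Y) + κ = 0)
    (h3 : x3*x3*a + 2*x3*y3*d + y3*y3*c - 2*(x3*X + y3*Y) + κ = 0)
    (h4 : x4*x4*a + 2*x4*y4*d + y4*y4*c - 2*(x4*X + y4*Y) + κ = 0) :
    Cospherical ({A + x1 • u + y1 • v, A + x2 • u + y2 • v,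
      A + x3 • u + y3 • v, A + x4 • u + y4 • v} : Set E2) := by
  set p : ℝ := (X*c - Y*d)/(a*c - d*d) with hp
  set q : ℝ := (Y*a - X*d)/(a*c - d*d) with hq
  have hpa : p*a + q*d = X := by
    rw [hp, hq, div_mul_eq_mul_div, div_mul_eq_mul_div, ← add_div, div_eq_iff hDg]; ring
  have hqd : p*d + q*c = Y := by
    rw [hp, hq, div_mul_eq_mul_div, div_mul_eq_mul_div, ← add_div, div_eq_iff hDg]; ring
  set z : E2 := A + p • u + q • v with hz
  refine ⟨z, dist (A + x1 • u + y1 • v) z, ?_⟩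
  rintro P (rfl | rfl | rfl | rfl)
  · rfl
  · exact dist_comb_eq ha hc hd rfl rfl hz
      (by linear_combination h2 - h1 + (2*x1 - 2*x2)*hpa + (2*y1 - 2*y2)*hqd)
  · exact dist_comb_eq ha hc hd rfl rfl hz
      (by linear_combination h3 - h1 + (2*x1 - 2*x3)*hpa + (2*y1 - 2*y3)*hqd)
  · exact dist_comb_eq ha hc hd rfl rfl hz
      (by linear_combination h4 - h1 + (2*x1 - 2*x4)*hpa + (2*y1 - 2*y4)*hqd)

set_option maxHeartbeats 1000000 in
lemma miquel_exists (A u v : E2)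
    (hind : ∀ x y : ℝ, x • u + y • v = 0 → x = 0 ∧ y = 0)
    (s t : ℝ) (hs0 : s ≠ 0) (hs1 : s ≠ 1) (ht0 : t ≠ 0) (ht1 : t ≠ 1) (hst : s * t ≠ 1) :
    ∃ M, IsMiquelPoint A (A + u) (A + v) (A + s • v) (A + t • u)
      (A + (t*(s-1)/(s*t-1)) • u + (s*(t-1)/(s*t-1)) • v) M := by
  have hs1' : s - 1 ≠ 0 := sub_ne_zero.mpr hs1
  have ht1' : t - 1 ≠ 0 := sub_ne_zero.mpr ht1
  have hsg : s * t - 1 ≠ 0 := sub_ne_zero.mpr hst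
  obtain ⟨a, ha⟩ : ∃ x : ℝ, (inner ℝ u u : ℝ) = x := ⟨_, rfl⟩
  obtain ⟨c, hc⟩ : ∃ x : ℝ, (inner ℝ v v : ℝ) = x := ⟨_, rfl⟩
  obtain ⟨d, hd⟩ : ∃ x : ℝ, (inner ℝ u v : ℝ) = x := ⟨_, rfl⟩
  have hu0 : u ≠ 0 := fun h => one_ne_zero ((hind 1 0 (by simp [h])).1)
  have hv0 : v ≠ 0 := fun h => one_ne_zero ((hind 0 1 (by simp [h])).2)
  have haa : a ≠ 0 := fun h => hu0 (inner_self_eq_zero.mp (by rw [ha]; exact h))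
  have hcc : c ≠ 0 := fun h => hv0 (inner_self_eq_zero.mp (by rw [hc]; exact h))
  have hDg : a * c - d * d ≠ 0 := by
    intro h
    have hw : (inner ℝ (c • u + (-d) • v) (c • u + (-d) • v) : ℝ) = 0 := by
      rw [inner_comb, ha, hc, hd]; linear_combination c * h
    exact hcc ((hind c (-d) (inner_self_eq_zero.mp hw)).1)
  have hE : (s-1)^2*c + 2*(s-1)*(t-1)*d + (t-1)^2*a ≠ 0 := by
    intro h
    have hw : (inner ℝ ((t-1) • u + (s-1) • v) ((t-1) • u + (s-1) • v) : ℝ) = 0 := by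
      rw [inner_comb, ha, hc, hd]; linear_combination h
    exact hs1' ((hind (t-1) (s-1) (inner_self_eq_zero.mp hw)).2)

  have r1 : A + (0:ℝ) • u + (0:ℝ) • v = A := by module
  have r2 : A + (1:ℝ) • u + (0:ℝ) • v = A + u := by module
  have r3 : A + (0:ℝ) • u + (1:ℝ) • v = A + v := by module
  have r4 : A + (0:ℝ) • u + s • v = A + s • v := by module
  have r5 : A + t • u + (0:ℝ) • v = A + t • u := by module
  have hsg' : t * s - 1 ≠ 0 := by rwa [mul_comm]
  have hE' : (s - 1) * ((s - 1) * c + 2 * (t - 1) * d) + (t - 1) ^ 2 * a ≠ 0 := by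
    convert hE using 1; ring
  refine ⟨A + ((s*t-1)*(s-1)*c/((s-1)^2*c + 2*(s-1)*(t-1)*d + (t-1)^2*a)) • u + ((s*t-1)*(t-1)*a/((s-1)^2*c + 2*(s-1)*(t-1)*d + (t-1)^2*a)) • v, ?_, ?_, ?_, ?_⟩
  · have := cospherical_of_conditions A u v ha hc hd hDg ((a/2)) ((s*c/2)) (0) ((0:ℝ)) ((0:ℝ)) ((1:ℝ)) ((0:ℝ)) ((0:ℝ)) (s) (((s*t-1)*(s-1)*c/((s-1)^2*c + 2*(s-1)*(t-1)*d + (t-1)^2*a))) (((s*t-1)*(t-1)*a/((s-1)^2*c + 2*(s-1)*(t-1)*d + (t-1)^2*a)))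
      (by field_simp; try ring1) (by field_simp; try ring1) (by field_simp; try ring1) (by field_simp; try ring1)
    simp only [r1, r2, r3, r4, r5] at this
    exact this
  · have := cospherical_of_conditions A u v ha hc hd hDg ((t*a/2)) ((c/2)) (0) ((0:ℝ)) ((0:ℝ)) ((0:ℝ)) ((1:ℝ)) (t) ((0:ℝ)) (((s*t-1)*(s-1)*c/((s-1)^2*c + 2*(s-1)*(t-1)*d + (t-1)^2*a))) (((s*t-1)*(t-1)*a/((s-1)^2*c + 2*(s-1)*(t-1)*d + (t-1)^2*a)))
      (by field_simp; try ring1) (by field_simp; try ring1) (by field_simp; try ring1) (by field_simp; try ring1)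
    simp only [r1, r2, r3, r4, r5] at this
    exact this
  · have := cospherical_of_conditions A u v ha hc hd hDg (((s*(s-1)*c + 2*s*(t-1)*d + t*(s-1)*a)/(2*(s*t-1)))) (((1+s)*c/2)) ((s*c)) ((0:ℝ)) ((1:ℝ)) ((0:ℝ)) (s) ((t*(s-1)/(s*t-1))) ((s*(t-1)/(s*t-1))) (((s*t-1)*(s-1)*c/((s-1)^2*c + 2*(s-1)*(t-1)*d + (t-1)^2*a))) (((s*t-1)*(t-1)*a/((s-1)^2*c + 2*(s-1)*(t-1)*d + (t-1)^2*a)))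
      (by field_simp; try ring1) (by field_simp; try ring1) (by field_simp; try ring1) (by field_simp; try ring1)
    simp only [r1, r2, r3, r4, r5] at this
    exact this
  · have := cospherical_of_conditions A u v ha hc hd hDg (((1+t)*a/2)) (((t*(t-1)*a + 2*t*(s-1)*d + s*(t-1)*c)/(2*(s*t-1)))) ((t*a)) ((1:ℝ)) ((0:ℝ)) (t) ((0:ℝ)) ((t*(s-1)/(s*t-1))) ((s*(t-1)/(s*t-1))) (((s*t-1)*(s-1)*c/((s-1)^2*c + 2*(s-1)*(t-1)*d + (t-1)^2*a))) (((s*t-1)*(t-1)*a/((s-1)^2*c + 2*(s-1)*(t-1)*d + (t-1)^2*a)))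
      (by field_simp; try ring1) (by field_simp; try ring1) (by field_simp; try ring1) (by field_simp; try ring1)
    simp only [r1, r2, r3, r4, r5] at this
    exact this

lemma circum_unique {P Q R : E2} (h : AffineIndependent ℝ ![P, Q, R])
    {c c' : E2} {r r' : ℝ}
    (h1 : dist P c = r) (h2 : dist Q c = r) (h3 : dist R c = r)
    (h1' : dist P c' = r') (h2' : dist Q c' = r') (h3' : dist R c' = r') :
    c = c' ∧ r = r' := by
  have htop : affineSpan ℝ (Set.range ![P, Q, R]) = ⊤ := by
    rw [h.affineSpan_eq_top_iff_card_eq_finrank_add_one]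
    simp [finrank_euclideanSpace_fin]
  obtain ⟨cs, _, hcs⟩ := h.existsUnique_dist_eq
  have key : ∀ (c₀ : E2) (r₀ : ℝ), dist P c₀ = r₀ → dist Q c₀ = r₀ → dist R c₀ = r₀ →
      (⟨c₀, r₀⟩ : Sphere E2) = cs := by
    intro c₀ r₀ k1 k2 k3
    refine hcs _ ⟨htop ▸ AffineSubspace.mem_top ℝ _ _, ?_⟩
    rw [Set.range_subset_iff]
    intro i
    fin_cases i <;> simpa [EuclideanGeometry.Sphere.mem_coe, EuclideanGeometry.mem_sphere]
      using (by assumption : _)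
  have e := (key c r h1 h2 h3).trans (key c' r' h1' h2' h3').symm
  exact ⟨congrArg EuclideanGeometry.Sphere.center e, congrArg EuclideanGeometry.Sphere.radius e⟩

lemma miquel_unique {A B C B_A C_A N_A M M' : E2}
    (hABBA : AffineIndependent ℝ ![A, B, B_A])
    (hCBN : AffineIndependent ℝ ![C, B_A, N_A])
    (hlineAC : B_A ∈ line[ℝ, A, C])
    (hAC : A ≠ C) (hBAA : B_A ≠ A) (hBAC : B_A ≠ C)
    (hM : IsMiquelPoint A B C B_A C_A N_A M)
    (hM' : IsMiquelPoint A B C B_A C_A N_A M') : M' = M := by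
  have hcol : Collinear ℝ {A, C, B_A} := by
    refine (collinear_insert_of_mem_affineSpan_pair hlineAC).subset ?_
    intro x hx; simp at hx ⊢; tauto
  have hnotind : ¬ AffineIndependent ℝ ![A, C, B_A] := by
    rw [affineIndependent_iff_not_collinear]
    intro h
    exact h (by convert hcol using 1; simp [Set.range_comp]; aesop)
  -- M ≠ B_A and M' ≠ B_A
  have hMBA : M ≠ B_A := by
    rintro rfl
    exact hnotind (hM.2.1.affineIndependent_of_mem_of_ne (by simp) (by simp) (by simp)
      hAC hBAA.symm hBAC.symm)
  have hM'BA : M' ≠ B_A := by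
    rintro rfl
    exact hnotind (hM'.2.1.affineIndependent_of_mem_of_ne (by simp) (by simp) (by simp)
      hAC hBAA.symm hBAC.symm)
  obtain ⟨c1, r1, h1⟩ := hM.1
  obtain ⟨c1', r1', h1'⟩ := hM'.1
  obtain ⟨c3, r3, h3⟩ := hM.2.2.1
  obtain ⟨c3', r3', h3'⟩ := hM'.2.2.1
  have d1A : dist A c1 = r1 := h1 _ (by simp)
  have d1B : dist B c1 = r1 := h1 _ (by simp)
  have d1BA : dist B_A c1 = r1 := h1 _ (by simp)
  have d1M : dist M c1 = r1 := h1 _ (by simp)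
  have d1A' : dist A c1' = r1' := h1' _ (by simp)
  have d1B' : dist B c1' = r1' := h1' _ (by simp)
  have d1BA' : dist B_A c1' = r1' := h1' _ (by simp)
  have d1M' : dist M' c1' = r1' := h1' _ (by simp)
  have d3C : dist C c3 = r3 := h3 _ (by simp)
  have d3BA : dist B_A c3 = r3 := h3 _ (by simp)
  have d3N : dist N_A c3 = r3 := h3 _ (by simp)
  have d3M : dist M c3 = r3 := h3 _ (by simp)
  have d3C' : dist C c3' = r3' := h3' _ (by simp)
  have d3BA' : dist B_A c3' = r3' := h3' _ (by simp)
  have d3N' : dist N_A c3' = r3' := h3' _ (by simp)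
  have d3M' : dist M' c3' = r3' := h3' _ (by simp)
  obtain ⟨hcc1, hrr1⟩ := circum_unique hABBA d1A d1B d1BA d1A' d1B' d1BA'
  obtain ⟨hcc3, hrr3⟩ := circum_unique hCBN d3C d3BA d3N d3C' d3BA' d3N'
  subst hcc1 hrr1 hcc3 hrr3
  -- the two circles have distinct centers
  have hc13 : c1 ≠ c3 := by
    rintro rfl
    have hr13 : r1 = r3 := d1BA.symm.trans d3BA
    have : Cospherical ({A, C, B_A} : Set E2) := by
      refine ⟨c1, r1, ?_⟩
      rintro p (rfl | rfl | rfl)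
      · exact d1A
      · exact hr13 ▸ d3C
      · exact d1BA
    exact hnotind (this.affineIndependent_of_ne hAC hBAA.symm hBAC.symm)
  have := eq_of_dist_eq_of_dist_eq_of_finrank_eq_two (V := EuclideanSpace ℝ (Fin 2))
    finrank_euclideanSpace_fin hc13 hMBA.symm d1BA d1M d1M' d3BA d3M d3M'
  rcases this with h | h
  · exact absurd h hM'BA
  · exact h

/-- The Miquel–Steiner point of a cevian pair exists and is unique: there is exactly
one point lying on all four circumcircles of the triangles `A B B_A`, `A C C_A`,
`C B_A N_A`, `B C_A N_A`. -/
theorem existsUnique_miquel_point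
    (A B C B_A C_A N_A : EuclideanSpace ℝ (Fin 2))
    (hABC : AffineIndependent ℝ ![A, B, C])
    (hcev : IsCevianPair A B C B_A C_A)
    (hN₁ : N_A ∈ line[ℝ, B, B_A]) (hN₂ : N_A ∈ line[ℝ, C, C_A])
    (hCBN : AffineIndependent ℝ ![C, B_A, N_A])
    (hBCN : AffineIndependent ℝ ![B, C_A, N_A]) :
    ∃! M_A : EuclideanSpace ℝ (Fin 2), IsMiquelPoint A B C B_A C_A N_A M_A := by
  obtain ⟨hl1, hBAA, hBAC, hl2, hCAA, hCAB, hnp⟩ := hcev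
  set u : E2 := B - A with hu
  set v : E2 := C - A with hv
  have hB : B = A + u := by rw [hu]; abel
  have hC : C = A + v := by rw [hv]; abel
  -- linear independence of u, v
  have hind : ∀ x y : ℝ, x • u + y • v = 0 → x = 0 ∧ y = 0 := by
    intro x y h
    have hncol : ¬ Collinear ℝ {A, B, C} := by
      have := affineIndependent_iff_not_collinear.mp hABC
      intro hcol; exact this (by rwa [range_triple])
    by_cases hx : x = 0
    · subst hx
      constructor; · rfl
      by_contra hy
      have hv0 : v = 0 := by
        have : y • v = 0 := by simpa using h
        exact (smul_eq_zero.mp this).resolve_left hy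
      exact hncol ((collinear_iff_of_mem (Set.mem_insert A _)).mpr ⟨u, by
        rintro p (rfl | rfl | rfl)
        · exact ⟨0, by simp⟩
        · exact ⟨1, by simp [hB, vadd_eq_add, add_comm]⟩
        · exact ⟨0, by simp [hC, hv0]⟩⟩)
    · exfalso
      have hu' : u = (-y/x) • v := by
        have : x • u = -y • v := by
          have := h; rw [add_eq_zero_iff_eq_neg] at this; rw [this]; module
        calc u = (x⁻¹ * x) • u := by rw [inv_mul_cancel₀ hx]; simp
        _ = x⁻¹ • (x • u) := by rw [mul_smul]
        _ = x⁻¹ • (-y • v) := by rw [this]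
        _ = (-y/x) • v := by rw [smul_smul]; ring_nf
      exact hncol ((collinear_iff_of_mem (Set.mem_insert A _)).mpr ⟨v, by
        rintro p (rfl | rfl | rfl)
        · exact ⟨0, by simp⟩
        · exact ⟨-y/x, by rw [hB, hu']; simp [vadd_eq_add, add_comm]⟩
        · exact ⟨1, by simp [hC, vadd_eq_add, add_comm]⟩⟩)
  have hu0 : u ≠ 0 := fun h => one_ne_zero ((hind 1 0 (by simp [h])).1)
  have hv0 : v ≠ 0 := fun h => one_ne_zero ((hind 0 1 (by simp [h])).2)
  -- extract s
  obtain ⟨s, hs⟩ : ∃ r : ℝ, r • (C -ᵥ A) = B_A -ᵥ A := by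
    have : (B_A -ᵥ A) +ᵥ A ∈ line[ℝ, A, C] := by rwa [vsub_vadd]
    exact vadd_left_mem_affineSpan_pair.mp this
  have hBA : B_A = A + s • v := by
    have h' : s • (C - A) = B_A - A := by simpa [vsub_eq_sub] using hs
    rw [hv]; linear_combination (norm := module) -h'
  obtain ⟨t, ht⟩ : ∃ r : ℝ, r • (B -ᵥ A) = C_A -ᵥ A := by
    have : (C_A -ᵥ A) +ᵥ A ∈ line[ℝ, A, B] := by rwa [vsub_vadd]
    exact vadd_left_mem_affineSpan_pair.mp this
  have hCA : C_A = A + t • u := by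
    have h' : t • (B - A) = C_A - A := by simpa [vsub_eq_sub] using ht
    rw [hu]; linear_combination (norm := module) -h'
  have hs0 : s ≠ 0 := by rintro rfl; exact hBAA (by simp [hBA])
  have hs1 : s ≠ 1 := by rintro rfl; exact hBAC (by simp [hBA, hC])
  have ht0 : t ≠ 0 := by rintro rfl; exact hCAA (by simp [hCA])
  have ht1 : t ≠ 1 := by rintro rfl; exact hCAB (by simp [hCA, hB])
  -- non-parallel gives s*t ≠ 1
  have hst : s * t ≠ 1 := by
    intro hst1
    apply hnp
    rw [AffineSubspace.affineSpan_pair_parallel_iff_vectorSpan_eq]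
    rw [vectorSpan_pair, vectorSpan_pair]
    have hBBA : B -ᵥ B_A = u - s • v := by rw [hB, hBA]; simp only [vsub_eq_sub]; abel
    have hCCA : C -ᵥ C_A = v - t • u := by rw [hC, hCA]; simp only [vsub_eq_sub]; abel
    rw [hBBA, hCCA]
    apply le_antisymm
    · rw [Submodule.span_singleton_le_iff_mem]
      refine Submodule.mem_span_singleton.mpr ⟨-s, ?_⟩
      have : (-s) • (v - t • u) = (s * t) • u - s • v := by module
      rw [this, show s * t = 1 from hst1]; module
    · rw [Submodule.span_singleton_le_iff_mem]
      refine Submodule.mem_span_singleton.mpr ⟨-s⁻¹, ?_⟩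
      have h1 : (-s⁻¹) • (u - s • v) = (s⁻¹ * s) • v - s⁻¹ • u := by module
      rw [h1, inv_mul_cancel₀ hs0]
      have h2 : (1 : ℝ) • v - s⁻¹ • u = v - s⁻¹ • u := by module
      rw [h2]
      congr 1
      calc s⁻¹ • u = s⁻¹ • ((s * t) • u) := by rw [hst1]; simp
      _ = (s⁻¹ * (s * t)) • u := by rw [smul_smul]
      _ = t • u := by rw [show s⁻¹ * (s * t) = t by field_simp]
  have hsg : s * t - 1 ≠ 0 := sub_ne_zero.mpr hst
  -- N_A closed form
  obtain ⟨α, hα⟩ : ∃ r : ℝ, r • (B_A -ᵥ B) = N_A -ᵥ B := by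
    have : (N_A -ᵥ B) +ᵥ B ∈ line[ℝ, B, B_A] := by rwa [vsub_vadd]
    exact vadd_left_mem_affineSpan_pair.mp this
  obtain ⟨β, hβ⟩ : ∃ r : ℝ, r • (C_A -ᵥ C) = N_A -ᵥ C := by
    have : (N_A -ᵥ C) +ᵥ C ∈ line[ℝ, C, C_A] := by rwa [vsub_vadd]
    exact vadd_left_mem_affineSpan_pair.mp this
  simp only [vsub_eq_sub] at hα hβ
  rw [hB, hBA] at hα
  rw [hC, hCA] at hβ
  have e1 : N_A = A + (1-α) • u + (α*s) • v := by linear_combination (norm := module) -hα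
  have e2 : N_A = A + (β*t) • u + (1-β) • v := by linear_combination (norm := module) -hβ
  have h0 : ((1-α)-β*t) • u + (α*s-(1-β)) • v = 0 := by
    linear_combination (norm := module) e1.symm.trans e2
  obtain ⟨hx0, hy0⟩ := hind _ _ h0
  have hrel : α * (s*t-1) = t-1 := by linear_combination t*hy0 + hx0
  have hαval : α = (t-1)/(s*t-1) := by
    rw [eq_div_iff hsg]; linarith [hrel]
  have hN : N_A = A + (t*(s-1)/(s*t-1)) • u + (s*(t-1)/(s*t-1)) • v := by
    rw [e1, hαval]
    match_scalars
    · linear_combination (mul_inv_cancel₀ hsg)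
    · linear_combination -(mul_inv_cancel₀ hsg)
    · field_simp
  -- affine independence of A, B, B_A
  have hABBA : AffineIndependent ℝ ![A, B, B_A] := by
    rw [affineIndependent_iff_not_collinear]
    intro hcol
    have hcol' : Collinear ℝ {A, B, B_A} := by rwa [range_triple] at hcol
    obtain ⟨w, hw⟩ := (collinear_iff_of_mem (Set.mem_insert A _)).mp hcol'
    obtain ⟨r1, hr1⟩ := hw B (by simp)
    obtain ⟨r2, hr2⟩ := hw B_A (by simp)
    simp only [vadd_eq_add] at hr1 hr2
    rw [hB] at hr1; rw [hBA] at hr2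
    have hru : u = r1 • w := by linear_combination (norm := module) hr1
    have hrv : s • v = r2 • w := by linear_combination (norm := module) hr2
    have h0 : (r2) • u + (-(r1*s)) • v = 0 := by
      have : r2 • u = r2 • (r1 • w) := by rw [hru]
      have h2 : r1 • (s • v) = r1 • (r2 • w) := by rw [hrv]
      linear_combination (norm := module) this - h2
    obtain ⟨ha1, ha2⟩ := hind _ _ h0
    have hr10 : r1 = 0 := by
      rcases mul_eq_zero.mp (by linarith [ha2] : r1 * s = 0) with h | h
      · exact h
      · exact absurd h hs0
    exact hu0 (by rw [hru, hr10, zero_smul])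
  -- conclusion
  have hAC : A ≠ C := by
    intro h; apply hv0; rw [hv, ← h]; abel
  obtain ⟨M, hM⟩ := miquel_exists A u v hind s t hs0 hs1 ht0 ht1 hst
  have hM' : IsMiquelPoint A B C B_A C_A N_A M := by
    rw [hB, hC, hBA, hCA, hN]; exact hM
  exact ⟨M, hM', fun y hy => miquel_unique hABBA hCBN hl1 hAC hBAA hBAC hM' hy⟩
end
end

section
/- Let ABC be a triangle with circumcenter O, let O_{A,B} and O_{A,C} be the centres of the Miquel–Steiner auxiliary circles ω_{A,B} and ω_{A,C} of ABC from A, and let I_A be the main Miquel–Steiner centre of ABC from A. Then the four points O_{A,B}, O_{A,C}, I_A, O are concyclic. -/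
open EuclideanGeometry

/-- The circle `s` is tangent to the affine subspace `L` at `P`: `P` lies on both,
and `s` meets `L` only at `P`. -/
def IsTangentAt (s : Sphere (EuclideanSpace ℝ (Fin 2)))
    (L : AffineSubspace ℝ (EuclideanSpace ℝ (Fin 2))) (P : EuclideanSpace ℝ (Fin 2)) : Prop :=
  P ∈ s ∧ P ∈ L ∧ ∀ x, x ∈ s → x ∈ L → x = P

open Module RealInnerProductSpace

noncomputable instance : Fact (Module.finrank ℝ (EuclideanSpace ℝ (Fin 2)) = 2) :=
  ⟨finrank_euclideanSpace_fin⟩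
noncomputable instance : Module.Oriented ℝ (EuclideanSpace ℝ (Fin 2)) (Fin 2) :=
  ⟨(EuclideanSpace.basisFun (Fin 2) ℝ).toBasis.orientation⟩

lemma tangent_perp (s : Sphere (EuclideanSpace ℝ (Fin 2))) {A B : EuclideanSpace ℝ (Fin 2)}
    (hAB : A ≠ B) (ht : IsTangentAt s (line[ℝ, A, B]) A) :
    ⟪s.center -ᵥ A, B -ᵥ A⟫ = 0 := by
  obtain ⟨hAs, -, huniq⟩ := ht
  set u : EuclideanSpace ℝ (Fin 2) := B -ᵥ A with hu
  have hu0 : u ≠ 0 := vsub_ne_zero.2 hAB.symm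
  have hnu : ‖u‖ ≠ 0 := norm_ne_zero_iff.2 hu0
  set t : ℝ := 2 * ⟪s.center -ᵥ A, u⟫ / ‖u‖ ^ 2 with htdef
  have hxL : t • (B -ᵥ A) +ᵥ A ∈ line[ℝ, A, B] :=
    AffineSubspace.smul_vsub_vadd_mem _ t (right_mem_affineSpan_pair ℝ A B)
      (left_mem_affineSpan_pair ℝ A B) (left_mem_affineSpan_pair ℝ A B)
  have hxs : t • (B -ᵥ A) +ᵥ A ∈ s := by
    rw [EuclideanGeometry.mem_sphere] at hAs ⊢
    rw [← hAs]
    rw [dist_eq_norm_vsub (EuclideanSpace ℝ (Fin 2)), dist_eq_norm_vsub (EuclideanSpace ℝ (Fin 2))]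
    have hveq : (t • (B -ᵥ A) +ᵥ A) -ᵥ s.center = t • u + (A -ᵥ s.center) := by
      rw [hu, vadd_vsub_assoc]
    rw [hveq]
    have hsq : ‖t • u + (A -ᵥ s.center)‖ ^ 2 = ‖A -ᵥ s.center‖ ^ 2 := by
      rw [norm_add_sq_real]
      have h1 : ‖t • u‖ ^ 2 = t ^ 2 * ‖u‖ ^ 2 := by
        rw [norm_smul, mul_pow, Real.norm_eq_abs, sq_abs]
      have h2 : ⟪t • u, A -ᵥ s.center⟫ = - (t * ⟪s.center -ᵥ A, u⟫) := by
        rw [real_inner_smul_left]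
        rw [show (A -ᵥ s.center : EuclideanSpace ℝ (Fin 2)) = -(s.center -ᵥ A) by
          rw [neg_vsub_eq_vsub_rev]]
        rw [inner_neg_right, real_inner_comm]
        ring
      rw [h1, h2]
      have ht2 : t * ‖u‖ ^ 2 = 2 * ⟪s.center -ᵥ A, u⟫ := by
        rw [htdef]; field_simp
      have h3 : t ^ 2 * ‖u‖ ^ 2 = 2 * (t * ⟪s.center -ᵥ A, u⟫) := by
        calc t ^ 2 * ‖u‖ ^ 2 = t * (t * ‖u‖ ^ 2) := by ring
          _ = t * (2 * ⟪s.center -ᵥ A, u⟫) := by rw [ht2]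
          _ = 2 * (t * ⟪s.center -ᵥ A, u⟫) := by ring
      linarith
    rw [← Real.sqrt_sq (norm_nonneg (t • u + (A -ᵥ s.center))),
      ← Real.sqrt_sq (norm_nonneg (A -ᵥ s.center)), hsq]
  have hx := huniq _ hxs hxL
  have ht0 : t • (B -ᵥ A) = 0 := by
    have := congrArg (· -ᵥ A) hx
    simpa using this
  rcases smul_eq_zero.1 ht0 with h | h
  · have h0 : 2 * ⟪s.center -ᵥ A, u⟫ / ‖u‖ ^ 2 = 0 := htdef.symm.trans h
    rcases div_eq_zero_iff.1 h0 with h1 | h1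
    · linarith
    · exact absurd h1 (pow_ne_zero 2 hnu)
  · exact absurd h hu0

local notation "o" => Module.Oriented.positiveOrientation
local notation "V2" => EuclideanSpace ℝ (Fin 2)

set_option maxHeartbeats 1000000 in
/-- The centres `O_{A,B}`, `O_{A,C}` of the Miquel–Steiner auxiliary circles of `ABC`
from `A`, the main Miquel–Steiner centre `I_A`, and the circumcenter `O` are
concyclic. -/
theorem aux_centres_main_centre_circumcenter_concyclic
    (A B C O I_A : EuclideanSpace ℝ (Fin 2))
    (ωAB ωAC : Sphere (EuclideanSpace ℝ (Fin 2)))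
    (hABC : AffineIndependent ℝ ![A, B, C])
    (hOA : dist O A = dist O B) (hOB : dist O B = dist O C)
    (hωAB : C ∈ ωAB ∧ IsTangentAt ωAB (line[ℝ, A, B]) A)
    (hωAC : B ∈ ωAC ∧ IsTangentAt ωAC (line[ℝ, A, C]) A)
    (hIA : I_A ≠ A ∧ I_A ∈ ωAB ∧ I_A ∈ ωAC) :
    Cospherical ({ωAB.center, ωAC.center, I_A, O} : Set (EuclideanSpace ℝ (Fin 2))) := by
  obtain ⟨hCmem, htAB⟩ := hωAB
  obtain ⟨hBmem, htAC⟩ := hωAC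
  obtain ⟨hIne, hImem1, hImem2⟩ := hIA
  set P := ωAB.center with hPdef
  set Q := ωAC.center with hQdef
  -- distinct vertices and noncollinearity
  have hncol : ¬ Collinear ℝ ({A, B, C} : Set V2) := by
    rw [← affineIndependent_iff_not_collinear_set]; exact hABC
  have hAB : A ≠ B := by
    intro h; apply hncol
    rw [h, Set.insert_eq_self.2 (Set.mem_insert B {C})]
    exact collinear_pair ℝ B C
  have hAC : A ≠ C := by
    intro h; apply hncol
    rw [h]
    have he : ({C, B, C} : Set (EuclideanSpace ℝ (Fin 2))) = {C, B} := by
      ext x; simp; tauto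
    rw [he]
    exact collinear_pair ℝ C B
  -- distances to centres
  have hPA : dist A P = ωAB.radius := (EuclideanGeometry.mem_sphere).1 htAB.1
  have hPC : dist C P = ωAB.radius := (EuclideanGeometry.mem_sphere).1 hCmem
  have hPI : dist I_A P = ωAB.radius := (EuclideanGeometry.mem_sphere).1 hImem1
  have hQA : dist A Q = ωAC.radius := (EuclideanGeometry.mem_sphere).1 htAC.1
  have hQB : dist B Q = ωAC.radius := (EuclideanGeometry.mem_sphere).1 hBmem
  have hQI : dist I_A Q = ωAC.radius := (EuclideanGeometry.mem_sphere).1 hImem2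
  -- centres are distinct from relevant points
  have hPAne : P ≠ A := by
    intro h
    apply hAC
    have h1 : dist C P = dist A P := hPC.trans hPA.symm
    rw [h] at h1
    simp at h1
    exact (h1.symm : A = C)
  have hQAne : Q ≠ A := by
    intro h
    apply hAB
    have h1 : dist B Q = dist A Q := hQB.trans hQA.symm
    rw [h] at h1
    simp at h1
    exact (h1.symm : A = B)
  have hPO : P ≠ O := by
    intro h
    apply hAB.symm
    have hBP : dist B P = ωAB.radius := by
      rw [h, dist_comm]
      rw [← hOA, dist_comm]
      rw [← h]  -- dist A P
      exact hPA
    exact htAB.2.2 B ((EuclideanGeometry.mem_sphere).2 hBP) (right_mem_affineSpan_pair ℝ A B)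
  have hQO : Q ≠ O := by
    intro h
    apply hAC.symm
    have hCQ : dist C Q = ωAC.radius := by
      rw [h, dist_comm, ← hOB, ← hOA, dist_comm, ← h]
      exact hQA
    exact htAC.2.2 C ((EuclideanGeometry.mem_sphere).2 hCQ) (right_mem_affineSpan_pair ℝ A C)
  -- vectors
  set u : V2 := B -ᵥ A with hudef
  set v : V2 := C -ᵥ A with hvdef
  set w : V2 := I_A -ᵥ A with hwdef
  have hu0 : u ≠ 0 := vsub_ne_zero.2 hAB.symm
  have hv0 : v ≠ 0 := vsub_ne_zero.2 hAC.symm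
  -- tangency: P - A multiple of J u, Q - A multiple of J v
  have hperp1 : ⟪u, P -ᵥ A⟫ = 0 := by
    rw [real_inner_comm]; exact tangent_perp ωAB hAB htAB
  have hperp2 : ⟪v, Q -ᵥ A⟫ = 0 := by
    rw [real_inner_comm]; exact tangent_perp ωAC hAC htAC
  obtain ⟨a, ha⟩ : ∃ r : ℝ, r • (o).rotation (Real.pi / 2 : ℝ) u = P -ᵥ A := by
    rcases (Orientation.inner_eq_zero_iff_eq_zero_or_eq_smul_rotation_pi_div_two o).1 hperp1 with h | h
    · exact absurd h hu0
    · exact h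
  obtain ⟨b, hb⟩ : ∃ r : ℝ, r • (o).rotation (Real.pi / 2 : ℝ) v = Q -ᵥ A := by
    rcases (Orientation.inner_eq_zero_iff_eq_zero_or_eq_smul_rotation_pi_div_two o).1 hperp2 with h | h
    · exact absurd h hv0
    · exact h
  have ha0 : a ≠ 0 := by
    intro h; rw [h, zero_smul] at ha
    exact hPAne (by rwa [eq_comm, vsub_eq_zero_iff_eq] at ha)
  have hb0 : b ≠ 0 := by
    intro h; rw [h, zero_smul] at hb
    exact hQAne (by rwa [eq_comm, vsub_eq_zero_iff_eq] at hb)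
  -- perpendicular bisector parametrisations
  obtain ⟨r, hr⟩ := (dist_eq_iff_eq_smul_rotation_pi_div_two_vadd_midpoint hAC).1
    (hPA.trans hPC.symm)
  obtain ⟨s, hs⟩ := (dist_eq_iff_eq_smul_rotation_pi_div_two_vadd_midpoint hAC).1
    (by rw [dist_comm A O, dist_comm C O, hOA, hOB] : dist A O = dist C O)
  obtain ⟨t, htq⟩ := (dist_eq_iff_eq_smul_rotation_pi_div_two_vadd_midpoint hAB).1
    (hQA.trans hQB.symm)
  obtain ⟨t', ht'⟩ := (dist_eq_iff_eq_smul_rotation_pi_div_two_vadd_midpoint hAB).1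
    (by rw [dist_comm A O, dist_comm B O, hOA] : dist A O = dist B O)
  obtain ⟨c, hc⟩ := (dist_eq_iff_eq_smul_rotation_pi_div_two_vadd_midpoint hIne.symm).1
    (hPA.trans hPI.symm)
  obtain ⟨d, hd⟩ := (dist_eq_iff_eq_smul_rotation_pi_div_two_vadd_midpoint hIne.symm).1
    (hQA.trans hQI.symm)
  -- vector forms
  have hPO' : P -ᵥ O = (r - s) • (o).rotation (Real.pi / 2 : ℝ) v := by
    rw [← hr, ← hs, vadd_vsub_vadd_cancel_right, sub_smul]
  have hQO' : Q -ᵥ O = (t - t') • (o).rotation (Real.pi / 2 : ℝ) u := by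
    rw [← htq, ← ht', vadd_vsub_vadd_cancel_right, sub_smul]
  have hrs : r - s ≠ 0 := by
    intro h
    apply hPO
    have : r = s := by linarith [sub_eq_zero.1 h]
    rw [← hr, ← hs, this]
  have htt' : t - t' ≠ 0 := by
    intro h
    apply hQO
    have : t = t' := by linarith [sub_eq_zero.1 h]
    rw [← htq, ← ht', this]
  -- midpoint vector identities
  have hmidr : midpoint ℝ A I_A -ᵥ I_A = -((2⁻¹ : ℝ) • w) := by
    rw [midpoint_vsub_right, hwdef, ← neg_vsub_eq_vsub_rev, smul_neg, invOf_eq_inv]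
  have hmidl : midpoint ℝ A I_A -ᵥ A = (2⁻¹ : ℝ) • w := by
    rw [midpoint_vsub_left, hwdef, invOf_eq_inv]
  have ePI : P -ᵥ I_A = c • (o).rotation (Real.pi / 2 : ℝ) w - (2⁻¹ : ℝ) • w := by
    rw [← hc, vadd_vsub_assoc, hmidr, ← sub_eq_add_neg]
  have eQI : Q -ᵥ I_A = d • (o).rotation (Real.pi / 2 : ℝ) w - (2⁻¹ : ℝ) • w := by
    rw [← hd, vadd_vsub_assoc, hmidr, ← sub_eq_add_neg]
  have ePA : P -ᵥ A = c • (o).rotation (Real.pi / 2 : ℝ) w + (2⁻¹ : ℝ) • w := by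
    rw [← hc, vadd_vsub_assoc, hmidl]
  have eQA : Q -ᵥ A = d • (o).rotation (Real.pi / 2 : ℝ) w + (2⁻¹ : ℝ) • w := by
    rw [← hd, vadd_vsub_assoc, hmidl]
  -- kahler equality: reflection across the perpendicular bisector of A I_A
  have hk : (o).kahler (P -ᵥ I_A) (Q -ᵥ I_A) = (o).kahler (Q -ᵥ A) (P -ᵥ A) := by
    rw [ePI, eQI, eQA, ePA, Orientation.rotation_pi_div_two]
    simp only [map_sub, map_add, map_smul, LinearMap.sub_apply, LinearMap.add_apply,
      LinearMap.smul_apply, Orientation.kahler_rightAngleRotation_left,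
      Orientation.kahler_rightAngleRotation_right, Orientation.kahler_apply_self,
      Complex.real_smul]
    ring
  have hoang : (o).oangle (P -ᵥ I_A) (Q -ᵥ I_A) = (o).oangle (Q -ᵥ A) (P -ᵥ A) := by
    unfold Orientation.oangle
    rw [hk]
  -- the two-angle identity
  have key : (2 : ℤ) • ∡ P O Q = (2 : ℤ) • ∡ P I_A Q := by
    have h1 : ∡ P O Q = (o).oangle (P -ᵥ O) (Q -ᵥ O) := rfl
    have h2 : ∡ P I_A Q = (o).oangle (P -ᵥ I_A) (Q -ᵥ I_A) := rfl
    rw [h1, h2, hoang, hPO', hQO', ← hb, ← ha,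
      (o).two_zsmul_oangle_smul_left_of_ne_zero _ _ hrs,
      (o).two_zsmul_oangle_smul_right_of_ne_zero _ _ htt',
      (o).two_zsmul_oangle_smul_left_of_ne_zero _ _ hb0,
      (o).two_zsmul_oangle_smul_right_of_ne_zero _ _ ha0]
  -- noncollinearity of P, O, Q
  have hn : ¬ Collinear ℝ ({P, O, Q} : Set (EuclideanSpace ℝ (Fin 2))) := by
    intro hcol
    obtain ⟨e, he⟩ := (collinear_iff_of_mem
      (Set.mem_insert_of_mem _ (Set.mem_insert _ _))).1 hcol
    obtain ⟨k1, hk1⟩ := he P (Set.mem_insert _ _)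
    obtain ⟨k2, hk2⟩ := he Q (by simp)
    have h1 : (r - s) • (o).rotation (Real.pi / 2 : ℝ) v = k1 • e := by
      rw [← hPO', hk1, vadd_vsub]
    have h2 : (t - t') • (o).rotation (Real.pi / 2 : ℝ) u = k2 • e := by
      rw [← hQO', hk2, vadd_vsub]
    have hrotu : (o).rotation (Real.pi / 2 : ℝ) u ≠ 0 := by
      simp [hu0]
    have hk2ne : k2 ≠ 0 := by
      intro h
      rw [h, zero_smul, smul_eq_zero] at h2
      rcases h2 with h2 | h2
      · exact htt' h2
      · exact hrotu h2
    set μ : ℝ := (r - s)⁻¹ * (k1 * (k2⁻¹ * (t - t'))) with hμ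
    have h3 : (o).rotation (Real.pi / 2 : ℝ) v = μ • (o).rotation (Real.pi / 2 : ℝ) u := by
      have he' : e = (k2⁻¹ * (t - t')) • (o).rotation (Real.pi / 2 : ℝ) u := by
        rw [mul_smul, h2, smul_smul, inv_mul_cancel₀ hk2ne, one_smul]
      have : (r - s) • (o).rotation (Real.pi / 2 : ℝ) v
          = (k1 * (k2⁻¹ * (t - t'))) • (o).rotation (Real.pi / 2 : ℝ) u := by
        rw [h1, he', smul_smul]
      calc (o).rotation (Real.pi / 2 : ℝ) v
          = (r - s)⁻¹ • ((r - s) • (o).rotation (Real.pi / 2 : ℝ) v) := by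
            rw [smul_smul, inv_mul_cancel₀ hrs, one_smul]
        _ = μ • (o).rotation (Real.pi / 2 : ℝ) u := by
            rw [this, smul_smul, hμ]
    have h4 : v = μ • u := by
      apply ((o).rotation (Real.pi / 2 : ℝ)).injective
      rw [map_smul]
      exact h3
    apply hncol
    refine (collinear_iff_of_mem (Set.mem_insert A {B, C})).2 ⟨u, ?_⟩
    intro p hp
    rcases hp with rfl | hp
    · exact ⟨0, by simp⟩
    rcases hp with rfl | hp
    · exact ⟨1, by rw [one_smul, hudef, vsub_vadd]⟩
    rcases hp with rfl
    · refine ⟨μ, ?_⟩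
      rw [← h4, hvdef, vsub_vadd]
  have hco := EuclideanGeometry.cospherical_of_two_zsmul_oangle_eq_of_not_collinear key hn
  have hsets : ({P, O, I_A, Q} : Set (EuclideanSpace ℝ (Fin 2))) = {P, Q, I_A, O} := by
    ext x; simp; tauto
  rwa [hsets] at hco
end

section
/- Let ABC be a triangle with circumcenter O, let O_{A,B} and O_{A,C} be the centres of the Miquel–Steiner auxiliary circles ω_{A,B} and ω_{A,C} of ABC from A, and let I_A be the main Miquel–Steiner centre of ABC from A. Then the vector from O_{A,B} to O_{A,C} is orthogonal to the vector from A to I_A, and the vector from O to I_A is orthogonal to the vector from A to I_A; in particular the line O_{A,B} O_{A,C} is parallel to the line O I_A, and the line O I_A is perpendicular to the line A I_A (the Miquel–Steiner axis from A). -/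
open EuclideanGeometry

local notation "E" => EuclideanSpace ℝ (Fin 2)

/-- If `c₁` and `c₂` are both equidistant from `p₁` and `p₂`, then `c₂ - c₁ ⟂ p₂ - p₁`. -/
lemma perp_of_dist_eq'_s8 {c₁ c₂ p₁ p₂ : E} (h₁ : dist c₁ p₁ = dist c₁ p₂)
    (h₂ : dist c₂ p₁ = dist c₂ p₂) : (inner ℝ (c₂ - c₁) (p₂ - p₁) : ℝ) = 0 := by
  have e₁ : ‖c₁ - p₁‖^2 = ‖c₁ - p₂‖^2 := by rw [← dist_eq_norm, ← dist_eq_norm, h₁]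
  have e₂ : ‖c₂ - p₁‖^2 = ‖c₂ - p₂‖^2 := by rw [← dist_eq_norm, ← dist_eq_norm, h₂]
  rw [norm_sub_sq_real, norm_sub_sq_real] at e₁ e₂
  rw [inner_sub_left, inner_sub_right, inner_sub_right]
  have hc : (inner ℝ p₂ c₁ : ℝ) = inner ℝ c₁ p₂ := real_inner_comm _ _
  have hc2 : (inner ℝ p₁ c₁ : ℝ) = inner ℝ c₁ p₁ := real_inner_comm _ _
  have hc3 : (inner ℝ p₂ c₂ : ℝ) = inner ℝ c₂ p₂ := real_inner_comm _ _
  have hc4 : (inner ℝ p₁ c₂ : ℝ) = inner ℝ c₂ p₁ := real_inner_comm _ _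
  linarith

/-- Tangency of a circle to the line `AX` at `A` forces the radius `A`–centre to be
perpendicular to the line direction. -/
lemma tangent_perp' {s : Sphere E} {A X : E} (hX : X ≠ A)
    (h : IsTangentAt s line[ℝ, A, X] A) : (inner ℝ (s.center - A) (X - A) : ℝ) = 0 := by
  obtain ⟨hA, -, huniq⟩ := h
  set c := s.center with hc
  have hXA : X - A ≠ 0 := sub_ne_zero.mpr hX
  have hn : ‖X - A‖ ^ 2 ≠ 0 := pow_ne_zero _ (norm_ne_zero_iff.mpr hXA)
  set t : ℝ := 2 * inner ℝ (c - A) (X - A) / ‖X - A‖ ^ 2 with ht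
  set x : E := t • (X - A) + A with hxdef
  have hx_line : x ∈ line[ℝ, A, X] := by
    have := AffineMap.lineMap_mem_affineSpan_pair (k := ℝ) t A X
    simpa [AffineMap.lineMap_apply, hxdef] using this
  have hkey : t * ‖X - A‖ ^ 2 = 2 * inner ℝ (c - A) (X - A) := by
    rw [ht, div_mul_cancel₀ _ hn]
  have hx_s : x ∈ s := by
    rw [EuclideanGeometry.mem_sphere] at hA ⊢
    rw [← hA, dist_eq_norm, dist_eq_norm]
    have hsq : ‖x - c‖ ^ 2 = ‖A - c‖ ^ 2 := by
      have hxc : x - c = t • (X - A) + (A - c) := by rw [hxdef]; abel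
      rw [hxc, norm_add_sq_real, real_inner_smul_left, norm_smul]
      have h1 : (inner ℝ (X - A) (A - c) : ℝ) = - inner ℝ (c - A) (X - A) := by
        rw [real_inner_comm, ← inner_neg_left]; congr 1; abel
      rw [h1]
      have h2 : (‖t‖ * ‖X - A‖) ^ 2 = t^2 * ‖X - A‖^2 := by
        rw [mul_pow, Real.norm_eq_abs, sq_abs]
      rw [h2]
      linear_combination t * hkey
    have h3 : (‖x - c‖ - ‖A - c‖) * (‖x - c‖ + ‖A - c‖) = 0 := by nlinarith [hsq]
    rcases mul_eq_zero.mp h3 with h4 | h4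
    · linarith
    · have := norm_nonneg (x - c); have := norm_nonneg (A - c); linarith
  have hxA : x = A := huniq x hx_s hx_line
  have h0 : t • (X - A) = 0 := by
    have h' := hxA; rw [hxdef] at h'; exact add_eq_right.mp h'
  rcases smul_eq_zero.mp h0 with h5 | h5
  · have : (2 : ℝ) * inner ℝ (c - A) (X - A) = 0 := by rw [← hkey, h5, zero_mul]
    linarith
  · exact absurd h5 hXA

/-- In the plane, a vector orthogonal to both edge vectors of a triangle is zero. -/
lemma zero_of_perp_perp' {A B C : E} (hABC : AffineIndependent ℝ ![A, B, C])
    (v : E) (h₁ : (inner ℝ v (B - A) : ℝ) = 0) (h₂ : (inner ℝ v (C - A) : ℝ) = 0) : v = 0 := by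
  have hli := (affineIndependent_iff_linearIndependent_vsub ℝ ![A, B, C] 0).mp hABC
  have hspan : Submodule.span ℝ (Set.range fun i : {x : Fin 3 // x ≠ 0} =>
      (![A, B, C] ↑i -ᵥ ![A, B, C] 0 : E)) = ⊤ := by
    haveI : Nonempty {x : Fin 3 // x ≠ 0} := ⟨⟨1, by decide⟩⟩
    apply LinearIndependent.span_eq_top_of_card_eq_finrank hli
    simp [finrank_euclideanSpace]
  have hv : v ∈ Submodule.span ℝ (Set.range fun i : {x : Fin 3 // x ≠ 0} =>
      (![A, B, C] ↑i -ᵥ ![A, B, C] 0 : E)) := hspan ▸ Submodule.mem_top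
  have horth : ∀ w ∈ Submodule.span ℝ (Set.range fun i : {x : Fin 3 // x ≠ 0} =>
      (![A, B, C] ↑i -ᵥ ![A, B, C] 0 : E)), (inner ℝ v w : ℝ) = 0 := by
    intro w hw
    induction hw using Submodule.span_induction with
    | mem w hw =>
      obtain ⟨⟨i, hi⟩, rfl⟩ := hw
      fin_cases i
      · exact absurd rfl hi
      · simpa [vsub_eq_sub] using h₁
      · simpa [vsub_eq_sub] using h₂
    | zero => simp
    | add x y _ _ hx hy => rw [inner_add_right, hx, hy]; ring
    | smul a x _ hx => rw [real_inner_smul_right, hx]; ring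
  exact inner_self_eq_zero.mp (horth v hv)

/-- The segment joining the auxiliary centres `O_{A,B}`, `O_{A,C}` is orthogonal to
the Miquel–Steiner axis `A I_A`, and the segment from the circumcenter `O` to `I_A`
is orthogonal to `A I_A`; in particular `O_{A,B} O_{A,C} ∥ O I_A ⟂ A I_A`. -/
theorem aux_centres_parallel_OI_perp_axis
    (A B C O I_A : EuclideanSpace ℝ (Fin 2))
    (ωAB ωAC : Sphere (EuclideanSpace ℝ (Fin 2)))
    (hABC : AffineIndependent ℝ ![A, B, C])
    (hOA : dist O A = dist O B) (hOB : dist O B = dist O C)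
    (hωAB : C ∈ ωAB ∧ IsTangentAt ωAB (line[ℝ, A, B]) A)
    (hωAC : B ∈ ωAC ∧ IsTangentAt ωAC (line[ℝ, A, C]) A)
    (hIA : I_A ≠ A ∧ I_A ∈ ωAB ∧ I_A ∈ ωAC) :
    (inner ℝ (ωAC.center - ωAB.center) (I_A - A) : ℝ) = 0 ∧
    (inner ℝ (I_A - O) (I_A - A) : ℝ) = 0 := by
  obtain ⟨hC1, htAB⟩ := hωAB
  obtain ⟨hB2, htAC⟩ := hωAC
  obtain ⟨hIne, hI1, hI2⟩ := hIA
  set c₁ := ωAB.center with hc₁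
  set c₂ := ωAC.center with hc₂
  -- B ≠ A and C ≠ A from affine independence
  have hBA : B ≠ A := by
    intro h
    exact (by decide : (1 : Fin 3) ≠ 0) (hABC.injective (by simpa using h))
  have hCA : C ≠ A := by
    intro h
    exact (by decide : (2 : Fin 3) ≠ 0) (hABC.injective (by simpa using h))
  -- tangency perpendicularity
  have hp₁ : (inner ℝ (c₁ - A) (B - A) : ℝ) = 0 := tangent_perp' hBA htAB
  have hp₂ : (inner ℝ (c₂ - A) (C - A) : ℝ) = 0 := tangent_perp' hCA htAC
  -- distance facts from sphere memberships
  have hA1 : dist c₁ A = ωAB.radius := by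
    rw [dist_comm]; exact (EuclideanGeometry.mem_sphere).mp htAB.1
  have hC1' : dist c₁ C = ωAB.radius := by
    rw [dist_comm]; exact (EuclideanGeometry.mem_sphere).mp hC1
  have hI1' : dist c₁ I_A = ωAB.radius := by
    rw [dist_comm]; exact (EuclideanGeometry.mem_sphere).mp hI1
  have hA2 : dist c₂ A = ωAC.radius := by
    rw [dist_comm]; exact (EuclideanGeometry.mem_sphere).mp htAC.1
  have hB2' : dist c₂ B = ωAC.radius := by
    rw [dist_comm]; exact (EuclideanGeometry.mem_sphere).mp hB2
  have hI2' : dist c₂ I_A = ωAC.radius := by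
    rw [dist_comm]; exact (EuclideanGeometry.mem_sphere).mp hI2
  have hd₁ : dist c₁ A = dist c₁ I_A := hA1.trans hI1'.symm
  have hd₂ : dist c₂ A = dist c₂ I_A := hA2.trans hI2'.symm
  -- First goal
  have goal1 : (inner ℝ (c₂ - c₁) (I_A - A) : ℝ) = 0 := perp_of_dist_eq'_s8 hd₁ hd₂
  refine ⟨goal1, ?_⟩
  -- O = c₁ + c₂ - A
  have hq₁ : (inner ℝ (c₂ - O) (B - A) : ℝ) = 0 :=
    perp_of_dist_eq'_s8 hOA (hA2.trans hB2'.symm)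
  have hq₂ : (inner ℝ (c₁ - O) (C - A) : ℝ) = 0 :=
    perp_of_dist_eq'_s8 (hOA.trans hOB) (hA1.trans hC1'.symm)
  set v : E := c₁ + c₂ - A - O with hvdef
  have hv₁ : (inner ℝ v (B - A) : ℝ) = 0 := by
    have hsplit : v = (c₁ - A) + (c₂ - O) := by rw [hvdef]; abel
    rw [hsplit, inner_add_left, hp₁, hq₁, add_zero]
  have hv₂ : (inner ℝ v (C - A) : ℝ) = 0 := by
    have hsplit : v = (c₂ - A) + (c₁ - O) := by rw [hvdef]; abel
    rw [hsplit, inner_add_left, hp₂, hq₂, add_zero]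
  have hv0 : v = 0 := zero_of_perp_perp' hABC v hv₁ hv₂
  have hOeq : O = c₁ + c₂ - A := by
    have := sub_eq_zero.mp (by rw [← hvdef]; exact hv0 :
      (c₁ + c₂ - A) - O = 0)
    exact this.symm
  -- midpoint of A and I_A
  set m : E := (1/2 : ℝ) • (A + I_A) with hmdef
  have hmd : dist m A = dist m I_A := by
    rw [dist_eq_norm, dist_eq_norm]
    have e1 : m - A = (1/2 : ℝ) • (I_A - A) := by
      rw [hmdef]; rw [smul_sub, smul_add]; module
    have e2 : m - I_A = (1/2 : ℝ) • (A - I_A) := by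
      rw [hmdef]; rw [smul_sub, smul_add]; module
    rw [e1, e2, norm_smul, norm_smul, norm_sub_rev]
  have hk₁ : (inner ℝ (c₁ - m) (I_A - A) : ℝ) = 0 := perp_of_dist_eq'_s8 hmd hd₁
  have hk₂ : (inner ℝ (c₂ - m) (I_A - A) : ℝ) = 0 := perp_of_dist_eq'_s8 hmd hd₂
  have hIO : I_A - O = (m - c₁) + (m - c₂) := by
    rw [hOeq, hmdef]; module
  rw [hIO, inner_add_left]
  have hn₁ : (inner ℝ (m - c₁) (I_A - A) : ℝ) = 0 := by
    rw [show m - c₁ = -(c₁ - m) by abel, inner_neg_left, hk₁, neg_zero]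
  have hn₂ : (inner ℝ (m - c₂) (I_A - A) : ℝ) = 0 := by
    rw [show m - c₂ = -(c₂ - m) by abel, inner_neg_left, hk₂, neg_zero]
  rw [hn₁, hn₂, add_zero]
end

section
/- Let ABC be a triangle with circumcenter O. Let I_A be the main Miquel–Steiner centre of ABC from A, I_B the main Miquel–Steiner centre from B, and I_C the main Miquel–Steiner centre from C. Then the four points I_A, I_B, I_C, O are concyclic (they lie on the Brocard circle, and I_A, I_B, I_C are the vertices of Brocard's second triangle). -/
open EuclideanGeometry

/-- Eliminating the circle centre: tangent-circle membership equations imply the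
power relation. -/
lemma ms_elim (b1 b2 c1 c2 u1 u2 e1 e2 : ℝ)
    (h1 : e1*b1 + e2*b2 = 0)
    (h2 : c1^2 + c2^2 = 2*(c1*e1 + c2*e2))
    (h3 : u1^2 + u2^2 = 2*(u1*e1 + u2*e2)) :
    (u1^2+u2^2) * (b1*c2 - b2*c1) = (c1^2+c2^2) * (b1*u2 - b2*u1) := by
  linear_combination (b1*c2 - b2*c1)*h3 - (b1*u2 - b2*u1)*h2 + 2*(c2*u1 - c1*u2)*h1

/-- Solving for the Miquel–Steiner point. -/
lemma ms_solve (b1 b2 c1 c2 u1 u2 : ℝ)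
    (hD : b1*c2 - b2*c1 ≠ 0) (hu : ¬(u1 = 0 ∧ u2 = 0))
    (E1 : (u1^2+u2^2) * (b1*c2 - b2*c1) = (c1^2+c2^2) * (b1*u2 - b2*u1))
    (E2 : (u1^2+u2^2) * (c1*b2 - c2*b1) = (b1^2+b2^2) * (c1*u2 - c2*u1)) :
    u1 * ((b1+c1)^2+(b2+c2)^2) = (c1^2+c2^2)*b1 + (b1^2+b2^2)*c1 ∧
    u2 * ((b1+c1)^2+(b2+c2)^2) = (c1^2+c2^2)*b2 + (b1^2+b2^2)*c2 := by
  set β := b1^2+b2^2 with hβdef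
  set γ := c1^2+c2^2 with hγdef
  set t := u1^2+u2^2 with htdef
  set D := b1*c2 - b2*c1 with hDdef
  have hb : ¬(b1 = 0 ∧ b2 = 0) := by rintro ⟨h, h'⟩; apply hD; rw [hDdef, h, h']; ring
  have hc : ¬(c1 = 0 ∧ c2 = 0) := by rintro ⟨h, h'⟩; apply hD; rw [hDdef, h, h']; ring
  have hβ : 0 < β := by
    rcases not_and_or.mp hb with h | h
    · positivity
    · positivity
  have hγ : 0 < γ := by
    rcases not_and_or.mp hc with h | h
    · positivity
    · positivity
  have ht : 0 < t := by
    rcases not_and_or.mp hu with h | h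
    · positivity
    · positivity
  have hA1 : u1 * (β*γ) * D = t * (γ*b1 + β*c1) * D := by
    linear_combination γ*b1*E2 - β*c1*E1
  have hA2 : u2 * (β*γ) * D = t * (γ*b2 + β*c2) * D := by
    linear_combination γ*b2*E2 - β*c2*E1
  have hB1 : u1 * (β*γ) = t * (γ*b1 + β*c1) := mul_right_cancel₀ hD hA1
  have hB2 : u2 * (β*γ) = t * (γ*b2 + β*c2) := mul_right_cancel₀ hD hA2
  set m := (b1+c1)^2+(b2+c2)^2 with hmdef
  have hkey : t * (β*γ)^2 = t^2 * (β*γ*m) := by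
    have : (u1*(β*γ))^2 + (u2*(β*γ))^2 = t^2 * (β*γ*m) := by
      rw [hB1, hB2]; ring
    calc t * (β*γ)^2 = (u1*(β*γ))^2 + (u2*(β*γ))^2 := by rw [htdef]; ring
    _ = t^2 * (β*γ*m) := this
  have htm : t * m = β * γ := by
    have h' : (t*(β*γ)) * (β*γ) = (t*(β*γ)) * (t*m) := by linear_combination hkey
    have := mul_left_cancel₀ (by positivity : t*(β*γ) ≠ 0) h'
    linarith
  constructor
  · have : u1 * (β*γ) * m = t * m * (γ*b1+β*c1) := by rw [hB1]; ring
    rw [htm] at this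
    exact mul_left_cancel₀ (by positivity : β*γ ≠ 0) (by linarith [this] : (β*γ) * (u1*m) = (β*γ) * (γ*b1+β*c1))
  · have : u2 * (β*γ) * m = t * m * (γ*b2+β*c2) := by rw [hB2]; ring
    rw [htm] at this
    exact mul_left_cancel₀ (by positivity : β*γ ≠ 0) (by linarith [this] : (β*γ) * (u2*m) = (β*γ) * (γ*b2+β*c2))

/-- The Miquel–Steiner point lies on the circle with diameter `OK`. -/
lemma ms_brocard (b1 b2 c1 c2 o1 o2 u1 u2 k1 k2 σ : ℝ)
    (hm : (b1+c1)^2+(b2+c2)^2 ≠ 0) (hσ : σ ≠ 0)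
    (hk1 : k1 * σ = (c1^2+c2^2)*b1 + (b1^2+b2^2)*c1)
    (hk2 : k2 * σ = (c1^2+c2^2)*b2 + (b1^2+b2^2)*c2)
    (hu1 : u1 * ((b1+c1)^2+(b2+c2)^2) = (c1^2+c2^2)*b1 + (b1^2+b2^2)*c1)
    (hu2 : u2 * ((b1+c1)^2+(b2+c2)^2) = (c1^2+c2^2)*b2 + (b1^2+b2^2)*c2)
    (hob : 2*(o1*b1+o2*b2) = b1^2+b2^2)
    (hoc : 2*(o1*c1+o2*c2) = c1^2+c2^2) :
    (u1-k1)*(u1-o1) + (u2-k2)*(u2-o2) = 0 := by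
  set β := b1^2+b2^2 with hβdef
  set γ := c1^2+c2^2 with hγdef
  set m := (b1+c1)^2+(b2+c2)^2 with hmdef
  set V1 := γ*b1 + β*c1 with hV1def
  set V2 := γ*b2 + β*c2 with hV2def
  have hk1' : k1 * σ = V1 := hk1
  have hk2' : k2 * σ = V2 := hk2
  have hu1' : u1 * m = V1 := hu1
  have hu2' : u2 * m = V2 := hu2
  have h1m : (V1*u1 + V2*u2) * m = (β*γ) * m := by
    linear_combination V1*hu1' + V2*hu2'
  have h1 : V1*u1 + V2*u2 = β*γ := mul_right_cancel₀ hm h1m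
  have h2 : V1*o1 + V2*o2 = β*γ := by
    linear_combination (γ/2)*hob + (β/2)*hoc
  have hg : ((u1-k1)*(u1-o1) + (u2-k2)*(u2-o2)) * (σ*m) = 0 := by
    linear_combination σ*(u1-o1)*hu1' - m*(u1-o1)*hk1' + σ*(u2-o2)*hu2' - m*(u2-o2)*hk2'
      + (σ-m)*h1 - (σ-m)*h2
  exact (mul_eq_zero.mp hg).resolve_right (mul_ne_zero hσ hm)

lemma ms_mne (b1 b2 c1 c2 : ℝ) (hD : b1*c2 - b2*c1 ≠ 0) :
    (b1+c1)^2+(b2+c2)^2 ≠ 0 := by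
  intro h
  apply hD
  have h1 : b1 + c1 = 0 := by nlinarith [sq_nonneg (b1+c1), sq_nonneg (b2+c2)]
  have h2 : b2 + c2 = 0 := by nlinarith [sq_nonneg (b1+c1), sq_nonneg (b2+c2)]
  linear_combination b1*h2 - b2*h1

lemma ms_circ (a1 a2 b1 b2 o1 o2 : ℝ)
    (h : (o1-a1)^2+(o2-a2)^2 = (o1-b1)^2+(o2-b2)^2) :
    2*((o1-a1)*(b1-a1)+(o2-a2)*(b2-a2)) = (b1-a1)^2+(b2-a2)^2 := by
  linear_combination h

lemma ms_ondisk (p1 p2 o1 o2 k1 k2 : ℝ)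
    (h : (p1-k1)*(p1-o1)+(p2-k2)*(p2-o2) = 0) :
    (p1-(o1+k1)/2)^2+(p2-(o2+k2)/2)^2 = (o1-(o1+k1)/2)^2+(o2-(o2+k2)/2)^2 := by
  linear_combination h

lemma ms_dist_sqrt (x y : EuclideanSpace ℝ (Fin 2)) :
    dist x y = Real.sqrt ((x 0 - y 0)^2 + (x 1 - y 1)^2) := by
  rw [EuclideanSpace.dist_eq, Fin.sum_univ_two]
  simp [Real.dist_eq, sq_abs]

lemma ms_dist_sq_eq {x y z w : EuclideanSpace ℝ (Fin 2)} (h : dist x y = dist z w) :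
    (x 0 - y 0)^2 + (x 1 - y 1)^2 = (z 0 - w 0)^2 + (z 1 - w 1)^2 := by
  rw [ms_dist_sqrt, ms_dist_sqrt] at h
  exact (Real.sqrt_inj (by positivity) (by positivity)).mp h

/-- Power-of-a-point style equation for two points on a sphere. -/
lemma ms_sphere_eq {s : Sphere (EuclideanSpace ℝ (Fin 2))} {x P : EuclideanSpace ℝ (Fin 2)}
    (hx : x ∈ s) (hP : P ∈ s) :
    (x 0 - P 0)^2 + (x 1 - P 1)^2 =
      2*((x 0 - P 0)*(s.center 0 - P 0) + (x 1 - P 1)*(s.center 1 - P 1)) := by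
  have h := ms_dist_sq_eq ((EuclideanGeometry.mem_sphere.mp hx).trans
    (EuclideanGeometry.mem_sphere.mp hP).symm)
  linear_combination h

/-- Tangency implies the centre lies on the perpendicular at the point of tangency. -/
lemma ms_tangent {s : Sphere (EuclideanSpace ℝ (Fin 2))} {P Q : EuclideanSpace ℝ (Fin 2)}
    (hPQ : Q ≠ P) (ht : IsTangentAt s (line[ℝ, P, Q]) P) :
    (s.center 0 - P 0)*(Q 0 - P 0) + (s.center 1 - P 1)*(Q 1 - P 1) = 0 := by
  obtain ⟨hPs, _, huniq⟩ := ht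
  set d0 := Q 0 - P 0 with hd0
  set d1 := Q 1 - P 1 with hd1
  have hd : ¬(d0 = 0 ∧ d1 = 0) := by
    rintro ⟨h0, h1⟩
    apply hPQ
    ext i
    fin_cases i
    · exact sub_eq_zero.mp h0
    · exact sub_eq_zero.mp h1
  have hnd : 0 < d0^2 + d1^2 := by
    rcases not_and_or.mp hd with h | h
    · positivity
    · positivity
  set k := (s.center 0 - P 0)*d0 + (s.center 1 - P 1)*d1 with hk
  set t := 2*k/(d0^2+d1^2) with htdef
  set X := AffineMap.lineMap P Q t with hX
  have hX0 : X 0 = t*d0 + P 0 := by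
    rw [hX, AffineMap.lineMap_apply]
    simp [vsub_eq_sub, vadd_eq_add, hd0]
  have hX1 : X 1 = t*d1 + P 1 := by
    rw [hX, AffineMap.lineMap_apply]
    simp [vsub_eq_sub, vadd_eq_add, hd1]
  have hXL : X ∈ line[ℝ, P, Q] := AffineMap.lineMap_mem_affineSpan_pair t P Q
  have hXs : X ∈ s := by
    rw [EuclideanGeometry.mem_sphere, ← EuclideanGeometry.mem_sphere.mp hPs,
      ms_dist_sqrt, ms_dist_sqrt]
    congr 1
    rw [hX0, hX1]
    have : t * (d0^2+d1^2) = 2*k := by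
      rw [htdef]; field_simp
    linear_combination t*this + 2*t*hk
  have hXP := huniq X hXs hXL
  have h0 : t * d0 = 0 := by
    have := congrArg (fun v : EuclideanSpace ℝ (Fin 2) => v 0) hXP
    simp only at this
    rw [hX0] at this
    linarith
  have h1 : t * d1 = 0 := by
    have := congrArg (fun v : EuclideanSpace ℝ (Fin 2) => v 1) hXP
    simp only at this
    rw [hX1] at this
    linarith
  have hT : t = 0 := by
    rcases not_and_or.mp hd with h | h
    · exact (mul_eq_zero.mp h0).resolve_right h
    · exact (mul_eq_zero.mp h1).resolve_right h
  have : 2*k = 0 := by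
    rw [htdef] at hT
    field_simp at hT
    linarith
  linarith [this]

lemma ms_cross_ne {A B C : EuclideanSpace ℝ (Fin 2)}
    (h : AffineIndependent ℝ ![A, B, C]) :
    (B 0 - A 0)*(C 1 - A 1) - (B 1 - A 1)*(C 0 - A 0) ≠ 0 := by
  intro hc
  have key := affineIndependent_iff.mp h
  have r2 := key Finset.univ ![(B 1 - A 1) - (C 1 - A 1), C 1 - A 1, -(B 1 - A 1)]
    (by simp [Fin.sum_univ_three])
    (by
      ext i
      simp [Fin.sum_univ_three]
      fin_cases i <;> simp <;> nlinarith [hc])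
  have r1 := key Finset.univ ![(B 0 - A 0) - (C 0 - A 0), C 0 - A 0, -(B 0 - A 0)]
    (by simp [Fin.sum_univ_three])
    (by
      ext i
      simp [Fin.sum_univ_three]
      fin_cases i <;> simp <;> nlinarith [hc])
  have hb1 : B 0 - A 0 = 0 := by
    have h1 := r1 2 (Finset.mem_univ _)
    simpa using by linarith [neg_eq_zero.mp (by simpa using h1)]
  have hb2 : B 1 - A 1 = 0 := by
    have h1 := r2 2 (Finset.mem_univ _)
    simpa using by linarith [neg_eq_zero.mp (by simpa using h1)]
  have hBA : B = A := by
    ext i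
    fin_cases i
    · exact sub_eq_zero.mp hb1
    · exact sub_eq_zero.mp hb2
  have h10 : (![A, B, C] : Fin 3 → _) 1 = ![A, B, C] 0 := by simp [hBA]
  have := h.injective h10
  simp at this

/-- Coordinates of the Miquel–Steiner point from a vertex. -/
lemma ms_vertex {A B C P : EuclideanSpace ℝ (Fin 2)}
    {ω₁ ω₂ : Sphere (EuclideanSpace ℝ (Fin 2))}
    (hD : (B 0 - A 0)*(C 1 - A 1) - (B 1 - A 1)*(C 0 - A 0) ≠ 0)
    (hω₁ : C ∈ ω₁ ∧ IsTangentAt ω₁ (line[ℝ, A, B]) A)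
    (hω₂ : B ∈ ω₂ ∧ IsTangentAt ω₂ (line[ℝ, A, C]) A)
    (hP : P ≠ A ∧ P ∈ ω₁ ∧ P ∈ ω₂) :
    (P 0 - A 0) * ((B 0 - A 0 + (C 0 - A 0))^2 + (B 1 - A 1 + (C 1 - A 1))^2)
      = ((C 0 - A 0)^2 + (C 1 - A 1)^2)*(B 0 - A 0)
        + ((B 0 - A 0)^2 + (B 1 - A 1)^2)*(C 0 - A 0) ∧
    (P 1 - A 1) * ((B 0 - A 0 + (C 0 - A 0))^2 + (B 1 - A 1 + (C 1 - A 1))^2)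
      = ((C 0 - A 0)^2 + (C 1 - A 1)^2)*(B 1 - A 1)
        + ((B 0 - A 0)^2 + (B 1 - A 1)^2)*(C 1 - A 1) := by
  have hBA : B ≠ A := by
    rintro rfl; apply hD; ring
  have hCA : C ≠ A := by
    rintro rfl; apply hD; ring
  have ht1 := ms_tangent hBA hω₁.2
  have ht2 := ms_tangent hCA hω₂.2
  have h2 := ms_sphere_eq hω₁.1 hω₁.2.1
  have h3 := ms_sphere_eq hP.2.1 hω₁.2.1
  have h5 := ms_sphere_eq hω₂.1 hω₂.2.1
  have h6 := ms_sphere_eq hP.2.2 hω₂.2.1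
  have E1 := ms_elim (B 0 - A 0) (B 1 - A 1) (C 0 - A 0) (C 1 - A 1)
    (P 0 - A 0) (P 1 - A 1) (ω₁.center 0 - A 0) (ω₁.center 1 - A 1)
    (by linear_combination ht1) (by linear_combination h2) (by linear_combination h3)
  have E2 := ms_elim (C 0 - A 0) (C 1 - A 1) (B 0 - A 0) (B 1 - A 1)
    (P 0 - A 0) (P 1 - A 1) (ω₂.center 0 - A 0) (ω₂.center 1 - A 1)
    (by linear_combination ht2) (by linear_combination h5) (by linear_combination h6)
  have hu : ¬(P 0 - A 0 = 0 ∧ P 1 - A 1 = 0) := by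
    rintro ⟨h0, h1⟩
    apply hP.1
    ext i
    fin_cases i
    · exact sub_eq_zero.mp h0
    · exact sub_eq_zero.mp h1
  exact ms_solve (B 0 - A 0) (B 1 - A 1) (C 0 - A 0) (C 1 - A 1)
    (P 0 - A 0) (P 1 - A 1) hD hu E1 (by linear_combination E2)

set_option maxHeartbeats 2000000 in
/-- **Brocard circle and Brocard's second triangle.** The three main Miquel–Steiner
centres `I_A`, `I_B`, `I_C` of triangle `ABC` and the circumcenter `O` are
concyclic. -/
theorem main_centres_circumcenter_concyclic
    (A B C O I_A I_B I_C : EuclideanSpace ℝ (Fin 2))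
    (hABC : AffineIndependent ℝ ![A, B, C])
    (hOA : dist O A = dist O B) (hOB : dist O B = dist O C)
    (ωAB ωAC ωBA ωBC ωCA ωCB : Sphere (EuclideanSpace ℝ (Fin 2)))
    (hωAB : C ∈ ωAB ∧ IsTangentAt ωAB (line[ℝ, A, B]) A)
    (hωAC : B ∈ ωAC ∧ IsTangentAt ωAC (line[ℝ, A, C]) A)
    (hωBA : C ∈ ωBA ∧ IsTangentAt ωBA (line[ℝ, B, A]) B)
    (hωBC : A ∈ ωBC ∧ IsTangentAt ωBC (line[ℝ, B, C]) B)
    (hωCA : B ∈ ωCA ∧ IsTangentAt ωCA (line[ℝ, C, A]) C)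
    (hωCB : A ∈ ωCB ∧ IsTangentAt ωCB (line[ℝ, C, B]) C)
    (hIA : I_A ≠ A ∧ I_A ∈ ωAB ∧ I_A ∈ ωAC)
    (hIB : I_B ≠ B ∧ I_B ∈ ωBA ∧ I_B ∈ ωBC)
    (hIC : I_C ≠ C ∧ I_C ∈ ωCA ∧ I_C ∈ ωCB) :
    Cospherical ({I_A, I_B, I_C, O} : Set (EuclideanSpace ℝ (Fin 2))) := by
  have hDA := ms_cross_ne hABC
  have hDB : (A 0 - B 0)*(C 1 - B 1) - (A 1 - B 1)*(C 0 - B 0) ≠ 0 := by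
    intro h; apply hDA; linear_combination -h
  have hDC : (A 0 - C 0)*(B 1 - C 1) - (A 1 - C 1)*(B 0 - C 0) ≠ 0 := by
    intro h; apply hDA; linear_combination h
  -- the symmedian point K
  obtain ⟨σ, hσdef⟩ : ∃ s : ℝ, s = ((B 0 - C 0)^2 + (B 1 - C 1)^2)
      + ((C 0 - A 0)^2 + (C 1 - A 1)^2) + ((A 0 - B 0)^2 + (A 1 - B 1)^2) := ⟨_, rfl⟩
  have hσpos : 0 < σ := by
    have hb : ¬(B 0 - A 0 = 0 ∧ B 1 - A 1 = 0) := by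
      rintro ⟨h0, h1⟩; apply hDA; rw [h0, h1]; ring
    have hABpos : 0 < (A 0 - B 0)^2 + (A 1 - B 1)^2 := by
      rcases not_and_or.mp hb with h | h
      · have hx : A 0 - B 0 ≠ 0 := fun hh => h (by linarith)
        have h2 := lt_of_le_of_ne (sq_nonneg (A 0 - B 0)) (Ne.symm (pow_ne_zero 2 hx))
        have h3 := sq_nonneg (A 1 - B 1)
        linarith
      · have hx : A 1 - B 1 ≠ 0 := fun hh => h (by linarith)
        have h2 := lt_of_le_of_ne (sq_nonneg (A 1 - B 1)) (Ne.symm (pow_ne_zero 2 hx))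
        have h3 := sq_nonneg (A 0 - B 0)
        linarith
    rw [hσdef]
    have h4 := sq_nonneg (B 0 - C 0)
    have h5 := sq_nonneg (B 1 - C 1)
    have h6 := sq_nonneg (C 0 - A 0)
    have h7 := sq_nonneg (C 1 - A 1)
    linarith
  have hσ : σ ≠ 0 := ne_of_gt hσpos
  obtain ⟨K0, hK0σ⟩ : ∃ k : ℝ, k * σ = ((B 0 - C 0)^2 + (B 1 - C 1)^2) * A 0
      + ((C 0 - A 0)^2 + (C 1 - A 1)^2) * B 0 + ((A 0 - B 0)^2 + (A 1 - B 1)^2) * C 0 :=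
    ⟨(((B 0 - C 0)^2 + (B 1 - C 1)^2) * A 0
      + ((C 0 - A 0)^2 + (C 1 - A 1)^2) * B 0 + ((A 0 - B 0)^2 + (A 1 - B 1)^2) * C 0)/σ,
      by field_simp⟩
  obtain ⟨K1, hK1σ⟩ : ∃ k : ℝ, k * σ = ((B 0 - C 0)^2 + (B 1 - C 1)^2) * A 1
      + ((C 0 - A 0)^2 + (C 1 - A 1)^2) * B 1 + ((A 0 - B 0)^2 + (A 1 - B 1)^2) * C 1 :=
    ⟨(((B 0 - C 0)^2 + (B 1 - C 1)^2) * A 1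
      + ((C 0 - A 0)^2 + (C 1 - A 1)^2) * B 1 + ((A 0 - B 0)^2 + (A 1 - B 1)^2) * C 1)/σ,
      by field_simp⟩
  -- Miquel–Steiner point coordinates
  obtain ⟨huA1, huA2⟩ := ms_vertex hDA hωAB hωAC hIA
  obtain ⟨huB1, huB2⟩ := ms_vertex hDB hωBA hωBC hIB
  obtain ⟨huC1, huC2⟩ := ms_vertex hDC hωCA hωCB hIC
  -- circumcenter relations
  have hOAC : dist O A = dist O C := hOA.trans hOB
  have eAB := ms_dist_sq_eq hOA
  have eBC := ms_dist_sq_eq hOB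
  have eAC := ms_dist_sq_eq hOAC
  have cAB := ms_circ (A 0) (A 1) (B 0) (B 1) (O 0) (O 1) eAB
  have cAC := ms_circ (A 0) (A 1) (C 0) (C 1) (O 0) (O 1) eAC
  have cBA := ms_circ (B 0) (B 1) (A 0) (A 1) (O 0) (O 1) eAB.symm
  have cBC := ms_circ (B 0) (B 1) (C 0) (C 1) (O 0) (O 1) eBC
  have cCA := ms_circ (C 0) (C 1) (A 0) (A 1) (O 0) (O 1) eAC.symm
  have cCB := ms_circ (C 0) (C 1) (B 0) (B 1) (O 0) (O 1) eBC.symm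
  -- per-vertex on-circle conditions
  have hbrA := ms_brocard (B 0 - A 0) (B 1 - A 1) (C 0 - A 0) (C 1 - A 1)
    (O 0 - A 0) (O 1 - A 1) (I_A 0 - A 0) (I_A 1 - A 1) (K0 - A 0) (K1 - A 1) σ
    (ms_mne _ _ _ _ hDA) hσ
    (by linear_combination hK0σ - A 0 * hσdef) (by linear_combination hK1σ - A 1 * hσdef)
    huA1 huA2 cAB cAC
  have hbrB := ms_brocard (A 0 - B 0) (A 1 - B 1) (C 0 - B 0) (C 1 - B 1)
    (O 0 - B 0) (O 1 - B 1) (I_B 0 - B 0) (I_B 1 - B 1) (K0 - B 0) (K1 - B 1) σ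
    (ms_mne _ _ _ _ hDB) hσ
    (by linear_combination hK0σ - B 0 * hσdef) (by linear_combination hK1σ - B 1 * hσdef)
    huB1 huB2 cBA cBC
  have hbrC := ms_brocard (A 0 - C 0) (A 1 - C 1) (B 0 - C 0) (B 1 - C 1)
    (O 0 - C 0) (O 1 - C 1) (I_C 0 - C 0) (I_C 1 - C 1) (K0 - C 0) (K1 - C 1) σ
    (ms_mne _ _ _ _ hDC) hσ
    (by linear_combination hK0σ - C 0 * hσdef) (by linear_combination hK1σ - C 1 * hσdef)
    huC1 huC2 cCA cCB
  have hA' : (I_A 0 - K0)*(I_A 0 - O 0) + (I_A 1 - K1)*(I_A 1 - O 1) = 0 := by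
    linear_combination hbrA
  have hB' : (I_B 0 - K0)*(I_B 0 - O 0) + (I_B 1 - K1)*(I_B 1 - O 1) = 0 := by
    linear_combination hbrB
  have hC' : (I_C 0 - K0)*(I_C 0 - O 0) + (I_C 1 - K1)*(I_C 1 - O 1) = 0 := by
    linear_combination hbrC
  -- the Brocard circle
  obtain ⟨E, hE0, hE1⟩ : ∃ E : EuclideanSpace ℝ (Fin 2),
      E 0 = (O 0 + K0)/2 ∧ E 1 = (O 1 + K1)/2 :=
    ⟨(WithLp.equiv 2 (Fin 2 → ℝ)).symm ![(O 0 + K0)/2, (O 1 + K1)/2], rfl, rfl⟩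
  refine ⟨E, dist O E, ?_⟩
  intro p hp
  simp only [Set.mem_insert_iff, Set.mem_singleton_iff] at hp
  rcases hp with rfl | rfl | rfl | rfl
  · rw [ms_dist_sqrt, ms_dist_sqrt]
    congr 1
    rw [hE0, hE1]
    exact ms_ondisk _ _ _ _ _ _ hA'
  · rw [ms_dist_sqrt, ms_dist_sqrt]
    congr 1
    rw [hE0, hE1]
    exact ms_ondisk _ _ _ _ _ _ hB'
  · rw [ms_dist_sqrt, ms_dist_sqrt]
    congr 1
    rw [hE0, hE1]
    exact ms_ondisk _ _ _ _ _ _ hC'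
  · rfl
end

section
/- Let ABC be a triangle such that B and C are not antipodal on the circumcircle of ABC, let M_t be the intersection point of the tangent lines to the circumcircle at B and at C, and let I_A be the main Miquel–Steiner centre of ABC from A. Then I_A lies on the line through A and M_t; that is, the Miquel–Steiner axis A I_A is the symmedian of ABC from A. -/
open EuclideanGeometry

lemma coords_eq {x y : EuclideanSpace ℝ (Fin 2)} (h0 : x 0 = y 0) (h1 : x 1 = y 1) :
    x = y := by
  ext i
  fin_cases i <;> assumption

lemma smul_vadd_coord (t : ℝ) (u w : EuclideanSpace ℝ (Fin 2)) (i : Fin 2) :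
    (t • (u - w) +ᵥ w) i = t * (u i - w i) + w i := by
  simp [vadd_eq_add]

lemma smul_vadd_coord' (t : ℝ) (u w : EuclideanSpace ℝ (Fin 2)) (i : Fin 2) :
    (t • (u -ᵥ w) +ᵥ w) i = t * (u i - w i) + w i := by
  simp [vadd_eq_add, vsub_eq_sub]

lemma inner2 (x y : EuclideanSpace ℝ (Fin 2)) :
    (inner ℝ x y : ℝ) = x 0 * y 0 + x 1 * y 1 := by
  simp [PiLp.inner_apply, Fin.sum_univ_two, RCLike.inner_apply, mul_comm]

lemma inner_sub_coords (x y z w : EuclideanSpace ℝ (Fin 2)) :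
    (inner ℝ (x - y) (z - w) : ℝ)
      = (x 0 - y 0) * (z 0 - w 0) + (x 1 - y 1) * (z 1 - w 1) := by
  rw [inner2]; simp

lemma dist2 (x y : EuclideanSpace ℝ (Fin 2)) :
    dist x y ^ 2 = (x 0 - y 0) ^ 2 + (x 1 - y 1) ^ 2 := by
  rw [EuclideanSpace.dist_eq, Real.sq_sqrt (by positivity)]
  simp [Fin.sum_univ_two, Real.dist_eq, sq_abs]

lemma ne_coords {x y : EuclideanSpace ℝ (Fin 2)} (h : x ≠ y) :
    (x 0 - y 0) ^ 2 + (x 1 - y 1) ^ 2 ≠ 0 := by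
  intro h0
  apply h
  exact coords_eq (by nlinarith [sq_nonneg (x 0 - y 0), sq_nonneg (x 1 - y 1)])
    (by nlinarith [sq_nonneg (x 0 - y 0), sq_nonneg (x 1 - y 1)])

lemma sphere_coords {s : Sphere (EuclideanSpace ℝ (Fin 2))}
    {x y : EuclideanSpace ℝ (Fin 2)} (hx : x ∈ s) (hy : y ∈ s) :
    (x 0 - s.center 0) ^ 2 + (x 1 - s.center 1) ^ 2
      = (y 0 - s.center 0) ^ 2 + (y 1 - s.center 1) ^ 2 := by
  rw [← dist2, ← dist2, EuclideanGeometry.mem_sphere.mp hx, EuclideanGeometry.mem_sphere.mp hy]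

lemma tangent_perp_s11 {s : Sphere (EuclideanSpace ℝ (Fin 2))}
    {p q P : EuclideanSpace ℝ (Fin 2)} (hpq : p ≠ q)
    (hT : IsTangentAt s line[ℝ, p, q] P) :
    (inner ℝ (P - s.center) (q - p) : ℝ) = 0 := by
  obtain ⟨hPs, hPL, huniq⟩ := hT
  have hv : q - p ≠ 0 := sub_ne_zero.mpr (Ne.symm hpq)
  have hvnorm : ‖q - p‖ ≠ 0 := norm_ne_zero_iff.mpr hv
  set v : EuclideanSpace ℝ (Fin 2) := q - p with hvdef
  set t : ℝ := -(2 * inner ℝ (P - s.center) v) / (‖v‖ ^ 2) with ht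
  have hxL : t • v +ᵥ P ∈ line[ℝ, p, q] := by
    refine AffineSubspace.vadd_mem_of_mem_direction (Submodule.smul_mem _ _ ?_) hPL
    have := AffineSubspace.vsub_mem_direction (right_mem_affineSpan_pair ℝ p q)
      (left_mem_affineSpan_pair ℝ p q)
    simpa [hvdef] using this
  have hxs : t • v +ᵥ P ∈ s := by
    rw [EuclideanGeometry.mem_sphere] at hPs ⊢
    have h1 : (t • v +ᵥ P) - s.center = t • v + (P - s.center) := by
      simp only [vadd_eq_add]; abel
    have h2 : t * ‖v‖ ^ 2 = -(2 * inner ℝ (P - s.center) v) := by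
      rw [ht]; field_simp
    have hnormeq : ‖(t • v +ᵥ P) - s.center‖ ^ 2 = ‖P - s.center‖ ^ 2 := by
      rw [h1, norm_add_sq_real, real_inner_smul_left, norm_smul, mul_pow, Real.norm_eq_abs,
        sq_abs, real_inner_comm (P - s.center) v]
      linear_combination t * h2
    have hne : ‖(t • v +ᵥ P) - s.center‖ = ‖P - s.center‖ := by
      nlinarith [norm_nonneg ((t • v +ᵥ P) - s.center), norm_nonneg (P - s.center)]
    rw [dist_eq_norm, hne, ← dist_eq_norm]
    exact hPs
  have hxP := huniq _ hxs hxL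
  have htv : t • v = 0 := by
    have := congrArg (fun z => z - P) hxP
    simpa [vadd_eq_add] using this
  rcases smul_eq_zero.mp htv with h0 | h0
  · rw [ht] at h0
    rcases div_eq_zero_iff.mp h0 with h1 | h1
    · linarith [h1]
    · exact absurd h1 (by positivity)
  · exact absurd h0 hv

lemma tangent_line_coords {s : Sphere (EuclideanSpace ℝ (Fin 2))}
    {p q P M : EuclideanSpace ℝ (Fin 2)} (hpq : p ≠ q)
    (hT : IsTangentAt s line[ℝ, p, q] P) (hM : M ∈ line[ℝ, p, q]) :
    (M 0 - P 0) * (P 0 - s.center 0) + (M 1 - P 1) * (P 1 - s.center 1) = 0 := by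
  have hperp := tangent_perp_s11 hpq hT
  rw [inner_sub_coords] at hperp
  have hdir : M -ᵥ P ∈ (line[ℝ, p, q]).direction :=
    AffineSubspace.vsub_mem_direction hM hT.2.1
  rw [direction_affineSpan] at hdir
  obtain ⟨r, hr⟩ := mem_vectorSpan_pair.mp hdir
  have h0 : M 0 - P 0 = r * (p 0 - q 0) := by
    have := congrArg (fun z : EuclideanSpace ℝ (Fin 2) => z 0) hr
    simpa [vsub_eq_sub] using this.symm
  have h1 : M 1 - P 1 = r * (p 1 - q 1) := by
    have := congrArg (fun z : EuclideanSpace ℝ (Fin 2) => z 1) hr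
    simpa [vsub_eq_sub] using this.symm
  linear_combination (P 0 - s.center 0) * h0 + (P 1 - s.center 1) * h1 - r * hperp

/-- **The Miquel–Steiner axis is the symmedian.** If `B` and `C` are not antipodal on
the circumcircle `S` of `ABC`, `M_t` is the intersection point of the tangent lines
to `S` at `B` and at `C`, and `I_A` is the main Miquel–Steiner centre of `ABC` from
`A`, then `I_A` lies on the line through `A` and `M_t`. -/
theorem miquel_axis_is_symmedian
    (A B C M_t I_A : EuclideanSpace ℝ (Fin 2))
    (hABC : AffineIndependent ℝ ![A, B, C])
    (S : Sphere (EuclideanSpace ℝ (Fin 2)))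
    (hS : A ∈ S ∧ B ∈ S ∧ C ∈ S)
    (hant : midpoint ℝ B C ≠ S.center)
    (lB lC : AffineSubspace ℝ (EuclideanSpace ℝ (Fin 2)))
    (hlB : (∃ p q : EuclideanSpace ℝ (Fin 2), p ≠ q ∧ lB = line[ℝ, p, q]) ∧
      IsTangentAt S lB B)
    (hlC : (∃ p q : EuclideanSpace ℝ (Fin 2), p ≠ q ∧ lC = line[ℝ, p, q]) ∧
      IsTangentAt S lC C)
    (hMt : M_t ∈ lB ∧ M_t ∈ lC)
    (ωAB ωAC : Sphere (EuclideanSpace ℝ (Fin 2)))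
    (hωAB : C ∈ ωAB ∧ IsTangentAt ωAB (line[ℝ, A, B]) A)
    (hωAC : B ∈ ωAC ∧ IsTangentAt ωAC (line[ℝ, A, C]) A)
    (hIA : I_A ≠ A ∧ I_A ∈ ωAB ∧ I_A ∈ ωAC) :
    I_A ∈ line[ℝ, A, M_t] := by
  obtain ⟨hSA, hSB, hSC⟩ := hS
  obtain ⟨⟨p, q, hpq, rfl⟩, hTB⟩ := hlB
  obtain ⟨⟨p', q', hpq', rfl⟩, hTC⟩ := hlC
  obtain ⟨hCw, hTAB⟩ := hωAB
  obtain ⟨hBw, hTAC⟩ := hωAC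
  obtain ⟨hIAne, hIw1, hIw2⟩ := hIA
  have hAB : A ≠ B := by
    intro h
    have h01 : (0 : Fin 3) = 1 := hABC.injective (by simpa using h)
    exact absurd h01 (by decide)
  have hAC : A ≠ C := by
    intro h
    have h01 : (0 : Fin 3) = 2 := hABC.injective (by simpa using h)
    exact absurd h01 (by decide)
  have hBC : B ≠ C := by
    intro h
    have h01 : (1 : Fin 3) = 2 := hABC.injective (by simpa using h)
    exact absurd h01 (by decide)
  -- cross product of (B-A),(C-A) nonzero
  have hk : ((B 0) - (A 0)) * ((C 1) - (A 1)) - ((B 1) - (A 1)) * ((C 0) - (A 0)) ≠ 0 := by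
    intro hcr
    apply affineIndependent_iff_not_collinear_set.mp hABC
    rw [collinear_iff_of_mem (Set.mem_insert A {B, C})]
    refine ⟨B - A, fun z hz => ?_⟩
    simp only [Set.mem_insert_iff, Set.mem_singleton_iff] at hz
    have hd : ((B 0) - (A 0)) ≠ 0 ∨ ((B 1) - (A 1)) ≠ 0 := by
      by_contra hcon
      push_neg at hcon
      exact hAB (coords_eq (by linarith [hcon.1]) (by linarith [hcon.2]))
    rcases hz with h | h | h
    · exact ⟨0, by rw [h]; simp⟩
    · refine ⟨1, ?_⟩
      rw [h]
      apply coords_eq <;> rw [smul_vadd_coord] <;> ring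
    · rcases hd with hd | hd
      · refine ⟨(((C 0) - (A 0))) / (((B 0) - (A 0))), ?_⟩
        rw [h]
        apply coords_eq <;> rw [smul_vadd_coord] <;> field_simp
        · ring
        · linear_combination hcr
      · refine ⟨(((C 1) - (A 1))) / (((B 1) - (A 1))), ?_⟩
        rw [h]
        apply coords_eq <;> rw [smul_vadd_coord] <;> field_simp
        · linear_combination -hcr
        · ring
  have hnu : ((B 0) - (A 0)) * ((B 0) - (A 0)) + ((B 1) - (A 1)) * ((B 1) - (A 1)) ≠ 0 :=
    fun h => ne_coords (Ne.symm hAB) (by linear_combination h)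
  have hnv : ((C 0) - (A 0)) * ((C 0) - (A 0)) + ((C 1) - (A 1)) * ((C 1) - (A 1)) ≠ 0 :=
    fun h => ne_coords (Ne.symm hAC) (by linear_combination h)
  have hL : ((I_A 0) - (A 0)) ^ 2 + ((I_A 1) - (A 1)) ^ 2 ≠ 0 := ne_coords (fun h => hIAne h)
  have hbc : ((B 0) - (C 0)) ^ 2 + ((B 1) - (C 1)) ^ 2 ≠ 0 := ne_coords hBC
  -- M_t ≠ A
  have hMA : M_t ≠ A := by
    intro h
    exact hAB (hTB.2.2 A hSA (h ▸ hMt.1))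
  -- tangency perpendicularity for the two Miquel circles
  have he1 : ((A 0) - (ωAB.center 0)) * ((B 0) - (A 0)) + ((A 1) - (ωAB.center 1)) * ((B 1) - (A 1)) = 0 := by
    have := tangent_perp_s11 hAB hTAB
    rwa [inner_sub_coords] at this
  have hg1 : ((A 0) - (ωAC.center 0)) * ((C 0) - (A 0)) + ((A 1) - (ωAC.center 1)) * ((C 1) - (A 1)) = 0 := by
    have := tangent_perp_s11 hAC hTAC
    rwa [inner_sub_coords] at this
  -- sphere membership equalities
  have he2 := sphere_coords hTAB.1 hCw
  have he3 := sphere_coords hIw1 hTAB.1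
  have hg2 := sphere_coords hTAC.1 hBw
  have hg3 := sphere_coords hIw2 hTAC.1
  have hf1 := sphere_coords hSA hSB
  have hf2 := sphere_coords hSA hSC
  -- tangent line perpendicularity at B and C
  have hf3 : ((M_t 0) - (B 0)) * ((B 0) - (S.center 0)) + ((M_t 1) - (B 1)) * ((B 1) - (S.center 1)) = 0 :=
    tangent_line_coords hpq hTB hMt.1
  have hf4 : ((M_t 0) - (C 0)) * ((C 0) - (S.center 0)) + ((M_t 1) - (C 1)) * ((C 1) - (S.center 1)) = 0 :=
    tangent_line_coords hpq' hTC hMt.2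
  -- Step 1: the Miquel point direction equations
  have star1 : (((C 0) - (A 0)) * ((C 0) - (A 0)) + ((C 1) - (A 1)) * ((C 1) - (A 1))) * (((B 0) - (A 0)) * ((I_A 1) - (A 1)) - ((B 1) - (A 1)) * ((I_A 0) - (A 0))) = (((I_A 0) - (A 0)) * ((I_A 0) - (A 0)) + ((I_A 1) - (A 1)) * ((I_A 1) - (A 1))) * (((B 0) - (A 0)) * ((C 1) - (A 1)) - ((B 1) - (A 1)) * ((C 0) - (A 0))) := by
    linear_combination (-2 * (((C 0) - (A 0)) * ((I_A 1) - (A 1)) - ((C 1) - (A 1)) * ((I_A 0) - (A 0)))) * he1 - (((B 0) - (A 0)) * ((I_A 1) - (A 1)) - ((B 1) - (A 1)) * ((I_A 0) - (A 0))) * he2 - (((B 0) - (A 0)) * ((C 1) - (A 1)) - ((B 1) - (A 1)) * ((C 0) - (A 0))) * he3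
  have star2 : (((B 0) - (A 0)) * ((B 0) - (A 0)) + ((B 1) - (A 1)) * ((B 1) - (A 1))) * (((C 0) - (A 0)) * ((I_A 1) - (A 1)) - ((C 1) - (A 1)) * ((I_A 0) - (A 0))) = -((((I_A 0) - (A 0)) * ((I_A 0) - (A 0)) + ((I_A 1) - (A 1)) * ((I_A 1) - (A 1))) * (((B 0) - (A 0)) * ((C 1) - (A 1)) - ((B 1) - (A 1)) * ((C 0) - (A 0)))) := by
    linear_combination (-2 * (((B 0) - (A 0)) * ((I_A 1) - (A 1)) - ((B 1) - (A 1)) * ((I_A 0) - (A 0)))) * hg1 - (((C 0) - (A 0)) * ((I_A 1) - (A 1)) - ((C 1) - (A 1)) * ((I_A 0) - (A 0))) * hg2 - (((C 0) - (A 0)) * ((B 1) - (A 1)) - ((C 1) - (A 1)) * ((B 0) - (A 0))) * hg3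
  -- Step 2: the symmedian property of M_t
  have key1 : (2 * (((B 0) - (A 0)) * ((C 0) - (A 0)) + ((B 1) - (A 1)) * ((C 1) - (A 1))) - (((B 0) - (A 0)) * ((B 0) - (A 0)) + ((B 1) - (A 1)) * ((B 1) - (A 1))) - (((C 0) - (A 0)) * ((C 0) - (A 0)) + ((C 1) - (A 1)) * ((C 1) - (A 1)))) * ((((C 0) - (A 0)) * ((C 0) - (A 0)) + ((C 1) - (A 1)) * ((C 1) - (A 1))) * (((M_t 0) - (A 0)) * ((B 1) - (A 1)) - ((M_t 1) - (A 1)) * ((B 0) - (A 0))) + (((B 0) - (A 0)) * ((B 0) - (A 0)) + ((B 1) - (A 1)) * ((B 1) - (A 1))) * (((M_t 0) - (A 0)) * ((C 1) - (A 1)) - ((M_t 1) - (A 1)) * ((C 0) - (A 0)))) = 0 := by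
    linear_combination (-2 * (((B 0) - (A 0)) * ((C 1) - (A 1)) - ((B 1) - (A 1)) * ((C 0) - (A 0))) * (((C 0) - (A 0)) * ((C 0) - (A 0)) + ((C 1) - (A 1)) * ((C 1) - (A 1)))) * hf3 + (2 * (((B 0) - (A 0)) * ((C 1) - (A 1)) - ((B 1) - (A 1)) * ((C 0) - (A 0))) * (((B 0) - (A 0)) * ((B 0) - (A 0)) + ((B 1) - (A 1)) * ((B 1) - (A 1)))) * hf4 +
      ((((B 0) - (A 0)) * ((C 1) - (A 1)) - ((B 1) - (A 1)) * ((C 0) - (A 0))) * (((C 0) - (A 0)) * ((C 0) - (A 0)) + ((C 1) - (A 1)) * ((C 1) - (A 1))) + ((((B 0) - (A 0)) * ((B 0) - (A 0)) + ((B 1) - (A 1)) * ((B 1) - (A 1))) - (((C 0) - (A 0)) * ((C 0) - (A 0)) + ((C 1) - (A 1)) * ((C 1) - (A 1)))) * (((M_t 0) - (A 0)) * ((C 1) - (A 1)) - ((M_t 1) - (A 1)) * ((C 0) - (A 0)))) * hf1 + (-((((B 0) - (A 0)) * ((C 1) - (A 1)) - ((B 1) - (A 1)) * ((C 0) - (A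 0))) * (((B 0) - (A 0)) * ((B 0) - (A 0)) + ((B 1) - (A 1)) * ((B 1) - (A 1)))) - ((((B 0) - (A 0)) * ((B 0) - (A 0)) + ((B 1) - (A 1)) * ((B 1) - (A 1))) - (((C 0) - (A 0)) * ((C 0) - (A 0)) + ((C 1) - (A 1)) * ((C 1) - (A 1)))) * (((M_t 0) - (A 0)) * ((B 1) - (A 1)) - ((M_t 1) - (A 1)) * ((B 0) - (A 0)))) * hf2
  have hfac : (2 * (((B 0) - (A 0)) * ((C 0) - (A 0)) + ((B 1) - (A 1)) * ((C 1) - (A 1))) - (((B 0) - (A 0)) * ((B 0) - (A 0)) + ((B 1) - (A 1)) * ((B 1) - (A 1))) - (((C 0) - (A 0)) * ((C 0) - (A 0)) + ((C 1) - (A 1)) * ((C 1) - (A 1)))) ≠ 0 := by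
    intro h
    apply hbc
    linarith [h]
  have G0 : (((C 0) - (A 0)) * ((C 0) - (A 0)) + ((C 1) - (A 1)) * ((C 1) - (A 1))) * (((M_t 0) - (A 0)) * ((B 1) - (A 1)) - ((M_t 1) - (A 1)) * ((B 0) - (A 0))) + (((B 0) - (A 0)) * ((B 0) - (A 0)) + ((B 1) - (A 1)) * ((B 1) - (A 1))) * (((M_t 0) - (A 0)) * ((C 1) - (A 1)) - ((M_t 1) - (A 1)) * ((C 0) - (A 0))) = 0 := (mul_eq_zero.mp key1).resolve_left hfac
  -- Step 3: collinearity
  have key2 : (((B 0) - (A 0)) * ((C 1) - (A 1)) - ((B 1) - (A 1)) * ((C 0) - (A 0))) * (((((B 0) - (A 0)) * ((B 0) - (A 0)) + ((B 1) - (A 1)) * ((B 1) - (A 1))) * (((C 0) - (A 0)) * ((C 0) - (A 0)) + ((C 1) - (A 1)) * ((C 1) - (A 1)))) * (((M_t 0) - (A 0)) * ((I_A 1) - (A 1)) - ((M_t 1) - (A 1)) * ((I_A 0) - (A 0)))) = 0 := by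
    linear_combination (((B 0) - (A 0)) * ((B 0) - (A 0)) + ((B 1) - (A 1)) * ((B 1) - (A 1))) * (((M_t 0) - (A 0)) * ((C 1) - (A 1)) - ((M_t 1) - (A 1)) * ((C 0) - (A 0))) * star1 - (((C 0) - (A 0)) * ((C 0) - (A 0)) + ((C 1) - (A 1)) * ((C 1) - (A 1))) * (((M_t 0) - (A 0)) * ((B 1) - (A 1)) - ((M_t 1) - (A 1)) * ((B 0) - (A 0))) * star2 +
      ((((I_A 0) - (A 0)) * ((I_A 0) - (A 0)) + ((I_A 1) - (A 1)) * ((I_A 1) - (A 1))) * (((B 0) - (A 0)) * ((C 1) - (A 1)) - ((B 1) - (A 1)) * ((C 0) - (A 0)))) * G0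
  have hcross : (((M_t 0) - (A 0)) * ((I_A 1) - (A 1)) - ((M_t 1) - (A 1)) * ((I_A 0) - (A 0))) = 0 := by
    rcases mul_eq_zero.mp key2 with h | h
    · exact absurd h hk
    rcases mul_eq_zero.mp h with h | h
    · rcases mul_eq_zero.mp h with h | h
      · exact absurd h hnu
      · exact absurd h hnv
    · exact h
  -- produce the parameter
  have hd : ((M_t 0) - (A 0)) ≠ 0 ∨ ((M_t 1) - (A 1)) ≠ 0 := by
    by_contra hcon
    push_neg at hcon
    exact hMA (coords_eq (by linarith [hcon.1]) (by linarith [hcon.2]))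
  have : ∃ r : ℝ, I_A = r • (M_t -ᵥ A) +ᵥ A := by
    rcases hd with hd | hd
    · refine ⟨(((I_A 0) - (A 0))) / (((M_t 0) - (A 0))), ?_⟩
      apply coords_eq <;> rw [smul_vadd_coord'] <;> field_simp
      · ring
      · linear_combination hcross
    · refine ⟨(((I_A 1) - (A 1))) / (((M_t 1) - (A 1))), ?_⟩
      apply coords_eq <;> rw [smul_vadd_coord'] <;> field_simp
      · linear_combination -hcross
      · ring
  obtain ⟨r, hr⟩ := this
  rw [hr]
  exact smul_vsub_vadd_mem_affineSpan_pair r A M_t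
end
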